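/- arXiv:2403.18084 — 6 statements merged into one kernel-verified Lean document; each statement's English description precedes it below -/
import Mathlib

section
/- Let R_S > 0, L > 0, W > 0. Suppose φ : ℝ² → ℝ is twice continuously differentiable, L-periodic in x (φ(x+L,y) = φ(x,y)), satisfies ∂ₓₓφ + ∂_yyφ = R_S⁻² φ on the strip ℝ × [0,W], satisfies ∂ₓφ(x,0) = 0 = ∂ₓφ(x,W) for all x, and has vanishing wall circulations ∫₀ᴸ ∂_yφ(x,0) dx = 0 and ∫₀ᴸ ∂_yφ(x,W) dx = 0. Then φ = 0 everywhere on ℝ × [0,W]. (Consequently the elliptic inversion ∇²ψ̄ − R_S⁻²ψ̄ = given data, with the channel boundary conditions and prescribed wall circulations, has at most one solution.) -/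
open MeasureTheory intervalIntegral Set

namespace EllipticAux

variable (φ : ℝ → ℝ → ℝ)

noncomputable def fx (x y : ℝ) : ℝ := fderiv ℝ (fun z : ℝ × ℝ => φ z.1 z.2) (x, y) (1, 0)
noncomputable def fy (x y : ℝ) : ℝ := fderiv ℝ (fun z : ℝ × ℝ => φ z.1 z.2) (x, y) (0, 1)
noncomputable def fxx (x y : ℝ) : ℝ :=
  fderiv ℝ (fun z : ℝ × ℝ => fderiv ℝ (fun w : ℝ × ℝ => φ w.1 w.2) z (1, 0)) (x, y) (1, 0)
noncomputable def fyy (x y : ℝ) : ℝ :=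
  fderiv ℝ (fun z : ℝ × ℝ => fderiv ℝ (fun w : ℝ × ℝ => φ w.1 w.2) z (0, 1)) (x, y) (0, 1)

variable {φ} (h : ContDiff ℝ 2 (fun z : ℝ × ℝ => φ z.1 z.2))
include h

theorem hasDerivAt_x (x y : ℝ) : HasDerivAt (fun x' => φ x' y) (fx φ x y) x := by
  have hd := ((h.differentiable (by norm_num)) (x, y)).hasFDerivAt
  have line : HasDerivAt (fun t : ℝ => ((t, y) : ℝ × ℝ)) (1, 0) x :=
    (hasDerivAt_id x).prodMk (hasDerivAt_const x y)
  exact hd.comp_hasDerivAt x line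

theorem hasDerivAt_y (x y : ℝ) : HasDerivAt (fun y' => φ x y') (fy φ x y) y := by
  have hd := ((h.differentiable (by norm_num)) (x, y)).hasFDerivAt
  have line : HasDerivAt (fun t : ℝ => ((x, t) : ℝ × ℝ)) (0, 1) y :=
    (hasDerivAt_const y x).prodMk (hasDerivAt_id y)
  exact hd.comp_hasDerivAt y line

theorem contDiff_gx : ContDiff ℝ 1 (fun z : ℝ × ℝ => fderiv ℝ (fun w : ℝ × ℝ => φ w.1 w.2) z (1, 0)) :=
  (ContinuousLinearMap.apply ℝ ℝ ((1, 0) : ℝ × ℝ)).contDiff.comp (h.fderiv_right (le_refl 2))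

theorem contDiff_gy : ContDiff ℝ 1 (fun z : ℝ × ℝ => fderiv ℝ (fun w : ℝ × ℝ => φ w.1 w.2) z (0, 1)) :=
  (ContinuousLinearMap.apply ℝ ℝ ((0, 1) : ℝ × ℝ)).contDiff.comp (h.fderiv_right (le_refl 2))

theorem hasDerivAt_fx (x y : ℝ) : HasDerivAt (fun x' => fx φ x' y) (fxx φ x y) x := by
  have hd := (((contDiff_gx h).differentiable one_ne_zero) (x, y)).hasFDerivAt
  have line : HasDerivAt (fun t : ℝ => ((t, y) : ℝ × ℝ)) (1, 0) x :=
    (hasDerivAt_id x).prodMk (hasDerivAt_const x y)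
  exact hd.comp_hasDerivAt x line

theorem hasDerivAt_fy (x y : ℝ) : HasDerivAt (fun y' => fy φ x y') (fyy φ x y) y := by
  have hd := (((contDiff_gy h).differentiable one_ne_zero) (x, y)).hasFDerivAt
  have line : HasDerivAt (fun t : ℝ => ((x, t) : ℝ × ℝ)) (0, 1) y :=
    (hasDerivAt_const y x).prodMk (hasDerivAt_id y)
  exact hd.comp_hasDerivAt y line

theorem cont_fx : Continuous (fun z : ℝ × ℝ => fx φ z.1 z.2) := by
  simpa [fx] using (contDiff_gx h).continuous

theorem cont_fy : Continuous (fun z : ℝ × ℝ => fy φ z.1 z.2) := by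
  simpa [fy] using (contDiff_gy h).continuous

theorem cont_fxx : Continuous (fun z : ℝ × ℝ => fxx φ z.1 z.2) := by
  have : Continuous (fderiv ℝ (fun z : ℝ × ℝ => fderiv ℝ (fun w : ℝ × ℝ => φ w.1 w.2) z (1, 0))) :=
    (contDiff_gx h).continuous_fderiv one_ne_zero
  have h2 := this.clm_apply (continuous_const (y := ((1,0) : ℝ × ℝ)))
  simpa [fxx] using h2

theorem cont_fyy : Continuous (fun z : ℝ × ℝ => fyy φ z.1 z.2) := by
  have : Continuous (fderiv ℝ (fun z : ℝ × ℝ => fderiv ℝ (fun w : ℝ × ℝ => φ w.1 w.2) z (0, 1))) :=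
    (contDiff_gy h).continuous_fderiv one_ne_zero
  have h2 := this.clm_apply (continuous_const (y := ((0,1) : ℝ × ℝ)))
  simpa [fyy] using h2


theorem cont_phi : Continuous (fun z : ℝ × ℝ => φ z.1 z.2) := h.continuous

theorem cont_x_phi (y : ℝ) : Continuous fun x => φ x y :=
  h.continuous.comp (continuous_id.prodMk continuous_const)

theorem cont_x_fx (y : ℝ) : Continuous fun x => fx φ x y :=
  (cont_fx h).comp (continuous_id.prodMk continuous_const)

theorem cont_x_fy (y : ℝ) : Continuous fun x => fy φ x y :=
  (cont_fy h).comp (continuous_id.prodMk continuous_const)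

theorem cont_x_fxx (y : ℝ) : Continuous fun x => fxx φ x y :=
  (cont_fxx h).comp (continuous_id.prodMk continuous_const)

theorem cont_x_fyy (y : ℝ) : Continuous fun x => fyy φ x y :=
  (cont_fyy h).comp (continuous_id.prodMk continuous_const)

variable {L : ℝ} (hper : ∀ x y : ℝ, φ (x + L) y = φ x y)
include hper

theorem fx_per (x y : ℝ) : fx φ (x + L) y = fx φ x y := by
  have h1 : HasDerivAt (fun x' => φ (x' + L) y) (fx φ (x + L) y * 1) x :=
    by have := (hasDerivAt_x h (x + L) y).comp x ((hasDerivAt_id' x).add_const L); exact this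
  have h2 : (fun x' => φ (x' + L) y) = fun x' => φ x' y := funext fun x' => hper x' y
  rw [h2] at h1
  have := h1.unique (hasDerivAt_x h x y)
  linarith [this]

theorem fy_per (x y : ℝ) : fy φ (x + L) y = fy φ x y := by
  have h1 : HasDerivAt (fun y' => φ (x + L) y') (fy φ (x + L) y) y := hasDerivAt_y h (x + L) y
  have h2 : (fun y' => φ (x + L) y') = fun y' => φ x y' := funext fun y' => hper x y'
  rw [h2] at h1
  exact h1.unique (hasDerivAt_y h x y)

/-- Integration by parts in `x` over one period. -/
theorem ibp_x (y : ℝ) :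
    (∫ x in (0:ℝ)..L, (fx φ x y * fx φ x y + φ x y * fxx φ x y)) = 0 := by
  have HD : ∀ x ∈ Set.uIcc (0:ℝ) L, HasDerivAt (fun x' => φ x' y * fx φ x' y)
      (fx φ x y * fx φ x y + φ x y * fxx φ x y) x :=
    fun x _ => (hasDerivAt_x h x y).mul (hasDerivAt_fx h x y)
  have hcont : Continuous fun x => fx φ x y * fx φ x y + φ x y * fxx φ x y :=
    ((cont_x_fx h y).mul (cont_x_fx h y)).add ((cont_x_phi h y).mul (cont_x_fxx h y))
  have := intervalIntegral.integral_eq_sub_of_hasDerivAt HD (hcont.intervalIntegrable 0 L)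
  rw [this]
  have e1 : φ L y = φ 0 y := by simpa using hper 0 y
  have e2 : fx φ L y = fx φ 0 y := by simpa using fx_per h hper 0 y
  rw [e1, e2]; ring

omit hper

/-- Differentiation under the integral sign for `G y = ∫ φ * φ_y`. -/
theorem hasDerivAt_G (hL : 0 < L) (y₀ : ℝ) :
    HasDerivAt (fun y => ∫ x in (0:ℝ)..L, φ x y * fy φ x y)
      (∫ x in (0:ℝ)..L, (fy φ x y₀ * fy φ x y₀ + φ x y₀ * fyy φ x y₀)) y₀ := by
  have hFcont : ∀ y : ℝ, Continuous fun t => φ t y * fy φ t y := fun y =>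
    (cont_x_phi h y).mul (cont_x_fy h y)
  have hF'cont : Continuous fun z : ℝ × ℝ =>
      fy φ z.1 z.2 * fy φ z.1 z.2 + φ z.1 z.2 * fyy φ z.1 z.2 :=
    ((cont_fy h).mul (cont_fy h)).add ((cont_phi h).mul (cont_fyy h))
  obtain ⟨C, hC⟩ : ∃ C, ∀ z ∈ (Set.Icc (0:ℝ) L ×ˢ Set.Icc (y₀ - 1) (y₀ + 1)),
      ‖fy φ z.1 z.2 * fy φ z.1 z.2 + φ z.1 z.2 * fyy φ z.1 z.2‖ ≤ C :=
    (isCompact_Icc.prod isCompact_Icc).exists_bound_of_continuousOn hF'cont.continuousOn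
  have key := intervalIntegral.hasDerivAt_integral_of_dominated_loc_of_deriv_le
    (F := fun y t => φ t y * fy φ t y)
    (F' := fun y t => fy φ t y * fy φ t y + φ t y * fyy φ t y)
    (x₀ := y₀) (a := 0) (b := L) (μ := volume) (bound := fun _ => C)
    (s := Metric.ball y₀ 1) (Metric.ball_mem_nhds y₀ one_pos)
    (Filter.Eventually.of_forall fun y => (hFcont y).aestronglyMeasurable)
    ((hFcont y₀).intervalIntegrable 0 L)
    (((cont_x_fy h y₀).mul (cont_x_fy h y₀)).add
      ((cont_x_phi h y₀).mul (cont_x_fyy h y₀))).aestronglyMeasurable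
    ?_ intervalIntegrable_const ?_
  · exact key.2
  · refine Filter.Eventually.of_forall fun t ht y hy => ?_
    have ht' : t ∈ Set.Icc (0:ℝ) L := by
      rw [Set.uIoc_of_le hL.le] at ht; exact Set.Ioc_subset_Icc_self ht
    have hy' : y ∈ Set.Icc (y₀ - 1) (y₀ + 1) := by
      rw [Real.ball_eq_Ioo] at hy; exact Set.Ioo_subset_Icc_self hy
    exact hC (t, y) ⟨ht', hy'⟩
  · exact Filter.Eventually.of_forall fun t _ y _ =>
      (hasDerivAt_y h t y).mul (hasDerivAt_fy h t y)

end EllipticAux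

/-- A continuous nonneg function with zero integral vanishes on the interval. -/
theorem zero_of_nonneg_of_integral_zero {g : ℝ → ℝ} {L : ℝ} (hL : 0 < L)
    (hg : Continuous g) (h0 : ∀ x, 0 ≤ g x)
    (hI : (∫ x in (0:ℝ)..L, g x) = 0) : ∀ x ∈ Set.Icc (0:ℝ) L, g x = 0 := by
  set Φ : ℝ → ℝ := fun u => ∫ t in (0:ℝ)..u, g t with hΦ
  have hΦ0 : ∀ u ∈ Set.Icc (0:ℝ) L, Φ u = 0 := by
    intro u hu
    have h1 : 0 ≤ Φ u := intervalIntegral.integral_nonneg hu.1 fun t _ => h0 t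
    have h2 : 0 ≤ ∫ t in u..L, g t := intervalIntegral.integral_nonneg hu.2 fun t _ => h0 t
    have h3 : Φ u + ∫ t in u..L, g t = ∫ t in (0:ℝ)..L, g t :=
      intervalIntegral.integral_add_adjacent_intervals (hg.intervalIntegrable _ _)
        (hg.intervalIntegrable _ _)
    rw [hI] at h3; linarith
  have hio : ∀ x ∈ Set.Ioo (0:ℝ) L, g x = 0 := by
    intro x hx
    have hev : Φ =ᶠ[nhds x] fun _ => (0:ℝ) :=
      Filter.eventuallyEq_of_mem (Icc_mem_nhds hx.1 hx.2) hΦ0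
    have hd : deriv Φ x = 0 := by rw [hev.deriv_eq]; simp
    rwa [hg.deriv_integral g 0 x] at hd
  have hcl : Set.EqOn g (fun _ => (0:ℝ)) (closure (Set.Ioo (0:ℝ) L)) :=
    Set.EqOn.closure (fun x hx => hio x hx) hg continuous_const
  rw [closure_Ioo hL.ne] at hcl
  exact fun x hx => hcl hx

open EllipticAux

/-- Uniqueness for the elliptic inversion in the zonal channel:
a `C²` function `φ`, `L`-periodic in `x`, satisfying `∇²φ = R_S⁻² φ` on the strip
`ℝ × [0,W]`, with `∂ₓφ = 0` on both walls and vanishing wall circulations,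
must vanish identically on the strip. -/
theorem elliptic_inversion_uniqueness
    (RS L W : ℝ) (hRS : 0 < RS) (hL : 0 < L) (hW : 0 < W)
    (φ : ℝ → ℝ → ℝ)
    (hsmooth : ContDiff ℝ 2 (fun z : ℝ × ℝ => φ z.1 z.2))
    (hper : ∀ x y : ℝ, φ (x + L) y = φ x y)
    (hpde : ∀ x : ℝ, ∀ y ∈ Set.Icc (0:ℝ) W,
      deriv (fun x' => deriv (fun x'' => φ x'' y) x') x
        + deriv (fun y' => deriv (fun y'' => φ x y'') y') y
        = (RS ^ 2)⁻¹ * φ x y)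
    (hwall0 : ∀ x : ℝ, deriv (fun x' => φ x' 0) x = 0)
    (hwallW : ∀ x : ℝ, deriv (fun x' => φ x' W) x = 0)
    (hcirc0 : (∫ x in (0:ℝ)..L, deriv (fun y' => φ x y') 0) = 0)
    (hcircW : (∫ x in (0:ℝ)..L, deriv (fun y' => φ x y') W) = 0) :
    ∀ x : ℝ, ∀ y ∈ Set.Icc (0:ℝ) W, φ x y = 0 := by
  have hpde' : ∀ x : ℝ, ∀ y ∈ Set.Icc (0:ℝ) W,
      fxx φ x y + fyy φ x y = (RS ^ 2)⁻¹ * φ x y := by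
    intro x y hy
    have e1 : (fun x' => deriv (fun x'' => φ x'' y) x') = fun x' => fx φ x' y :=
      funext fun x' => (hasDerivAt_x hsmooth x' y).deriv
    have e2 : (fun y' => deriv (fun y'' => φ x y'') y') = fun y' => fy φ x y' :=
      funext fun y' => (hasDerivAt_y hsmooth x y').deriv
    have hp := hpde x y hy
    rw [e1, e2, (hasDerivAt_fx hsmooth x y).deriv, (hasDerivAt_fy hsmooth x y).deriv] at hp
    exact hp
  -- walls are constant
  have hc0 : ∀ x : ℝ, φ x 0 = φ 0 0 := fun x =>
    is_const_of_deriv_eq_zero (fun x' => (hasDerivAt_x hsmooth x' 0).differentiableAt) hwall0 x 0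
  have hcW : ∀ x : ℝ, φ x W = φ 0 W := fun x =>
    is_const_of_deriv_eq_zero (fun x' => (hasDerivAt_x hsmooth x' W).differentiableAt) hwallW x 0
  -- circulations in terms of fy
  have hcirc0' : (∫ x in (0:ℝ)..L, fy φ x 0) = 0 := by
    have e : (∫ x in (0:ℝ)..L, fy φ x 0) = ∫ x in (0:ℝ)..L, deriv (fun y' => φ x y') 0 :=
      intervalIntegral.integral_congr fun x _ => ((hasDerivAt_y hsmooth x 0).deriv).symm
    rw [e]; exact hcirc0
  have hcircW' : (∫ x in (0:ℝ)..L, fy φ x W) = 0 := by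
    have e : (∫ x in (0:ℝ)..L, fy φ x W) = ∫ x in (0:ℝ)..L, deriv (fun y' => φ x y') W :=
      intervalIntegral.integral_congr fun x _ => ((hasDerivAt_y hsmooth x W).deriv).symm
    rw [e]; exact hcircW
  set G : ℝ → ℝ := fun y => ∫ x in (0:ℝ)..L, φ x y * fy φ x y with hGdef
  set V : ℝ → ℝ := fun y => ∫ x in (0:ℝ)..L,
    (fy φ x y * fy φ x y + φ x y * fyy φ x y) with hVdef
  have hGd : ∀ y : ℝ, HasDerivAt G (V y) y := fun y => hasDerivAt_G hsmooth hL y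
  have hG0 : G 0 = 0 := by
    have e : G 0 = ∫ x in (0:ℝ)..L, φ 0 0 * fy φ x 0 :=
      intervalIntegral.integral_congr fun x _ => by rw [hc0 x]
    rw [e, intervalIntegral.integral_const_mul, hcirc0', mul_zero]
  have hGW : G W = 0 := by
    have e : G W = ∫ x in (0:ℝ)..L, φ 0 W * fy φ x W :=
      intervalIntegral.integral_congr fun x _ => by rw [hcW x]
    rw [e, intervalIntegral.integral_const_mul, hcircW', mul_zero]
  -- decomposition of V on the strip
  have hVdec : ∀ y ∈ Set.Icc (0:ℝ) W, V y =
      (∫ x in (0:ℝ)..L, fy φ x y * fy φ x y) + (∫ x in (0:ℝ)..L, fx φ x y * fx φ x y)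
        + (RS ^ 2)⁻¹ * (∫ x in (0:ℝ)..L, φ x y * φ x y) := by
    intro y hy
    have iB : IntervalIntegrable (fun x => fy φ x y * fy φ x y) volume 0 L :=
      ((cont_x_fy hsmooth y).mul (cont_x_fy hsmooth y)).intervalIntegrable 0 L
    have iA : IntervalIntegrable (fun x => fx φ x y * fx φ x y) volume 0 L :=
      ((cont_x_fx hsmooth y).mul (cont_x_fx hsmooth y)).intervalIntegrable 0 L
    have iC : IntervalIntegrable (fun x => (RS ^ 2)⁻¹ * (φ x y * φ x y)) volume 0 L :=
      (continuous_const.mul ((cont_x_phi hsmooth y).mul (cont_x_phi hsmooth y))).intervalIntegrable 0 L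
    have iD : IntervalIntegrable (fun x => φ x y * fxx φ x y) volume 0 L :=
      ((cont_x_phi hsmooth y).mul (cont_x_fxx hsmooth y)).intervalIntegrable 0 L
    have e1 : V y = ∫ x in (0:ℝ)..L,
        (fy φ x y * fy φ x y + ((RS ^ 2)⁻¹ * (φ x y * φ x y) - φ x y * fxx φ x y)) := by
      refine intervalIntegral.integral_congr fun x _ => ?_
      have hfyy : fyy φ x y = (RS ^ 2)⁻¹ * φ x y - fxx φ x y := by
        have := hpde' x y hy; linarith
      rw [hfyy]; ring
    have e2 : (∫ x in (0:ℝ)..L, (fx φ x y * fx φ x y + φ x y * fxx φ x y))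
        = (∫ x in (0:ℝ)..L, fx φ x y * fx φ x y) + ∫ x in (0:ℝ)..L, φ x y * fxx φ x y :=
      intervalIntegral.integral_add iA iD
    have e3 := ibp_x hsmooth hper y
    rw [e2] at e3
    rw [e1, intervalIntegral.integral_add iB (iC.sub iD),
      intervalIntegral.integral_sub iC iD, intervalIntegral.integral_const_mul]
    linarith
  have hA : ∀ y : ℝ, 0 ≤ ∫ x in (0:ℝ)..L, fx φ x y * fx φ x y := fun y =>
    intervalIntegral.integral_nonneg hL.le fun x _ => mul_self_nonneg _
  have hB : ∀ y : ℝ, 0 ≤ ∫ x in (0:ℝ)..L, fy φ x y * fy φ x y := fun y =>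
    intervalIntegral.integral_nonneg hL.le fun x _ => mul_self_nonneg _
  have hC : ∀ y : ℝ, 0 ≤ ∫ x in (0:ℝ)..L, φ x y * φ x y := fun y =>
    intervalIntegral.integral_nonneg hL.le fun x _ => mul_self_nonneg _
  have hRS2 : 0 < (RS ^ 2)⁻¹ := by positivity
  -- G monotone on the strip, with equal endpoints, hence constant zero
  have hmono : MonotoneOn G (Set.Icc 0 W) := by
    refine monotoneOn_of_deriv_nonneg (convex_Icc 0 W)
      (fun y _ => ((hGd y).differentiableAt.continuousAt).continuousWithinAt)
      (fun y _ => (hGd y).differentiableAt.differentiableWithinAt) (fun y hy => ?_)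
    rw [interior_Icc] at hy
    rw [(hGd y).deriv, hVdec y (Set.Ioo_subset_Icc_self hy)]
    have := hA y; have := hB y; have := hC y
    nlinarith [hRS2]
  have hGzero : ∀ y ∈ Set.Icc (0:ℝ) W, G y = 0 := by
    intro y hy
    have h1 := hmono (Set.left_mem_Icc.mpr hW.le) hy hy.1
    have h2 := hmono hy (Set.right_mem_Icc.mpr hW.le) hy.2
    rw [hG0] at h1; rw [hGW] at h2; linarith
  have hV0 : ∀ y ∈ Set.Ioo (0:ℝ) W, V y = 0 := by
    intro y hy
    have hev : G =ᶠ[nhds y] fun _ => (0:ℝ) :=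
      Filter.eventuallyEq_of_mem (Icc_mem_nhds hy.1 hy.2) hGzero
    have hd : deriv G y = 0 := by rw [hev.deriv_eq]; simp
    rwa [(hGd y).deriv] at hd
  -- φ vanishes on the open strip
  have hopen : ∀ y ∈ Set.Ioo (0:ℝ) W, ∀ x : ℝ, φ x y = 0 := by
    intro y hy
    have hCy : (∫ x in (0:ℝ)..L, φ x y * φ x y) = 0 := by
      have hv := hV0 y hy
      rw [hVdec y (Set.Ioo_subset_Icc_self hy)] at hv
      have := hA y; have := hB y; have := hC y
      nlinarith [hRS2]
    have hsq := zero_of_nonneg_of_integral_zero hL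
      ((cont_x_phi hsmooth y).mul (cont_x_phi hsmooth y)) (fun x => mul_self_nonneg _) hCy
    have hIcc : ∀ x ∈ Set.Icc (0:ℝ) L, φ x y = 0 := fun x hx =>
      mul_self_eq_zero.mp (hsq x hx)
    have hperf : Function.Periodic (fun x => φ x y) L := fun x => hper x y
    intro x
    obtain ⟨x', hx', he⟩ := hperf.exists_mem_Ico₀ hL x
    rw [show φ x y = φ x' y from he]
    exact hIcc x' (Set.mem_Icc_of_Ico hx')
  -- extend to the closed strip by continuity
  intro x y hy
  have hz : ∀ t ∈ Set.Ioo (0:ℝ) W, φ x t = 0 := fun t ht => hopen t ht x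
  have hcty : Continuous fun t => φ x t :=
    hsmooth.continuous.comp (continuous_const.prodMk continuous_id)
  have hcl : Set.EqOn (fun t => φ x t) (fun _ => (0:ℝ)) (closure (Set.Ioo (0:ℝ) W)) :=
    Set.EqOn.closure (fun t ht => hz t ht) hcty continuous_const
  rw [closure_Ioo hW.ne] at hcl
  exact hcl hy
end

section
/- Fix constants L > 0, W > 0, β ∈ ℝ, R_S > 0, amplitudes A ≠ 0, c₂, c₃ ∈ ℝ, a nonzero integer m and a positive integer n, and set k := 2πm/L, l := nπ/W. Define ψ̄(x,y,t) := A cos(kx − ωt) sin(ly), ψσ := c₂ (constant), ψσ² := c₃ (constant). Then the triple (ψ̄, ψσ, ψσ²) satisfies the IL^(0,1)QG equations together with the no-normal-flow boundary condition if and only if ω (k² + l² + R_S⁻²) = −kβ, i.e. ω = −kβ/(k² + l² + R_S⁻²) (the Rossby wave dispersion relation). -/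
private lemma hd_cos_lin (A a c s u : ℝ) :
    HasDerivAt (fun v => A * Real.cos (a * v - c) * s)
      (-(A * a) * Real.sin (a * u - c) * s) u := by
  have h1 : HasDerivAt (fun v => a * v - c) a u := by
    simpa using ((hasDerivAt_id u).const_mul a).sub_const c
  have h2 : HasDerivAt (fun v => Real.cos (a * v - c))
      (-Real.sin (a * u - c) * a) u := (Real.hasDerivAt_cos _).comp u h1
  have := (h2.const_mul A).mul_const s
  refine this.congr_deriv ?_
  ring

private lemma hd_sin_lin (C a c s u : ℝ) :
    HasDerivAt (fun v => C * Real.sin (a * v - c) * s)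
      (C * a * Real.cos (a * u - c) * s) u := by
  have h1 : HasDerivAt (fun v => a * v - c) a u := by
    simpa using ((hasDerivAt_id u).const_mul a).sub_const c
  have h2 : HasDerivAt (fun v => Real.sin (a * v - c))
      (Real.cos (a * u - c) * a) u := (Real.hasDerivAt_sin _).comp u h1
  have := (h2.const_mul C).mul_const s
  refine this.congr_deriv ?_
  ring

private lemma hd_cos_lin' (A b a s u : ℝ) :
    HasDerivAt (fun v => A * Real.cos (b - a * v) * s)
      (A * a * Real.sin (b - a * u) * s) u := by
  have h1 : HasDerivAt (fun v => b - a * v) (-a) u := by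
    simpa using ((hasDerivAt_id u).const_mul a).const_sub b
  have h2 : HasDerivAt (fun v => Real.cos (b - a * v))
      (-Real.sin (b - a * u) * (-a)) u := (Real.hasDerivAt_cos _).comp u h1
  have := (h2.const_mul A).mul_const s
  refine this.congr_deriv ?_
  ring

private lemma hd_C_sin (C a u : ℝ) :
    HasDerivAt (fun v => C * Real.sin (a * v)) (C * a * Real.cos (a * u)) u := by
  have h1 : HasDerivAt (fun v => a * v) a u := by
    simpa using (hasDerivAt_id u).const_mul a
  have h2 : HasDerivAt (fun v => Real.sin (a * v))
      (Real.cos (a * u) * a) u := (Real.hasDerivAt_sin _).comp u h1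
  have := h2.const_mul C
  refine this.congr_deriv ?_
  ring

private lemma hd_C_cos (C a u : ℝ) :
    HasDerivAt (fun v => C * Real.cos (a * v)) (-(C * a) * Real.sin (a * u)) u := by
  have h1 : HasDerivAt (fun v => a * v) a u := by
    simpa using (hasDerivAt_id u).const_mul a
  have h2 : HasDerivAt (fun v => Real.cos (a * v))
      (-Real.sin (a * u) * a) u := (Real.hasDerivAt_cos _).comp u h1
  have := h2.const_mul C
  refine this.congr_deriv ?_
  ring


/-- Partial derivative in `x` of a field of `(x, y, t)`. -/
noncomputable def px (f : ℝ → ℝ → ℝ → ℝ) (x y t : ℝ) : ℝ := deriv (fun x' => f x' y t) x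

/-- Partial derivative in `y` of a field of `(x, y, t)`. -/
noncomputable def py (f : ℝ → ℝ → ℝ → ℝ) (x y t : ℝ) : ℝ := deriv (fun y' => f x y' t) y

/-- Partial derivative in `t` of a field of `(x, y, t)`. -/
noncomputable def pt (f : ℝ → ℝ → ℝ → ℝ) (x y t : ℝ) : ℝ := deriv (fun t' => f x y t') t

/-- Second partial derivative in `x`. -/
noncomputable def pxx (f : ℝ → ℝ → ℝ → ℝ) (x y t : ℝ) : ℝ := deriv (fun x' => px f x' y t) x

/-- Second partial derivative in `y`. -/
noncomputable def pyy (f : ℝ → ℝ → ℝ → ℝ) (x y t : ℝ) : ℝ := deriv (fun y' => py f x y' t) y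

/-- Jacobian bracket `{a,b} = ∂ₓa ∂_yb − ∂_ya ∂ₓb` of two fields of `(x, y, t)`. -/
noncomputable def jac (a b : ℝ → ℝ → ℝ → ℝ) (x y t : ℝ) : ℝ :=
  px a x y t * py b x y t - py a x y t * px b x y t

/-- Potential vorticity `ξ̄ = ∇²ψ̄ − R_S⁻²(ψ̄ − ψσ + (2/3)ψσ²) + βy`. -/
noncomputable def xibar (RS β : ℝ) (ψb ψσ ψσ2 : ℝ → ℝ → ℝ → ℝ) (x y t : ℝ) : ℝ :=
  pxx ψb x y t + pyy ψb x y t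
    - (RS ^ 2)⁻¹ * (ψb x y t - ψσ x y t + 2 / 3 * ψσ2 x y t) + β * y

/-- A field of `(x, y, t)` is smooth (infinitely differentiable as a function on `ℝ³`). -/
def Smooth3 (f : ℝ → ℝ → ℝ → ℝ) : Prop :=
  ContDiff ℝ (⊤ : ℕ∞) (fun z : ℝ × ℝ × ℝ => f z.1 z.2.1 z.2.2)

/-- `L`-periodicity in the zonal direction `x`. -/
def PeriodicX (L : ℝ) (f : ℝ → ℝ → ℝ → ℝ) : Prop :=
  ∀ x y t : ℝ, f (x + L) y t = f x y t

/-- The IL⁽⁰'¹⁾QG equations on the channel `ℝ × [0,W] × ℝ`: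
`∂ₜξ̄ + {ψ̄, ξ̄ − R_S⁻²(ψσ − (2/3)ψσ²)} = 0`, `∂ₜψσ + {ψ̄, ψσ} = 0`,
`∂ₜψσ² + {ψ̄, ψσ²} = 0`. -/
def IL01QG (RS β W : ℝ) (ψb ψσ ψσ2 : ℝ → ℝ → ℝ → ℝ) : Prop :=
  ∀ x t : ℝ, ∀ y ∈ Set.Icc (0:ℝ) W,
    pt (xibar RS β ψb ψσ ψσ2) x y t
      + jac ψb (fun x' y' t' => xibar RS β ψb ψσ ψσ2 x' y' t'
          - (RS ^ 2)⁻¹ * (ψσ x' y' t' - 2 / 3 * ψσ2 x' y' t')) x y t = 0 ∧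
    pt ψσ x y t + jac ψb ψσ x y t = 0 ∧
    pt ψσ2 x y t + jac ψb ψσ2 x y t = 0

/-- No-normal-flow boundary condition: `∂ₓψ̄ = 0` on both channel walls. -/
def NoNormalFlow (W : ℝ) (ψb : ℝ → ℝ → ℝ → ℝ) : Prop :=
  ∀ x t : ℝ, px ψb x 0 t = 0 ∧ px ψb x W t = 0

/-- Rossby-wave dispersion relation: the normal mode
`ψ̄ = A cos(kx − ωt) sin(ly)`, with constant `ψσ = c₂`, `ψσ² = c₃`,
`k = 2πm/L`, `l = nπ/W`, solves the IL⁽⁰'¹⁾QG equations together with the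
no-normal-flow boundary condition iff `ω (k² + l² + R_S⁻²) = −kβ`. -/
theorem rossby_dispersion_relation
    (L W β RS A c2 c3 ω k l : ℝ)
    (hL : 0 < L) (hW : 0 < W) (hRS : 0 < RS) (hA : A ≠ 0)
    (m : ℤ) (hm : m ≠ 0) (n : ℕ) (hn : 0 < n)
    (hk : k = 2 * Real.pi * (m : ℝ) / L) (hl : l = (n : ℝ) * Real.pi / W)
    (ψb ψσ ψσ2 : ℝ → ℝ → ℝ → ℝ)
    (hψb : ψb = fun x y t => A * Real.cos (k * x - ω * t) * Real.sin (l * y))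
    (hψσ : ψσ = fun _ _ _ => c2)
    (hψσ2 : ψσ2 = fun _ _ _ => c3) :
    (IL01QG RS β W ψb ψσ ψσ2 ∧ NoNormalFlow W ψb) ↔
      ω * (k ^ 2 + l ^ 2 + (RS ^ 2)⁻¹) = -(k * β) := by
  have hWne : W ≠ 0 := hW.ne'
  have hnne : (n : ℝ) ≠ 0 := Nat.cast_ne_zero.mpr hn.ne'
  have hkne : k ≠ 0 := by
    rw [hk]
    exact div_ne_zero
      (mul_ne_zero (mul_ne_zero two_ne_zero Real.pi_ne_zero) (Int.cast_ne_zero.mpr hm)) hL.ne'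
  have hlW : l * W = (n : ℝ) * Real.pi := by
    rw [hl]; field_simp
  set K := k ^ 2 + l ^ 2 + (RS ^ 2)⁻¹ with hK
  -- basic derivatives of ψ̄
  have hpx : ∀ x y t : ℝ, px ψb x y t
      = -(A * k) * Real.sin (k * x - ω * t) * Real.sin (l * y) := by
    intro x y t
    rw [hψb]
    exact (hd_cos_lin A k (ω * t) (Real.sin (l * y)) x).deriv
  have hpy : ∀ x y t : ℝ, py ψb x y t
      = A * Real.cos (k * x - ω * t) * l * Real.cos (l * y) := by
    intro x y t
    rw [hψb]
    exact (hd_C_sin (A * Real.cos (k * x - ω * t)) l y).deriv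
  have hpxx : ∀ x y t : ℝ, pxx ψb x y t
      = -(A * k) * k * Real.cos (k * x - ω * t) * Real.sin (l * y) := by
    intro x y t
    have hfun : (fun x' => px ψb x' y t)
        = fun x' => -(A * k) * Real.sin (k * x' - ω * t) * Real.sin (l * y) :=
      funext fun x' => hpx x' y t
    unfold pxx
    rw [hfun]
    exact (hd_sin_lin (-(A * k)) k (ω * t) (Real.sin (l * y)) x).deriv
  have hpyy : ∀ x y t : ℝ, pyy ψb x y t
      = -(A * Real.cos (k * x - ω * t) * l * l) * Real.sin (l * y) := by
    intro x y t
    have hfun : (fun y' => py ψb x y' t)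
        = fun y' => A * Real.cos (k * x - ω * t) * l * Real.cos (l * y') :=
      funext fun y' => hpy x y' t
    unfold pyy
    rw [hfun]
    exact (hd_C_cos (A * Real.cos (k * x - ω * t) * l) l y).deriv
  -- closed form of the potential vorticity
  have hxi : ∀ x y t : ℝ, xibar RS β ψb ψσ ψσ2 x y t
      = -(K * A) * Real.cos (k * x - ω * t) * Real.sin (l * y)
        + ((RS ^ 2)⁻¹ * (c2 - 2 / 3 * c3) + β * y) := by
    intro x y t
    unfold xibar
    rw [hpxx, hpyy, hψb, hψσ, hψσ2, hK]
    simp only []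
    ring
  -- time derivative of ξ̄
  have hptxi : ∀ x y t : ℝ, pt (xibar RS β ψb ψσ ψσ2) x y t
      = -(K * A) * ω * Real.sin (k * x - ω * t) * Real.sin (l * y) := by
    intro x y t
    have hfun : (fun t' => xibar RS β ψb ψσ ψσ2 x y t')
        = fun t' => (-(K * A) * Real.sin (l * y)) * Real.cos (k * x - ω * t') * 1
            + ((RS ^ 2)⁻¹ * (c2 - 2 / 3 * c3) + β * y) := by
      funext t'
      rw [hxi]
      ring
    unfold pt
    rw [hfun,
      ((hd_cos_lin' (-(K * A) * Real.sin (l * y)) (k * x) ω 1 t).add_const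
        ((RS ^ 2)⁻¹ * (c2 - 2 / 3 * c3) + β * y)).deriv]
    ring
  -- closed form of the second Jacobian argument
  have hgfun : (fun x' y' t' => xibar RS β ψb ψσ ψσ2 x' y' t'
        - (RS ^ 2)⁻¹ * (ψσ x' y' t' - 2 / 3 * ψσ2 x' y' t'))
      = fun x' y' t' => -(K * A) * Real.cos (k * x' - ω * t') * Real.sin (l * y') + β * y' := by
    funext x' y' t'
    rw [hxi, hψσ, hψσ2]
    ring
  have hpxG : ∀ x y t : ℝ,
      px (fun x' y' t' => -(K * A) * Real.cos (k * x' - ω * t') * Real.sin (l * y') + β * y') x y t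
        = -(-(K * A) * k) * Real.sin (k * x - ω * t) * Real.sin (l * y) := by
    intro x y t
    exact ((hd_cos_lin (-(K * A)) k (ω * t) (Real.sin (l * y)) x).add_const (β * y)).deriv
  have hpyG : ∀ x y t : ℝ,
      py (fun x' y' t' => -(K * A) * Real.cos (k * x' - ω * t') * Real.sin (l * y') + β * y') x y t
        = -(K * A) * Real.cos (k * x - ω * t) * l * Real.cos (l * y) + β := by
    intro x y t
    have hb : HasDerivAt (fun v : ℝ => β * v) β y := by
      simpa using (hasDerivAt_id y).const_mul β
    exact ((hd_C_sin (-(K * A) * Real.cos (k * x - ω * t)) l y).add hb).deriv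
  -- the first evolution equation, in closed form
  have heq1 : ∀ x y t : ℝ,
      pt (xibar RS β ψb ψσ ψσ2) x y t
        + jac ψb (fun x' y' t' => xibar RS β ψb ψσ ψσ2 x' y' t'
            - (RS ^ 2)⁻¹ * (ψσ x' y' t' - 2 / 3 * ψσ2 x' y' t')) x y t
      = -(A * (K * ω + k * β)) * Real.sin (k * x - ω * t) * Real.sin (l * y) := by
    intro x y t
    rw [hptxi]
    unfold jac
    rw [hgfun, hpx, hpy, hpxG, hpyG]
    ring
  have heq2 : ∀ x y t : ℝ, pt ψσ x y t + jac ψb ψσ x y t = 0 := by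
    intro x y t
    simp [hψσ, pt, jac, px, py]
  have heq3 : ∀ x y t : ℝ, pt ψσ2 x y t + jac ψb ψσ2 x y t = 0 := by
    intro x y t
    simp [hψσ2, pt, jac, px, py]
  have hnnf : NoNormalFlow W ψb := by
    intro x t
    constructor
    · rw [hpx]
      simp
    · rw [hpx, hlW]
      simp [Real.sin_nat_mul_pi]
  constructor
  · rintro ⟨hil, -⟩
    have hy0mem : W / (2 * (n : ℝ)) ∈ Set.Icc (0 : ℝ) W := by
      constructor
      · positivity
      · have h1 : (1 : ℝ) ≤ 2 * (n : ℝ) := by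
          have : (1 : ℝ) ≤ (n : ℝ) := by exact_mod_cast hn
          linarith
        exact div_le_self hW.le h1
    have h1 := (hil (Real.pi / (2 * k)) 0 (W / (2 * (n : ℝ))) hy0mem).1
    rw [heq1] at h1
    have hkx : k * (Real.pi / (2 * k)) - ω * 0 = Real.pi / 2 := by
      field_simp
      ring
    have hly : l * (W / (2 * (n : ℝ))) = Real.pi / 2 := by
      rw [hl]
      field_simp
    rw [hkx, hly, Real.sin_pi_div_two] at h1
    have h2 : A * (K * ω + k * β) = 0 := by linear_combination -h1
    rcases mul_eq_zero.mp h2 with h | h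
    · exact absurd h hA
    · linear_combination h
  · intro hdisp
    refine ⟨?_, hnnf⟩
    intro x t y hy
    refine ⟨?_, heq2 x y t, heq3 x y t⟩
    rw [heq1]
    have h : K * ω + k * β = 0 := by linear_combination hdisp
    rw [h]
    ring
end

section
/- Suppose (ψ̄, ψσ, ψσ²) is a smooth solution of the IL^(0,1)QG equations on ℝ × [0,W] × ℝ, with all three fields L-periodic in x and the no-normal-flow boundary condition satisfied. Then for every constant a ∈ ℝ and every continuously differentiable F : ℝ² → ℝ, the Casimir functional t ↦ ∫₀ᵂ ∫₀ᴸ [ a ξ̄(x,y,t) + F(ψσ(x,y,t), ψσ²(x,y,t)) ] dx dy is constant in time. -/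
namespace CasimirAux

lemma one_le_inf : (1 : WithTop ℕ∞) ≤ ((⊤ : ℕ∞) : WithTop ℕ∞) := by
  exact_mod_cast (le_top : (1:ℕ∞) ≤ ⊤)

lemma inf_add_one : ((⊤ : ℕ∞) : WithTop ℕ∞) + 1 ≤ ((⊤ : ℕ∞) : WithTop ℕ∞) := by
  exact_mod_cast (by simp : (⊤:ℕ∞) + 1 ≤ ⊤)

def unc (f : ℝ → ℝ → ℝ → ℝ) : ℝ × ℝ × ℝ → ℝ := fun z => f z.1 z.2.1 z.2.2

def e1 : ℝ × ℝ × ℝ := (1, 0, 0)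
def e2 : ℝ × ℝ × ℝ := (0, 1, 0)
def e3 : ℝ × ℝ × ℝ := (0, 0, 1)

variable {E : Type*} [NormedAddCommGroup E] [NormedSpace ℝ E]

lemma hasDerivAt_sect1_of {g : ℝ × ℝ × ℝ → E} {g' : ℝ × ℝ × ℝ →L[ℝ] E} {x y t : ℝ}
    (hg : HasFDerivAt g g' (x, y, t)) :
    HasDerivAt (fun x' => g (x', y, t)) (g' e1) x :=
  hg.comp_hasDerivAt x
    ((hasDerivAt_id x).prodMk ((hasDerivAt_const x y).prodMk (hasDerivAt_const x t)))

lemma hasDerivAt_sect2_of {g : ℝ × ℝ × ℝ → E} {g' : ℝ × ℝ × ℝ →L[ℝ] E} {x y t : ℝ}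
    (hg : HasFDerivAt g g' (x, y, t)) :
    HasDerivAt (fun y' => g (x, y', t)) (g' e2) y :=
  hg.comp_hasDerivAt y
    ((hasDerivAt_const y x).prodMk ((hasDerivAt_id y).prodMk (hasDerivAt_const y t)))

lemma hasDerivAt_sect3_of {g : ℝ × ℝ × ℝ → E} {g' : ℝ × ℝ × ℝ →L[ℝ] E} {x y t : ℝ}
    (hg : HasFDerivAt g g' (x, y, t)) :
    HasDerivAt (fun t' => g (x, y, t')) (g' e3) t :=
  hg.comp_hasDerivAt t
    ((hasDerivAt_const t x).prodMk ((hasDerivAt_const t y).prodMk (hasDerivAt_id t)))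

lemma smooth3_diff {f : ℝ → ℝ → ℝ → ℝ} (hf : Smooth3 f) (z : ℝ × ℝ × ℝ) :
    DifferentiableAt ℝ (unc f) z := (hf.differentiable (lt_of_lt_of_le zero_lt_one one_le_inf).ne').differentiableAt

lemma smooth3_cont {f : ℝ → ℝ → ℝ → ℝ} (hf : Smooth3 f) : Continuous (unc f) :=
  ContDiff.continuous (hf : ContDiff ℝ (⊤ : ℕ∞) (unc f))

/-- section `HasDerivAt` for a `C¹` uncurried field, in `x`. -/
lemma hasDerivAt_px {f : ℝ → ℝ → ℝ → ℝ} (hf : ContDiff ℝ 1 (unc f)) (x y t : ℝ) :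
    HasDerivAt (fun x' => f x' y t) (px f x y t) x := by
  have h := hasDerivAt_sect1_of (((hf.differentiable one_ne_zero) (x, y, t)).hasFDerivAt)
  have : px f x y t = fderiv ℝ (unc f) (x, y, t) e1 := h.deriv
  rw [this]; exact h

lemma hasDerivAt_py {f : ℝ → ℝ → ℝ → ℝ} (hf : ContDiff ℝ 1 (unc f)) (x y t : ℝ) :
    HasDerivAt (fun y' => f x y' t) (py f x y t) y := by
  have h := hasDerivAt_sect2_of (((hf.differentiable one_ne_zero) (x, y, t)).hasFDerivAt)
  have : py f x y t = fderiv ℝ (unc f) (x, y, t) e2 := h.deriv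
  rw [this]; exact h

lemma hasDerivAt_pt {f : ℝ → ℝ → ℝ → ℝ} (hf : ContDiff ℝ 1 (unc f)) (x y t : ℝ) :
    HasDerivAt (fun t' => f x y t') (pt f x y t) t := by
  have h := hasDerivAt_sect3_of (((hf.differentiable one_ne_zero) (x, y, t)).hasFDerivAt)
  have : pt f x y t = fderiv ℝ (unc f) (x, y, t) e3 := h.deriv
  rw [this]; exact h

lemma smooth3_c1 {f : ℝ → ℝ → ℝ → ℝ} (hf : Smooth3 f) : ContDiff ℝ 1 (unc f) :=
  hf.of_le one_le_inf

lemma unc_px {f : ℝ → ℝ → ℝ → ℝ} (hf : Differentiable ℝ (unc f)) :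
    unc (px f) = fun z => fderiv ℝ (unc f) z e1 := by
  funext z
  have h := hasDerivAt_sect1_of (g := unc f) (x := z.1) (y := z.2.1) (t := z.2.2)
    ((hf _).hasFDerivAt)
  simpa [unc, px, py, pt] using h.deriv

lemma unc_py {f : ℝ → ℝ → ℝ → ℝ} (hf : Differentiable ℝ (unc f)) :
    unc (py f) = fun z => fderiv ℝ (unc f) z e2 := by
  funext z
  have h := hasDerivAt_sect2_of (g := unc f) (x := z.1) (y := z.2.1) (t := z.2.2)
    ((hf _).hasFDerivAt)
  simpa [unc, px, py, pt] using h.deriv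

lemma unc_pt {f : ℝ → ℝ → ℝ → ℝ} (hf : Differentiable ℝ (unc f)) :
    unc (pt f) = fun z => fderiv ℝ (unc f) z e3 := by
  funext z
  have h := hasDerivAt_sect3_of (g := unc f) (x := z.1) (y := z.2.1) (t := z.2.2)
    ((hf _).hasFDerivAt)
  simpa [unc, px, py, pt] using h.deriv

lemma contDiff_fderiv_apply {g : ℝ × ℝ × ℝ → ℝ} (hg : ContDiff ℝ (⊤ : ℕ∞) g) (v : ℝ × ℝ × ℝ) :
    ContDiff ℝ (⊤ : ℕ∞) fun z => fderiv ℝ g z v :=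
  (hg.fderiv_right inf_add_one).clm_apply contDiff_const

lemma smooth3_px {f : ℝ → ℝ → ℝ → ℝ} (hf : Smooth3 f) : Smooth3 (px f) := by
  show ContDiff ℝ (⊤ : ℕ∞) (unc (px f))
  rw [unc_px (hf.differentiable (lt_of_lt_of_le zero_lt_one one_le_inf).ne')]; exact contDiff_fderiv_apply hf e1

lemma smooth3_py {f : ℝ → ℝ → ℝ → ℝ} (hf : Smooth3 f) : Smooth3 (py f) := by
  show ContDiff ℝ (⊤ : ℕ∞) (unc (py f))
  rw [unc_py (hf.differentiable (lt_of_lt_of_le zero_lt_one one_le_inf).ne')]; exact contDiff_fderiv_apply hf e2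

lemma smooth3_pt {f : ℝ → ℝ → ℝ → ℝ} (hf : Smooth3 f) : Smooth3 (pt f) := by
  show ContDiff ℝ (⊤ : ℕ∞) (unc (pt f))
  rw [unc_pt (hf.differentiable (lt_of_lt_of_le zero_lt_one one_le_inf).ne')]; exact contDiff_fderiv_apply hf e3

lemma cont_fderiv_apply {g : ℝ × ℝ × ℝ → ℝ} (hg : ContDiff ℝ 1 g) (v : ℝ × ℝ × ℝ) :
    Continuous fun z => fderiv ℝ g z v :=
  (hg.continuous_fderiv one_ne_zero).clm_apply continuous_const

/-- Schwarz symmetry of mixed partials for a smooth field. -/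
lemma symm_xy {f : ℝ → ℝ → ℝ → ℝ} (hf : Smooth3 f) (x y t : ℝ) :
    py (px f) x y t = px (py f) x y t := by
  have hgd : ∀ z, HasFDerivAt (unc f) (fderiv ℝ (unc f) z) z := fun z => (smooth3_diff hf z).hasFDerivAt
  have hg2 : DifferentiableAt ℝ (fderiv ℝ (unc f)) (x, y, t) :=
    ((hf.fderiv_right inf_add_one).differentiable (lt_of_lt_of_le zero_lt_one one_le_inf).ne') _
  have hsymm := second_derivative_symmetric hgd hg2.hasFDerivAt
  -- py (px f)
  have h1 : HasDerivAt (fun y' => fderiv ℝ (unc f) (x, y', t))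
      (fderiv ℝ (fderiv ℝ (unc f)) (x, y, t) e2) y := hasDerivAt_sect2_of hg2.hasFDerivAt
  have hfun1 : (fun y' => px f x y' t) = fun y' => fderiv ℝ (unc f) (x, y', t) e1 :=
    funext fun u => congrFun (unc_px (hf.differentiable (lt_of_lt_of_le zero_lt_one one_le_inf).ne')) (x, u, t)
  have hfun2 : (fun x' => py f x' y t) = fun x' => fderiv ℝ (unc f) (x', y, t) e2 :=
    funext fun u => congrFun (unc_py (hf.differentiable (lt_of_lt_of_le zero_lt_one one_le_inf).ne')) (u, y, t)
  have h1' : HasDerivAt (fun y' => px f x y' t)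
      (fderiv ℝ (fderiv ℝ (unc f)) (x, y, t) e2 e1) y := by
    have h := h1.clm_apply (hasDerivAt_const y e1)
    rw [hfun1]; simpa using h
  have h2 : HasDerivAt (fun x' => fderiv ℝ (unc f) (x', y, t))
      (fderiv ℝ (fderiv ℝ (unc f)) (x, y, t) e1) x := hasDerivAt_sect1_of hg2.hasFDerivAt
  have h2' : HasDerivAt (fun x' => py f x' y t)
      (fderiv ℝ (fderiv ℝ (unc f)) (x, y, t) e1 e2) x := by
    have h := h2.clm_apply (hasDerivAt_const x e2)
    rw [hfun2]; simpa using h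
  calc py (px f) x y t = fderiv ℝ (fderiv ℝ (unc f)) (x, y, t) e2 e1 := h1'.deriv
    _ = fderiv ℝ (fderiv ℝ (unc f)) (x, y, t) e1 e2 := hsymm e2 e1
    _ = px (py f) x y t := h2'.deriv.symm


lemma periodicX_px {L : ℝ} {f : ℝ → ℝ → ℝ → ℝ} (h : PeriodicX L f) : PeriodicX L (px f) := by
  intro x y t
  have key : ∀ g : ℝ → ℝ, (∀ u, g (u + L) = g u) → deriv g (x + L) = deriv g x := by
    intro g hg
    have h1 := deriv_comp_add_const g L x
    rw [← h1]
    congr 1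
    funext u
    exact hg u
  exact key (fun x' => f x' y t) (fun u => h u y t)

lemma periodicX_py {L : ℝ} {f : ℝ → ℝ → ℝ → ℝ} (h : PeriodicX L f) : PeriodicX L (py f) := by
  intro x y t
  show deriv (fun y' => f (x + L) y' t) y = deriv (fun y' => f x y' t) y
  congr 1
  funext u
  exact h x u t

lemma periodicX_pt {L : ℝ} {f : ℝ → ℝ → ℝ → ℝ} (h : PeriodicX L f) : PeriodicX L (pt f) := by
  intro x y t
  show deriv (fun t' => f (x + L) y t') t = deriv (fun t' => f x y t') t
  congr 1
  funext u
  exact h x y u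

open MeasureTheory in
/-- Differentiation under the interval integral sign, for jointly continuous data. -/
lemma paramDeriv {g g' : ℝ → ℝ → ℝ}
    (hg : ∀ s, Continuous (g s))
    (hg' : Continuous fun p : ℝ × ℝ => g' p.1 p.2)
    (hd : ∀ s x, HasDerivAt (fun u => g u x) (g' s x) s)
    (α β s₀ : ℝ) :
    HasDerivAt (fun s => ∫ x in α..β, g s x) (∫ x in α..β, g' s₀ x) s₀ := by
  obtain ⟨C, hC⟩ := ((isCompact_closedBall s₀ 1).prod isCompact_uIcc).exists_bound_of_continuousOn
    hg'.continuousOn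
  refine (intervalIntegral.hasDerivAt_integral_of_dominated_loc_of_deriv_le
    (F := g) (F' := g') (bound := fun _ => C) (Metric.ball_mem_nhds s₀ zero_lt_one)
    (Filter.Eventually.of_forall fun s => (hg s).aestronglyMeasurable)
    ((hg s₀).intervalIntegrable α β)
    ((hg'.comp (continuous_const.prodMk continuous_id)).aestronglyMeasurable)
    ?_ (intervalIntegrable_const) ?_).2
  · exact Filter.Eventually.of_forall fun x hx s hs =>
      hC (s, x) ⟨Metric.ball_subset_closedBall hs, Set.uIoc_subset_uIcc hx⟩
  · exact Filter.Eventually.of_forall fun x _ s _ => hd s x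

open MeasureTheory in
lemma paramCont {g : ℝ → ℝ → ℝ} (hg : Continuous fun p : ℝ × ℝ => g p.1 p.2) (α β : ℝ) :
    Continuous fun s => ∫ x in α..β, g s x :=
  intervalIntegral.continuous_parametric_intervalIntegral_of_continuous' hg α β


noncomputable def qf (RS β : ℝ) (ψb ψσ ψσ2 : ℝ → ℝ → ℝ → ℝ) : ℝ → ℝ → ℝ → ℝ :=
  fun x' y' t' => xibar RS β ψb ψσ ψσ2 x' y' t'
    - (RS ^ 2)⁻¹ * (ψσ x' y' t' - 2 / 3 * ψσ2 x' y' t')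

noncomputable def Hf (RS β a : ℝ) (ψb ψσ ψσ2 : ℝ → ℝ → ℝ → ℝ) (F : ℝ × ℝ → ℝ) :
    ℝ → ℝ → ℝ → ℝ :=
  fun x y t => a * qf RS β ψb ψσ ψσ2 x y t + F (ψσ x y t, ψσ2 x y t)

noncomputable def DF (F : ℝ × ℝ → ℝ) (ψσ ψσ2 : ℝ → ℝ → ℝ → ℝ) :
    ℝ × ℝ × ℝ → (ℝ × ℝ →L[ℝ] ℝ) :=
  fun z => fderiv ℝ F (ψσ z.1 z.2.1 z.2.2, ψσ2 z.1 z.2.1 z.2.2)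

noncomputable def Ptf (RS β a : ℝ) (ψb ψσ ψσ2 : ℝ → ℝ → ℝ → ℝ) (F : ℝ × ℝ → ℝ) :
    ℝ → ℝ → ℝ → ℝ :=
  fun x y t => a * pt (xibar RS β ψb ψσ ψσ2) x y t
    + DF F ψσ ψσ2 (x, y, t) (pt ψσ x y t, pt ψσ2 x y t)

noncomputable def A1f (RS β a : ℝ) (ψb ψσ ψσ2 : ℝ → ℝ → ℝ → ℝ) (F : ℝ × ℝ → ℝ) :
    ℝ → ℝ → ℝ → ℝ :=
  fun x y t => py (Hf RS β a ψb ψσ ψσ2 F) x y t * px ψb x y t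
    + Hf RS β a ψb ψσ ψσ2 F x y t * py (px ψb) x y t

noncomputable def A2f (RS β a : ℝ) (ψb ψσ ψσ2 : ℝ → ℝ → ℝ → ℝ) (F : ℝ × ℝ → ℝ) :
    ℝ → ℝ → ℝ → ℝ :=
  fun x y t => px (Hf RS β a ψb ψσ ψσ2 F) x y t * py ψb x y t
    + Hf RS β a ψb ψσ ψσ2 F x y t * px (py ψb) x y t

section Main

variable {L W RS β a : ℝ} {ψb ψσ ψσ2 : ℝ → ℝ → ℝ → ℝ} {F : ℝ × ℝ → ℝ}

lemma smooth3_xibar (hψb : Smooth3 ψb) (hψσ : Smooth3 ψσ) (hψσ2 : Smooth3 ψσ2) :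
    Smooth3 (xibar RS β ψb ψσ ψσ2) := by
  have h1 : ContDiff ℝ (⊤ : ℕ∞) (unc (px (px ψb))) := smooth3_px (smooth3_px hψb)
  have h2 : ContDiff ℝ (⊤ : ℕ∞) (unc (py (py ψb))) := smooth3_py (smooth3_py hψb)
  have h3 : ContDiff ℝ (⊤ : ℕ∞) (unc ψb) := hψb
  have h4 : ContDiff ℝ (⊤ : ℕ∞) (unc ψσ) := hψσ
  have h5 : ContDiff ℝ (⊤ : ℕ∞) (unc ψσ2) := hψσ2
  show ContDiff ℝ (⊤ : ℕ∞) (fun z : ℝ × ℝ × ℝ => unc (px (px ψb)) z + unc (py (py ψb)) z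
      - (RS ^ 2)⁻¹ * (unc ψb z - unc ψσ z + 2 / 3 * unc ψσ2 z) + β * z.2.1)
  exact ((h1.add h2).sub (contDiff_const.mul ((h3.sub h4).add (contDiff_const.mul h5)))).add
    (contDiff_const.mul (contDiff_fst.comp contDiff_snd))

lemma smooth3_qf (hψb : Smooth3 ψb) (hψσ : Smooth3 ψσ) (hψσ2 : Smooth3 ψσ2) :
    Smooth3 (qf RS β ψb ψσ ψσ2) := by
  have h1 : ContDiff ℝ (⊤ : ℕ∞) (unc (xibar RS β ψb ψσ ψσ2)) := smooth3_xibar hψb hψσ hψσ2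
  have h4 : ContDiff ℝ (⊤ : ℕ∞) (unc ψσ) := hψσ
  have h5 : ContDiff ℝ (⊤ : ℕ∞) (unc ψσ2) := hψσ2
  show ContDiff ℝ (⊤ : ℕ∞) (fun z : ℝ × ℝ × ℝ => unc (xibar RS β ψb ψσ ψσ2) z
      - (RS ^ 2)⁻¹ * (unc ψσ z - 2 / 3 * unc ψσ2 z))
  exact h1.sub (contDiff_const.mul (h4.sub (contDiff_const.mul h5)))

lemma contDiff_Hf (hψb : Smooth3 ψb) (hψσ : Smooth3 ψσ) (hψσ2 : Smooth3 ψσ2)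
    (hF : ContDiff ℝ 1 F) : ContDiff ℝ 1 (unc (Hf RS β a ψb ψσ ψσ2 F)) := by
  have h1 : ContDiff ℝ 1 (unc (qf RS β ψb ψσ ψσ2)) := smooth3_c1 (smooth3_qf hψb hψσ hψσ2)
  have h4 : ContDiff ℝ 1 (unc ψσ) := smooth3_c1 hψσ
  have h5 : ContDiff ℝ 1 (unc ψσ2) := smooth3_c1 hψσ2
  show ContDiff ℝ 1 (fun z : ℝ × ℝ × ℝ => a * unc (qf RS β ψb ψσ ψσ2) z
      + F (unc ψσ z, unc ψσ2 z))
  exact (contDiff_const.mul h1).add (hF.comp (h4.prodMk h5))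

lemma cont_DF (hψσ : Smooth3 ψσ) (hψσ2 : Smooth3 ψσ2) (hF : ContDiff ℝ 1 F) :
    Continuous (DF F ψσ ψσ2) :=
  (hF.continuous_fderiv one_ne_zero).comp ((smooth3_cont hψσ).prodMk (smooth3_cont hψσ2))

lemma cont_Ptf (hψb : Smooth3 ψb) (hψσ : Smooth3 ψσ) (hψσ2 : Smooth3 ψσ2)
    (hF : ContDiff ℝ 1 F) : Continuous (unc (Ptf RS β a ψb ψσ ψσ2 F)) := by
  have h1 : Continuous (unc (pt (xibar RS β ψb ψσ ψσ2))) :=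
    smooth3_cont (smooth3_pt (smooth3_xibar hψb hψσ hψσ2))
  have h2 : Continuous (unc (pt ψσ)) := smooth3_cont (smooth3_pt hψσ)
  have h3 : Continuous (unc (pt ψσ2)) := smooth3_cont (smooth3_pt hψσ2)
  show Continuous (fun z : ℝ × ℝ × ℝ => a * unc (pt (xibar RS β ψb ψσ ψσ2)) z
      + DF F ψσ ψσ2 z (unc (pt ψσ) z, unc (pt ψσ2) z))
  exact (continuous_const.mul h1).add
    ((cont_DF hψσ hψσ2 hF).clm_apply (h2.prodMk h3))

lemma hasDerivAt_rho (hψb : Smooth3 ψb) (hψσ : Smooth3 ψσ) (hψσ2 : Smooth3 ψσ2)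
    (hF : ContDiff ℝ 1 F) (x y t : ℝ) :
    HasDerivAt (fun t' => a * xibar RS β ψb ψσ ψσ2 x y t' + F (ψσ x y t', ψσ2 x y t'))
      (Ptf RS β a ψb ψσ ψσ2 F x y t) t := by
  have h1 := (hasDerivAt_pt (smooth3_c1 (smooth3_xibar (RS := RS) (β := β) hψb hψσ hψσ2)) x y t).const_mul a
  have h2 : HasDerivAt (fun t' => (ψσ x y t', ψσ2 x y t'))
      (pt ψσ x y t, pt ψσ2 x y t) t :=
    (hasDerivAt_pt (smooth3_c1 hψσ) x y t).prodMk (hasDerivAt_pt (smooth3_c1 hψσ2) x y t)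
  have h3 := ((hF.differentiable one_ne_zero) _).hasFDerivAt.comp_hasDerivAt t h2
  exact h1.add h3

lemma pxHf_eq (hψb : Smooth3 ψb) (hψσ : Smooth3 ψσ) (hψσ2 : Smooth3 ψσ2)
    (hF : ContDiff ℝ 1 F) (x y t : ℝ) :
    px (Hf RS β a ψb ψσ ψσ2 F) x y t = a * px (qf RS β ψb ψσ ψσ2) x y t
      + DF F ψσ ψσ2 (x, y, t) (px ψσ x y t, px ψσ2 x y t) := by
  have h1 := (hasDerivAt_px (smooth3_c1 (smooth3_qf (RS := RS) (β := β) hψb hψσ hψσ2)) x y t).const_mul a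
  have h2 : HasDerivAt (fun x' => (ψσ x' y t, ψσ2 x' y t))
      (px ψσ x y t, px ψσ2 x y t) x :=
    (hasDerivAt_px (smooth3_c1 hψσ) x y t).prodMk (hasDerivAt_px (smooth3_c1 hψσ2) x y t)
  have h3 := ((hF.differentiable one_ne_zero) _).hasFDerivAt.comp_hasDerivAt x h2
  exact (h1.add h3).deriv

lemma pyHf_eq (hψb : Smooth3 ψb) (hψσ : Smooth3 ψσ) (hψσ2 : Smooth3 ψσ2)
    (hF : ContDiff ℝ 1 F) (x y t : ℝ) :
    py (Hf RS β a ψb ψσ ψσ2 F) x y t = a * py (qf RS β ψb ψσ ψσ2) x y t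
      + DF F ψσ ψσ2 (x, y, t) (py ψσ x y t, py ψσ2 x y t) := by
  have h1 := (hasDerivAt_py (smooth3_c1 (smooth3_qf (RS := RS) (β := β) hψb hψσ hψσ2)) x y t).const_mul a
  have h2 : HasDerivAt (fun y' => (ψσ x y' t, ψσ2 x y' t))
      (py ψσ x y t, py ψσ2 x y t) y :=
    (hasDerivAt_py (smooth3_c1 hψσ) x y t).prodMk (hasDerivAt_py (smooth3_c1 hψσ2) x y t)
  have h3 := ((hF.differentiable one_ne_zero) _).hasFDerivAt.comp_hasDerivAt y h2
  exact (h1.add h3).deriv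

lemma cont_pxHf (hψb : Smooth3 ψb) (hψσ : Smooth3 ψσ) (hψσ2 : Smooth3 ψσ2)
    (hF : ContDiff ℝ 1 F) : Continuous (unc (px (Hf RS β a ψb ψσ ψσ2 F))) := by
  have h := contDiff_Hf (RS := RS) (β := β) (a := a) hψb hψσ hψσ2 hF
  rw [unc_px (h.differentiable one_ne_zero)]
  exact cont_fderiv_apply h e1

lemma cont_pyHf (hψb : Smooth3 ψb) (hψσ : Smooth3 ψσ) (hψσ2 : Smooth3 ψσ2)
    (hF : ContDiff ℝ 1 F) : Continuous (unc (py (Hf RS β a ψb ψσ ψσ2 F))) := by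
  have h := contDiff_Hf (RS := RS) (β := β) (a := a) hψb hψσ hψσ2 hF
  rw [unc_py (h.differentiable one_ne_zero)]
  exact cont_fderiv_apply h e2

lemma cont_A1f (hψb : Smooth3 ψb) (hψσ : Smooth3 ψσ) (hψσ2 : Smooth3 ψσ2)
    (hF : ContDiff ℝ 1 F) : Continuous (unc (A1f RS β a ψb ψσ ψσ2 F)) := by
  show Continuous (fun z : ℝ × ℝ × ℝ => unc (py (Hf RS β a ψb ψσ ψσ2 F)) z * unc (px ψb) z
      + unc (Hf RS β a ψb ψσ ψσ2 F) z * unc (py (px ψb)) z)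
  exact ((cont_pyHf hψb hψσ hψσ2 hF).mul (smooth3_cont (smooth3_px hψb))).add
    ((contDiff_Hf hψb hψσ hψσ2 hF).continuous.mul
      (smooth3_cont (smooth3_py (smooth3_px hψb))))

lemma cont_A2f (hψb : Smooth3 ψb) (hψσ : Smooth3 ψσ) (hψσ2 : Smooth3 ψσ2)
    (hF : ContDiff ℝ 1 F) : Continuous (unc (A2f RS β a ψb ψσ ψσ2 F)) := by
  show Continuous (fun z : ℝ × ℝ × ℝ => unc (px (Hf RS β a ψb ψσ ψσ2 F)) z * unc (py ψb) z
      + unc (Hf RS β a ψb ψσ ψσ2 F) z * unc (px (py ψb)) z)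
  exact ((cont_pxHf hψb hψσ hψσ2 hF).mul (smooth3_cont (smooth3_py hψb))).add
    ((contDiff_Hf hψb hψσ hψσ2 hF).continuous.mul
      (smooth3_cont (smooth3_px (smooth3_py hψb))))

lemma hasDerivAt_A1f (hψb : Smooth3 ψb) (hψσ : Smooth3 ψσ) (hψσ2 : Smooth3 ψσ2)
    (hF : ContDiff ℝ 1 F) (x y t : ℝ) :
    HasDerivAt (fun y' => Hf RS β a ψb ψσ ψσ2 F x y' t * px ψb x y' t)
      (A1f RS β a ψb ψσ ψσ2 F x y t) y :=
  (hasDerivAt_py (contDiff_Hf hψb hψσ hψσ2 hF) x y t).mul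
    (hasDerivAt_py (smooth3_c1 (smooth3_px hψb)) x y t)

lemma hasDerivAt_A2f (hψb : Smooth3 ψb) (hψσ : Smooth3 ψσ) (hψσ2 : Smooth3 ψσ2)
    (hF : ContDiff ℝ 1 F) (x y t : ℝ) :
    HasDerivAt (fun x' => Hf RS β a ψb ψσ ψσ2 F x' y t * py ψb x' y t)
      (A2f RS β a ψb ψσ ψσ2 F x y t) x :=
  (hasDerivAt_px (contDiff_Hf hψb hψσ hψσ2 hF) x y t).mul
    (hasDerivAt_px (smooth3_c1 (smooth3_py hψb)) x y t)

lemma periodicX_xibar (hperb : PeriodicX L ψb) (hperσ : PeriodicX L ψσ)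
    (hperσ2 : PeriodicX L ψσ2) : PeriodicX L (xibar RS β ψb ψσ ψσ2) := by
  intro x y t
  have h1 : pxx ψb (x + L) y t = pxx ψb x y t := periodicX_px (periodicX_px hperb) x y t
  have h2 : pyy ψb (x + L) y t = pyy ψb x y t := periodicX_py (periodicX_py hperb) x y t
  simp only [xibar, h1, h2, hperb x y t, hperσ x y t, hperσ2 x y t]

lemma periodicX_Hf (hperb : PeriodicX L ψb) (hperσ : PeriodicX L ψσ)
    (hperσ2 : PeriodicX L ψσ2) : PeriodicX L (Hf RS β a ψb ψσ ψσ2 F) := by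
  intro x y t
  have hq : qf RS β ψb ψσ ψσ2 (x + L) y t = qf RS β ψb ψσ ψσ2 x y t := by
    simp only [qf, periodicX_xibar hperb hperσ hperσ2 x y t, hperσ x y t, hperσ2 x y t]
  simp only [Hf, hq, hperσ x y t, hperσ2 x y t]

/-- The key pointwise identity, combining the equations of motion, the chain rule and
Schwarz symmetry. -/
lemma key_identity (hψb : Smooth3 ψb) (hψσ : Smooth3 ψσ) (hψσ2 : Smooth3 ψσ2)
    (hF : ContDiff ℝ 1 F) (heqs : IL01QG RS β W ψb ψσ ψσ2)
    (x t : ℝ) {y : ℝ} (hy : y ∈ Set.Icc (0:ℝ) W) :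
    Ptf RS β a ψb ψσ ψσ2 F x y t
      = A2f RS β a ψb ψσ ψσ2 F x y t - A1f RS β a ψb ψσ ψσ2 F x y t := by
  obtain ⟨h1, h2, h3⟩ := heqs x t y hy
  have h1' : pt (xibar RS β ψb ψσ ψσ2) x y t + jac ψb (qf RS β ψb ψσ ψσ2) x y t = 0 := h1
  have hptξ : pt (xibar RS β ψb ψσ ψσ2) x y t = -(jac ψb (qf RS β ψb ψσ ψσ2) x y t) := by
    linarith
  have hptσ : pt ψσ x y t = -(jac ψb ψσ x y t) := by linarith
  have hptσ2 : pt ψσ2 x y t = -(jac ψb ψσ2 x y t) := by linarith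
  have hDFpair : DF F ψσ ψσ2 (x, y, t) (pt ψσ x y t, pt ψσ2 x y t)
      = -(DF F ψσ ψσ2 (x, y, t) (jac ψb ψσ x y t, jac ψb ψσ2 x y t)) := by
    rw [hptσ, hptσ2]
    rw [show ((-(jac ψb ψσ x y t), -(jac ψb ψσ2 x y t)) : ℝ × ℝ)
        = -(jac ψb ψσ x y t, jac ψb ψσ2 x y t) from rfl, map_neg]
  have hDFjac : px ψb x y t * DF F ψσ ψσ2 (x, y, t) (py ψσ x y t, py ψσ2 x y t)
      - py ψb x y t * DF F ψσ ψσ2 (x, y, t) (px ψσ x y t, px ψσ2 x y t)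
      = DF F ψσ ψσ2 (x, y, t) (jac ψb ψσ x y t, jac ψb ψσ2 x y t) := by
    have hpair : ((jac ψb ψσ x y t, jac ψb ψσ2 x y t) : ℝ × ℝ)
        = px ψb x y t • (py ψσ x y t, py ψσ2 x y t)
          - py ψb x y t • (px ψσ x y t, px ψσ2 x y t) := by
      simp [jac, Prod.ext_iff, smul_eq_mul]
    rw [hpair, map_sub, map_smul, map_smul, smul_eq_mul, smul_eq_mul]
  have hsch : py (px ψb) x y t = px (py ψb) x y t := symm_xy hψb x y t
  show a * pt (xibar RS β ψb ψσ ψσ2) x y t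
      + DF F ψσ ψσ2 (x, y, t) (pt ψσ x y t, pt ψσ2 x y t)
    = (px (Hf RS β a ψb ψσ ψσ2 F) x y t * py ψb x y t
        + Hf RS β a ψb ψσ ψσ2 F x y t * px (py ψb) x y t)
      - (py (Hf RS β a ψb ψσ ψσ2 F) x y t * px ψb x y t
        + Hf RS β a ψb ψσ ψσ2 F x y t * py (px ψb) x y t)
  rw [hptξ, hDFpair, pxHf_eq hψb hψσ hψσ2 hF, pyHf_eq hψb hψσ hψσ2 hF, hsch, ← hDFjac]
  simp only [jac]
  ring

end Main

end CasimirAux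

open CasimirAux MeasureTheory

set_option maxHeartbeats 1000000 in
/-- Conservation of the Casimirs `∫∫ (a ξ̄ + F(ψσ, ψσ²))` for any constant `a` and any
`C¹` function `F`, along smooth `x`-periodic solutions of the IL⁽⁰'¹⁾QG equations
satisfying the no-normal-flow boundary condition. -/
theorem casimir_conserved
    (L W β RS : ℝ) (hL : 0 < L) (hW : 0 < W) (hRS : 0 < RS)
    (ψb ψσ ψσ2 : ℝ → ℝ → ℝ → ℝ)
    (hψb : Smooth3 ψb) (hψσ : Smooth3 ψσ) (hψσ2 : Smooth3 ψσ2)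
    (hperb : PeriodicX L ψb) (hperσ : PeriodicX L ψσ) (hperσ2 : PeriodicX L ψσ2)
    (heqs : IL01QG RS β W ψb ψσ ψσ2)
    (hbc : NoNormalFlow W ψb)
    (a : ℝ) (F : ℝ × ℝ → ℝ) (hF : ContDiff ℝ 1 F) :
    ∀ t₁ t₂ : ℝ,
      (∫ y in (0:ℝ)..W, ∫ x in (0:ℝ)..L,
        (a * xibar RS β ψb ψσ ψσ2 x y t₁ + F (ψσ x y t₁, ψσ2 x y t₁)))
      = ∫ y in (0:ℝ)..W, ∫ x in (0:ℝ)..L,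
        (a * xibar RS β ψb ψσ ψσ2 x y t₂ + F (ψσ x y t₂, ψσ2 x y t₂)) := by
  intro t₁ t₂
  have hρc : Continuous (fun z : ℝ × ℝ × ℝ =>
      a * xibar RS β ψb ψσ ψσ2 z.1 z.2.1 z.2.2 + F (ψσ z.1 z.2.1 z.2.2, ψσ2 z.1 z.2.1 z.2.2)) := by
    have h1 : Continuous (unc (xibar RS β ψb ψσ ψσ2)) :=
      smooth3_cont (smooth3_xibar hψb hψσ hψσ2)
    have h2 : Continuous (unc ψσ) := smooth3_cont hψσ
    have h3 : Continuous (unc ψσ2) := smooth3_cont hψσ2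
    show Continuous (fun z : ℝ × ℝ × ℝ => a * unc (xibar RS β ψb ψσ ψσ2) z
      + F (unc ψσ z, unc ψσ2 z))
    exact (continuous_const.mul h1).add (hF.continuous.comp (h2.prodMk h3))
  have hPtc : Continuous (unc (Ptf RS β a ψb ψσ ψσ2 F)) := cont_Ptf hψb hψσ hψσ2 hF
  have hA1c := cont_A1f (RS := RS) (β := β) (a := a) hψb hψσ hψσ2 hF
  have hA2c := cont_A2f (RS := RS) (β := β) (a := a) hψb hψσ hψσ2 hF
  have hHcont : Continuous (unc (Hf RS β a ψb ψσ ψσ2 F)) :=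
    (contDiff_Hf (RS := RS) (β := β) (a := a) hψb hψσ hψσ2 hF).continuous
  have hpxbcont : Continuous (unc (px ψb)) := smooth3_cont (smooth3_px hψb)
  have hA1int : ∀ y s : ℝ, IntervalIntegrable
      (fun x => A1f RS β a ψb ψσ ψσ2 F x y s) volume 0 L := fun y s =>
    (hA1c.comp (continuous_id.prodMk (continuous_const.prodMk
      continuous_const))).intervalIntegrable 0 L
  have hA2int : ∀ y s : ℝ, IntervalIntegrable
      (fun x => A2f RS β a ψb ψσ ψσ2 F x y s) volume 0 L := fun y s =>
    (hA2c.comp (continuous_id.prodMk (continuous_const.prodMk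
      continuous_const))).intervalIntegrable 0 L
  have hA2zero : ∀ y s : ℝ, (∫ x in (0:ℝ)..L, A2f RS β a ψb ψσ ψσ2 F x y s) = 0 := by
    intro y s
    rw [intervalIntegral.integral_eq_sub_of_hasDerivAt
      (fun x _ => hasDerivAt_A2f hψb hψσ hψσ2 hF x y s) (hA2int y s)]
    have hper : Hf RS β a ψb ψσ ψσ2 F (0 + L) y s * py ψb (0 + L) y s
        = Hf RS β a ψb ψσ ψσ2 F 0 y s * py ψb 0 y s := by
      rw [periodicX_Hf (RS := RS) (β := β) (a := a) (F := F) hperb hperσ hperσ2 0 y s,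
        periodicX_py hperb 0 y s]
    rw [zero_add] at hper
    rw [hper, sub_self]
  have hKd : ∀ s y : ℝ, HasDerivAt
      (fun y' => ∫ x in (0:ℝ)..L, Hf RS β a ψb ψσ ψσ2 F x y' s * px ψb x y' s)
      (∫ x in (0:ℝ)..L, A1f RS β a ψb ψσ ψσ2 F x y s) y := by
    intro s y
    refine paramDeriv (g := fun y' x => Hf RS β a ψb ψσ ψσ2 F x y' s * px ψb x y' s)
      (g' := fun y' x => A1f RS β a ψb ψσ ψσ2 F x y' s) ?_ ?_
      (fun y' x => hasDerivAt_A1f hψb hψσ hψσ2 hF x y' s) 0 L y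
    · intro y'
      show Continuous fun x : ℝ => unc (Hf RS β a ψb ψσ ψσ2 F) (x, y', s)
        * unc (px ψb) (x, y', s)
      exact (hHcont.comp (continuous_id.prodMk (continuous_const.prodMk
        continuous_const))).mul (hpxbcont.comp (continuous_id.prodMk
          (continuous_const.prodMk continuous_const)))
    · show Continuous fun p : ℝ × ℝ => unc (A1f RS β a ψb ψσ ψσ2 F) (p.2, p.1, s)
      exact hA1c.comp (continuous_snd.prodMk (continuous_fst.prodMk continuous_const))
  have hKW : ∀ s : ℝ, (∫ x in (0:ℝ)..L, Hf RS β a ψb ψσ ψσ2 F x W s * px ψb x W s) = 0 := by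
    intro s
    have h : (fun x => Hf RS β a ψb ψσ ψσ2 F x W s * px ψb x W s) = fun _ => (0:ℝ) :=
      funext fun x => by rw [(hbc x s).2, mul_zero]
    rw [h]
    simp
  have hK0 : ∀ s : ℝ, (∫ x in (0:ℝ)..L, Hf RS β a ψb ψσ ψσ2 F x 0 s * px ψb x 0 s) = 0 := by
    intro s
    have h : (fun x => Hf RS β a ψb ψσ ψσ2 F x 0 s * px ψb x 0 s) = fun _ => (0:ℝ) :=
      funext fun x => by rw [(hbc x s).1, mul_zero]
    rw [h]
    simp
  have hA1yint : ∀ s : ℝ, IntervalIntegrable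
      (fun y => ∫ x in (0:ℝ)..L, A1f RS β a ψb ψσ ψσ2 F x y s) volume 0 W := by
    intro s
    have hc : Continuous fun p : ℝ × ℝ => unc (A1f RS β a ψb ψσ ψσ2 F) (p.2, p.1, s) :=
      hA1c.comp (continuous_snd.prodMk (continuous_fst.prodMk continuous_const))
    exact (paramCont (g := fun y x => A1f RS β a ψb ψσ ψσ2 F x y s)
      hc 0 L).intervalIntegrable 0 W
  have hzero : ∀ s : ℝ,
      (∫ y in (0:ℝ)..W, ∫ x in (0:ℝ)..L, Ptf RS β a ψb ψσ ψσ2 F x y s) = 0 := by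
    intro s
    have hcong : Set.EqOn (fun y => ∫ x in (0:ℝ)..L, Ptf RS β a ψb ψσ ψσ2 F x y s)
        (fun y => -(∫ x in (0:ℝ)..L, A1f RS β a ψb ψσ ψσ2 F x y s)) (Set.uIcc (0:ℝ) W) := by
      intro y hy
      have hy' : y ∈ Set.Icc (0:ℝ) W := by rwa [Set.uIcc_of_le hW.le] at hy
      show (∫ x in (0:ℝ)..L, Ptf RS β a ψb ψσ ψσ2 F x y s)
          = -(∫ x in (0:ℝ)..L, A1f RS β a ψb ψσ ψσ2 F x y s)
      have heq : (fun x => Ptf RS β a ψb ψσ ψσ2 F x y s)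
          = fun x => A2f RS β a ψb ψσ ψσ2 F x y s - A1f RS β a ψb ψσ ψσ2 F x y s :=
        funext fun x => key_identity hψb hψσ hψσ2 hF heqs x s hy'
      rw [heq, intervalIntegral.integral_sub (hA2int y s) (hA1int y s), hA2zero y s, zero_sub]
    rw [intervalIntegral.integral_congr hcong, intervalIntegral.integral_neg,
      intervalIntegral.integral_eq_sub_of_hasDerivAt (fun y _ => hKd s y) (hA1yint s)]
    simp only [hKW s, hK0 s, sub_zero, neg_zero]
  have hinner : ∀ y s : ℝ, HasDerivAt
      (fun u => ∫ x in (0:ℝ)..L, (a * xibar RS β ψb ψσ ψσ2 x y u + F (ψσ x y u, ψσ2 x y u)))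
      (∫ x in (0:ℝ)..L, Ptf RS β a ψb ψσ ψσ2 F x y s) s := by
    intro y s
    refine paramDeriv
      (g := fun u x => a * xibar RS β ψb ψσ ψσ2 x y u + F (ψσ x y u, ψσ2 x y u))
      (g' := fun u x => Ptf RS β a ψb ψσ ψσ2 F x y u) ?_ ?_
      (fun u x => hasDerivAt_rho hψb hψσ hψσ2 hF x y u) 0 L s
    · intro u
      show Continuous fun x : ℝ => a * unc (xibar RS β ψb ψσ ψσ2) (x, y, u)
        + F (unc ψσ (x, y, u), unc ψσ2 (x, y, u))
      exact hρc.comp (continuous_id.prodMk (continuous_const.prodMk continuous_const))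
    · show Continuous fun p : ℝ × ℝ => unc (Ptf RS β a ψb ψσ ψσ2 F) (p.2, y, p.1)
      exact hPtc.comp (continuous_snd.prodMk (continuous_const.prodMk continuous_fst))
  have hΦ : ∀ s : ℝ, HasDerivAt
      (fun u => ∫ y in (0:ℝ)..W, ∫ x in (0:ℝ)..L,
        (a * xibar RS β ψb ψσ ψσ2 x y u + F (ψσ x y u, ψσ2 x y u))) 0 s := by
    intro s
    have hg1 : ∀ u : ℝ, Continuous fun y =>
        ∫ x in (0:ℝ)..L, (a * xibar RS β ψb ψσ ψσ2 x y u + F (ψσ x y u, ψσ2 x y u)) := by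
      intro u
      have hc : Continuous fun p : ℝ × ℝ => a * unc (xibar RS β ψb ψσ ψσ2) (p.2, p.1, u)
          + F (unc ψσ (p.2, p.1, u), unc ψσ2 (p.2, p.1, u)) :=
        hρc.comp (continuous_snd.prodMk (continuous_fst.prodMk continuous_const))
      exact paramCont
        (g := fun y x => a * xibar RS β ψb ψσ ψσ2 x y u + F (ψσ x y u, ψσ2 x y u)) hc 0 L
    have hg2 : Continuous fun p : ℝ × ℝ =>
        ∫ x in (0:ℝ)..L, Ptf RS β a ψb ψσ ψσ2 F x p.2 p.1 :=
      by
      have hc : Continuous fun q : (ℝ × ℝ) × ℝ => unc (Ptf RS β a ψb ψσ ψσ2 F)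
          (q.2, q.1.2, q.1.1) :=
        hPtc.comp (continuous_snd.prodMk ((continuous_fst.snd).prodMk
          (continuous_fst.fst)))
      exact intervalIntegral.continuous_parametric_intervalIntegral_of_continuous'
        (f := fun (p : ℝ × ℝ) x => Ptf RS β a ψb ψσ ψσ2 F x p.2 p.1) hc 0 L
    have h := paramDeriv
      (g := fun u y => ∫ x in (0:ℝ)..L,
        (a * xibar RS β ψb ψσ ψσ2 x y u + F (ψσ x y u, ψσ2 x y u)))
      (g' := fun u y => ∫ x in (0:ℝ)..L, Ptf RS β a ψb ψσ ψσ2 F x y u)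
      hg1 hg2 (fun u y => hinner y u) 0 W s
    rwa [hzero s] at h
  exact is_const_of_deriv_eq_zero (fun s => (hΦ s).differentiableAt)
    (fun s => (hΦ s).deriv) t₁ t₂
end

section
/- (Lemma 1 of the paper.) Suppose (ψ̄, ψσ, ψσ²) is a smooth solution of the IL^(0,1)QG equations on ℝ × [0,W] × ℝ, with all three fields L-periodic in x and the no-normal-flow boundary condition satisfied. Then for every continuously differentiable F : ℝ → ℝ, the functional t ↦ ∫₀ᵂ ∫₀ᴸ ξ̄(x,y,t) · F( ψσ(x,y,t) − (2/3) ψσ²(x,y,t) ) dx dy is constant in time. (These integrals of motion are neither Casimirs of the model's Lie–Poisson bracket nor related to explicit symmetries.) -/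
namespace NC

open MeasureTheory intervalIntegral Set

def U (f : ℝ → ℝ → ℝ → ℝ) : ℝ × ℝ × ℝ → ℝ := fun z => f z.1 z.2.1 z.2.2

lemma top_add_one_le : ((⊤:ℕ∞) : WithTop ℕ∞) + 1 ≤ ((⊤:ℕ∞) : WithTop ℕ∞) := by
  rw [show (((⊤:ℕ∞)):WithTop ℕ∞) + 1 = (((⊤:ℕ∞)):WithTop ℕ∞) by
    rw [show ((1:WithTop ℕ∞)) = (((1:ℕ∞)):WithTop ℕ∞) by rfl, ← WithTop.coe_add]; rfl]

lemma two_le_top : (2 : WithTop ℕ∞) ≤ ((⊤:ℕ∞) : WithTop ℕ∞) := by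
  rw [show ((2:WithTop ℕ∞)) = (((2:ℕ∞)):WithTop ℕ∞) by rfl]
  exact WithTop.coe_le_coe.mpr le_top

lemma one_le_top : (1 : WithTop ℕ∞) ≤ ((⊤:ℕ∞) : WithTop ℕ∞) := by
  rw [show ((1:WithTop ℕ∞)) = (((1:ℕ∞)):WithTop ℕ∞) by rfl]
  exact WithTop.coe_le_coe.mpr le_top

lemma sm_contDiffU {f : ℝ → ℝ → ℝ → ℝ} (hf : Smooth3 f) :
    ContDiff ℝ ((⊤:ℕ∞) : WithTop ℕ∞) (U f) := hf

lemma sm_diffU {f : ℝ → ℝ → ℝ → ℝ} (hf : Smooth3 f) : Differentiable ℝ (U f) :=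
  (sm_contDiffU hf).differentiable (by simp)

lemma sm_contU {f : ℝ → ℝ → ℝ → ℝ} (hf : Smooth3 f) : Continuous (U f) :=
  (sm_contDiffU hf).continuous

section slices
variable {f : ℝ → ℝ → ℝ → ℝ}

lemma hasDerivAt_slice_x (hf : Differentiable ℝ (U f)) (x y t : ℝ) :
    HasDerivAt (fun x' => f x' y t) (fderiv ℝ (U f) (x, y, t) (1, 0, 0)) x := by
  have h : HasDerivAt (fun x' : ℝ => ((x', y, t) : ℝ × ℝ × ℝ)) ((1:ℝ), (0:ℝ), (0:ℝ)) x :=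
    (hasDerivAt_id x).prodMk ((hasDerivAt_const x y).prodMk (hasDerivAt_const x t))
  exact ((hf (x, y, t)).hasFDerivAt.comp_hasDerivAt x h :)

lemma hasDerivAt_slice_y (hf : Differentiable ℝ (U f)) (x y t : ℝ) :
    HasDerivAt (fun y' => f x y' t) (fderiv ℝ (U f) (x, y, t) (0, 1, 0)) y := by
  have h : HasDerivAt (fun y' : ℝ => ((x, y', t) : ℝ × ℝ × ℝ)) ((0:ℝ), (1:ℝ), (0:ℝ)) y :=
    (hasDerivAt_const y x).prodMk ((hasDerivAt_id y).prodMk (hasDerivAt_const y t))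
  exact ((hf (x, y, t)).hasFDerivAt.comp_hasDerivAt y h :)

lemma hasDerivAt_slice_t (hf : Differentiable ℝ (U f)) (x y t : ℝ) :
    HasDerivAt (fun t' => f x y t') (fderiv ℝ (U f) (x, y, t) (0, 0, 1)) t := by
  have h : HasDerivAt (fun t' : ℝ => ((x, y, t') : ℝ × ℝ × ℝ)) ((0:ℝ), (0:ℝ), (1:ℝ)) t :=
    (hasDerivAt_const t x).prodMk ((hasDerivAt_const t y).prodMk (hasDerivAt_id t))
  exact ((hf (x, y, t)).hasFDerivAt.comp_hasDerivAt t h :)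

lemma hasDerivAt_px (hf : Differentiable ℝ (U f)) (x y t : ℝ) :
    HasDerivAt (fun x' => f x' y t) (px f x y t) x :=
  (hasDerivAt_slice_x hf x y t).differentiableAt.hasDerivAt

lemma hasDerivAt_py (hf : Differentiable ℝ (U f)) (x y t : ℝ) :
    HasDerivAt (fun y' => f x y' t) (py f x y t) y :=
  (hasDerivAt_slice_y hf x y t).differentiableAt.hasDerivAt

lemma hasDerivAt_pt (hf : Differentiable ℝ (U f)) (x y t : ℝ) :
    HasDerivAt (fun t' => f x y t') (pt f x y t) t :=
  (hasDerivAt_slice_t hf x y t).differentiableAt.hasDerivAt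

lemma px_eq (hf : Differentiable ℝ (U f)) (x y t : ℝ) :
    px f x y t = fderiv ℝ (U f) (x, y, t) (1, 0, 0) :=
  (hasDerivAt_slice_x hf x y t).deriv

lemma py_eq (hf : Differentiable ℝ (U f)) (x y t : ℝ) :
    py f x y t = fderiv ℝ (U f) (x, y, t) (0, 1, 0) :=
  (hasDerivAt_slice_y hf x y t).deriv

lemma pt_eq (hf : Differentiable ℝ (U f)) (x y t : ℝ) :
    pt f x y t = fderiv ℝ (U f) (x, y, t) (0, 0, 1) :=
  (hasDerivAt_slice_t hf x y t).deriv

end slices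

lemma smooth3_of_eq_fderiv {f : ℝ → ℝ → ℝ → ℝ} (hf : Smooth3 f) (v : ℝ × ℝ × ℝ)
    (g : ℝ → ℝ → ℝ → ℝ) (hg : ∀ x y t, g x y t = fderiv ℝ (U f) (x, y, t) v) :
    Smooth3 g := by
  have : (fun z : ℝ × ℝ × ℝ => g z.1 z.2.1 z.2.2) = fun z => fderiv ℝ (U f) z v := by
    funext z; rw [hg]
  rw [Smooth3, this]
  exact ((sm_contDiffU hf).fderiv_right top_add_one_le).clm_apply contDiff_const

lemma sm_px {f : ℝ → ℝ → ℝ → ℝ} (hf : Smooth3 f) : Smooth3 (px f) :=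
  smooth3_of_eq_fderiv hf _ _ (fun x y t => px_eq (sm_diffU hf) x y t)

lemma sm_py {f : ℝ → ℝ → ℝ → ℝ} (hf : Smooth3 f) : Smooth3 (py f) :=
  smooth3_of_eq_fderiv hf _ _ (fun x y t => py_eq (sm_diffU hf) x y t)

lemma sm_pt {f : ℝ → ℝ → ℝ → ℝ} (hf : Smooth3 f) : Smooth3 (pt f) :=
  smooth3_of_eq_fderiv hf _ _ (fun x y t => pt_eq (sm_diffU hf) x y t)

lemma clairaut {f : ℝ → ℝ → ℝ → ℝ} (hf : Smooth3 f) (x y t : ℝ) :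
    px (py f) x y t = py (px f) x y t := by
  have hdd : Differentiable ℝ (fderiv ℝ (U f)) :=
    ((sm_contDiffU hf).fderiv_right top_add_one_le).differentiable (by simp)
  have hsymm : IsSymmSndFDerivAt ℝ (U f) (x, y, t) :=
    (sm_contDiffU hf).contDiffAt.isSymmSndFDerivAt
      (by rw [minSmoothness_of_isRCLikeNormedField]; exact two_le_top)
  have e_py : (U (py f)) = fun z => (fderiv ℝ (U f) z) (0, 1, 0) := by
    funext z; exact py_eq (sm_diffU hf) z.1 z.2.1 z.2.2
  have e_px : (U (px f)) = fun z => (fderiv ℝ (U f) z) (1, 0, 0) := by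
    funext z; exact px_eq (sm_diffU hf) z.1 z.2.1 z.2.2
  have h1 : px (py f) x y t
      = fderiv ℝ (fun z => (fderiv ℝ (U f) z) (0, 1, 0)) (x, y, t) (1, 0, 0) := by
    rw [px_eq (sm_diffU (sm_py hf)) x y t, e_py]
  have h2 : py (px f) x y t
      = fderiv ℝ (fun z => (fderiv ℝ (U f) z) (1, 0, 0)) (x, y, t) (0, 1, 0) := by
    rw [py_eq (sm_diffU (sm_px hf)) x y t, e_px]
  have c1 : fderiv ℝ (fun z => (fderiv ℝ (U f) z) (0, 1, 0)) (x, y, t)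
      = ((fderiv ℝ (U f) (x, y, t)).comp (0 : (ℝ×ℝ×ℝ) →L[ℝ] (ℝ×ℝ×ℝ)))
        + (fderiv ℝ (fderiv ℝ (U f)) (x, y, t)).flip (0, 1, 0) := by
    simpa using fderiv_clm_apply (hdd (x, y, t)) (differentiableAt_const ((0:ℝ), (1:ℝ), (0:ℝ)))
  have c2 : fderiv ℝ (fun z => (fderiv ℝ (U f) z) (1, 0, 0)) (x, y, t)
      = ((fderiv ℝ (U f) (x, y, t)).comp (0 : (ℝ×ℝ×ℝ) →L[ℝ] (ℝ×ℝ×ℝ)))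
        + (fderiv ℝ (fderiv ℝ (U f)) (x, y, t)).flip (1, 0, 0) := by
    simpa using fderiv_clm_apply (hdd (x, y, t)) (differentiableAt_const ((1:ℝ), (0:ℝ), (0:ℝ)))
  rw [h1, h2, c1, c2]
  simp only [ContinuousLinearMap.add_apply, ContinuousLinearMap.comp_apply,
    ContinuousLinearMap.zero_apply, map_zero, ContinuousLinearMap.flip_apply]
  simpa using hsymm.eq (1, 0, 0) (0, 1, 0)

/-! ### The auxiliary fields -/

noncomputable def GG (F : ℝ → ℝ) : ℝ → ℝ := fun s => ∫ u in (0:ℝ)..s, F u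

noncomputable def HH (RS β : ℝ) (F : ℝ → ℝ) (ψb ψσ ψσ2 : ℝ → ℝ → ℝ → ℝ) :
    ℝ → ℝ → ℝ → ℝ :=
  fun x y t => xibar RS β ψb ψσ ψσ2 x y t * F (ψσ x y t - 2 / 3 * ψσ2 x y t)
    - (RS ^ 2)⁻¹ * GG F (ψσ x y t - 2 / 3 * ψσ2 x y t)

noncomputable def AA (RS β : ℝ) (F : ℝ → ℝ) (ψb ψσ ψσ2 : ℝ → ℝ → ℝ → ℝ) :
    ℝ → ℝ → ℝ → ℝ :=
  fun x y t => HH RS β F ψb ψσ ψσ2 x y t * py ψb x y t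

noncomputable def BB (RS β : ℝ) (F : ℝ → ℝ) (ψb ψσ ψσ2 : ℝ → ℝ → ℝ → ℝ) :
    ℝ → ℝ → ℝ → ℝ :=
  fun x y t => HH RS β F ψb ψσ ψσ2 x y t * px ψb x y t

lemma smooth3_xibar (RS β : ℝ) (ψb ψσ ψσ2 : ℝ → ℝ → ℝ → ℝ)
    (sψb : Smooth3 ψb) (sψσ : Smooth3 ψσ) (sψσ2 : Smooth3 ψσ2) :
    Smooth3 (xibar RS β ψb ψσ ψσ2) := by
  have h : (fun z : ℝ × ℝ × ℝ => xibar RS β ψb ψσ ψσ2 z.1 z.2.1 z.2.2)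
      = fun z => U (px (px ψb)) z + U (py (py ψb)) z
        - (RS ^ 2)⁻¹ * (U ψb z - U ψσ z + 2 / 3 * U ψσ2 z) + β * z.2.1 := rfl
  rw [Smooth3, h]
  apply ContDiff.add
  · apply ContDiff.sub
    · exact (sm_contDiffU (sm_px (sm_px sψb))).add (sm_contDiffU (sm_py (sm_py sψb)))
    · exact contDiff_const.mul (((sm_contDiffU sψb).sub (sm_contDiffU sψσ)).add
        (contDiff_const.mul (sm_contDiffU sψσ2)))
  · exact contDiff_const.mul contDiff_snd.fst

/-! ### Periodicity -/

lemma periodicX_px {L : ℝ} {f : ℝ → ℝ → ℝ → ℝ} (hf : PeriodicX L f) :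
    PeriodicX L (px f) := by
  intro x y t
  have hfun : (fun x' => f (x' + L) y t) = fun x' => f x' y t := by
    funext x'; exact hf x' y t
  calc px f (x + L) y t = deriv (fun x' => f (x' + L) y t) x := by
        rw [px]; exact (deriv_comp_add_const (fun x' => f x' y t) L x).symm
    _ = px f x y t := by rw [hfun, px]

lemma periodicX_py {L : ℝ} {f : ℝ → ℝ → ℝ → ℝ} (hf : PeriodicX L f) :
    PeriodicX L (py f) := by
  intro x y t
  have hfun : (fun y' => f (x + L) y' t) = fun y' => f x y' t := by
    funext y'; exact hf x y' t
  rw [py, py, hfun]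

lemma periodicX_pt {L : ℝ} {f : ℝ → ℝ → ℝ → ℝ} (hf : PeriodicX L f) :
    PeriodicX L (pt f) := by
  intro x y t
  have hfun : (fun t' => f (x + L) y t') = fun t' => f x y t' := by
    funext t'; exact hf x y t'
  rw [pt, pt, hfun]

lemma periodicX_xibar {L : ℝ} (RS β : ℝ) {ψb ψσ ψσ2 : ℝ → ℝ → ℝ → ℝ}
    (hperb : PeriodicX L ψb) (hperσ : PeriodicX L ψσ) (hperσ2 : PeriodicX L ψσ2) :
    PeriodicX L (xibar RS β ψb ψσ ψσ2) := by
  intro x y t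
  show px (px ψb) (x + L) y t + py (py ψb) (x + L) y t
      - (RS ^ 2)⁻¹ * (ψb (x + L) y t - ψσ (x + L) y t + 2 / 3 * ψσ2 (x + L) y t) + β * y
    = px (px ψb) x y t + py (py ψb) x y t
      - (RS ^ 2)⁻¹ * (ψb x y t - ψσ x y t + 2 / 3 * ψσ2 x y t) + β * y
  rw [periodicX_px (periodicX_px hperb) x y t, periodicX_py (periodicX_py hperb) x y t,
    hperb x y t, hperσ x y t, hperσ2 x y t]

lemma periodicX_AA {L : ℝ} (RS β : ℝ) (F : ℝ → ℝ) {ψb ψσ ψσ2 : ℝ → ℝ → ℝ → ℝ}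
    (hperb : PeriodicX L ψb) (hperσ : PeriodicX L ψσ) (hperσ2 : PeriodicX L ψσ2) :
    PeriodicX L (AA RS β F ψb ψσ ψσ2) := by
  intro x y t
  show HH RS β F ψb ψσ ψσ2 (x + L) y t * py ψb (x + L) y t
      = HH RS β F ψb ψσ ψσ2 x y t * py ψb x y t
  rw [show HH RS β F ψb ψσ ψσ2 (x + L) y t = HH RS β F ψb ψσ ψσ2 x y t by
    show xibar RS β ψb ψσ ψσ2 (x + L) y t * F (ψσ (x + L) y t - 2 / 3 * ψσ2 (x + L) y t)
        - (RS ^ 2)⁻¹ * GG F (ψσ (x + L) y t - 2 / 3 * ψσ2 (x + L) y t)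
      = xibar RS β ψb ψσ ψσ2 x y t * F (ψσ x y t - 2 / 3 * ψσ2 x y t)
        - (RS ^ 2)⁻¹ * GG F (ψσ x y t - 2 / 3 * ψσ2 x y t)
    rw [periodicX_xibar RS β hperb hperσ hperσ2 x y t, hperσ x y t, hperσ2 x y t],
    periodicX_py hperb x y t]

/-! ### C¹ regularity of the auxiliary fields -/

lemma contDiff1_GG {F : ℝ → ℝ} (hF : ContDiff ℝ 1 F) : ContDiff ℝ 1 (GG F) := by
  rw [contDiff_one_iff_deriv]
  have hd : ∀ s : ℝ, HasDerivAt (GG F) (F s) s :=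
    fun s => (hF.continuous.integral_hasStrictDerivAt 0 s).hasDerivAt
  refine ⟨fun s => (hd s).differentiableAt, ?_⟩
  have : deriv (GG F) = F := funext fun s => (hd s).deriv
  rw [this]; exact hF.continuous

lemma hasDerivAt_GG {F : ℝ → ℝ} (hF : ContDiff ℝ 1 F) (s : ℝ) :
    HasDerivAt (GG F) (F s) s :=
  (hF.continuous.integral_hasStrictDerivAt 0 s).hasDerivAt

section fields
variable (RS β : ℝ) (F : ℝ → ℝ) (ψb ψσ ψσ2 : ℝ → ℝ → ℝ → ℝ)

lemma contDiff1_q (sψσ : Smooth3 ψσ) (sψσ2 : Smooth3 ψσ2) :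
    ContDiff ℝ 1 (fun z : ℝ × ℝ × ℝ => ψσ z.1 z.2.1 z.2.2 - 2 / 3 * ψσ2 z.1 z.2.1 z.2.2) :=
  ((sm_contDiffU sψσ).of_le one_le_top).sub
    (contDiff_const.mul ((sm_contDiffU sψσ2).of_le one_le_top))

lemma contDiff1_HH (hF : ContDiff ℝ 1 F) (sψb : Smooth3 ψb) (sψσ : Smooth3 ψσ)
    (sψσ2 : Smooth3 ψσ2) : ContDiff ℝ 1 (U (HH RS β F ψb ψσ ψσ2)) := by
  have sξ := smooth3_xibar RS β ψb ψσ ψσ2 sψb sψσ sψσ2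
  exact (((sm_contDiffU sξ).of_le one_le_top).mul
      (hF.comp (contDiff1_q ψσ ψσ2 sψσ sψσ2))).sub
    (contDiff_const.mul ((contDiff1_GG hF).comp (contDiff1_q ψσ ψσ2 sψσ sψσ2)))

lemma contDiff1_AA (hF : ContDiff ℝ 1 F) (sψb : Smooth3 ψb) (sψσ : Smooth3 ψσ)
    (sψσ2 : Smooth3 ψσ2) : ContDiff ℝ 1 (U (AA RS β F ψb ψσ ψσ2)) :=
  (contDiff1_HH RS β F ψb ψσ ψσ2 hF sψb sψσ sψσ2).mul
    ((sm_contDiffU (sm_py sψb)).of_le one_le_top)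

lemma contDiff1_BB (hF : ContDiff ℝ 1 F) (sψb : Smooth3 ψb) (sψσ : Smooth3 ψσ)
    (sψσ2 : Smooth3 ψσ2) : ContDiff ℝ 1 (U (BB RS β F ψb ψσ ψσ2)) :=
  (contDiff1_HH RS β F ψb ψσ ψσ2 hF sψb sψσ sψσ2).mul
    ((sm_contDiffU (sm_px sψb)).of_le one_le_top)

end fields

lemma cont_px_of_C1 {f : ℝ → ℝ → ℝ → ℝ} (h : ContDiff ℝ 1 (U f)) :
    Continuous (U (px f)) := by
  have e : U (px f) = fun z => fderiv ℝ (U f) z (1, 0, 0) :=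
    funext fun z => px_eq (h.differentiable one_ne_zero) z.1 z.2.1 z.2.2
  rw [e]
  exact (ContinuousLinearMap.apply ℝ ℝ ((1, 0, 0) : ℝ × ℝ × ℝ)).continuous.comp
    (h.continuous_fderiv one_ne_zero)

lemma cont_py_of_C1 {f : ℝ → ℝ → ℝ → ℝ} (h : ContDiff ℝ 1 (U f)) :
    Continuous (U (py f)) := by
  have e : U (py f) = fun z => fderiv ℝ (U f) z (0, 1, 0) :=
    funext fun z => py_eq (h.differentiable one_ne_zero) z.1 z.2.1 z.2.2
  rw [e]
  exact (ContinuousLinearMap.apply ℝ ℝ ((0, 1, 0) : ℝ × ℝ × ℝ)).continuous.comp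
    (h.continuous_fderiv one_ne_zero)


/-! ### The key pointwise identity -/

lemma key_hasDerivAt (RS β : ℝ) (F : ℝ → ℝ) (hF : ContDiff ℝ 1 F)
    (ψb ψσ ψσ2 : ℝ → ℝ → ℝ → ℝ)
    (sψb : Smooth3 ψb) (sψσ : Smooth3 ψσ) (sψσ2 : Smooth3 ψσ2)
    (x y t : ℝ)
    (h1 : pt (xibar RS β ψb ψσ ψσ2) x y t
      + jac ψb (fun x' y' t' => xibar RS β ψb ψσ ψσ2 x' y' t'
          - (RS ^ 2)⁻¹ * (ψσ x' y' t' - 2 / 3 * ψσ2 x' y' t')) x y t = 0)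
    (h2 : pt ψσ x y t + jac ψb ψσ x y t = 0)
    (h3 : pt ψσ2 x y t + jac ψb ψσ2 x y t = 0) :
    HasDerivAt (fun t' => xibar RS β ψb ψσ ψσ2 x y t' * F (ψσ x y t' - 2 / 3 * ψσ2 x y t'))
      (px (AA RS β F ψb ψσ ψσ2) x y t - py (BB RS β F ψb ψσ ψσ2) x y t) t := by
  have sξ : Smooth3 (xibar RS β ψb ψσ ψσ2) := smooth3_xibar RS β ψb ψσ ψσ2 sψb sψσ sψσ2
  have hFd : ∀ s : ℝ, HasDerivAt F (deriv F s) s :=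
    fun s => (hF.differentiable one_ne_zero s).hasDerivAt
  have hGd : ∀ s : ℝ, HasDerivAt (GG F) (F s) s := hasDerivAt_GG hF
  set Q : ℝ := ψσ x y t - 2 / 3 * ψσ2 x y t with hQdef
  -- slices of q
  have hqx : HasDerivAt (fun x' => ψσ x' y t - 2 / 3 * ψσ2 x' y t)
      (px ψσ x y t - 2 / 3 * px ψσ2 x y t) x :=
    (hasDerivAt_px (sm_diffU sψσ) x y t).sub
      (HasDerivAt.const_mul (2 / 3 : ℝ) (hasDerivAt_px (sm_diffU sψσ2) x y t))
  have hqy : HasDerivAt (fun y' => ψσ x y' t - 2 / 3 * ψσ2 x y' t)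
      (py ψσ x y t - 2 / 3 * py ψσ2 x y t) y :=
    (hasDerivAt_py (sm_diffU sψσ) x y t).sub
      (HasDerivAt.const_mul (2 / 3 : ℝ) (hasDerivAt_py (sm_diffU sψσ2) x y t))
  have hqt : HasDerivAt (fun t' => ψσ x y t' - 2 / 3 * ψσ2 x y t')
      (pt ψσ x y t - 2 / 3 * pt ψσ2 x y t) t :=
    (hasDerivAt_pt (sm_diffU sψσ) x y t).sub
      (HasDerivAt.const_mul (2 / 3 : ℝ) (hasDerivAt_pt (sm_diffU sψσ2) x y t))
  -- slices of H
  have hHx : HasDerivAt (fun x' => HH RS β F ψb ψσ ψσ2 x' y t)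
      (px (xibar RS β ψb ψσ ψσ2) x y t * F Q
        + xibar RS β ψb ψσ ψσ2 x y t * (deriv F Q * (px ψσ x y t - 2 / 3 * px ψσ2 x y t))
        - (RS ^ 2)⁻¹ * (F Q * (px ψσ x y t - 2 / 3 * px ψσ2 x y t))) x :=
    ((hasDerivAt_px (sm_diffU sξ) x y t).mul ((hFd Q).comp x hqx)).sub
      (HasDerivAt.const_mul ((RS ^ 2)⁻¹) (by have := (hGd Q).comp x hqx; exact this))
  have hHy : HasDerivAt (fun y' => HH RS β F ψb ψσ ψσ2 x y' t)
      (py (xibar RS β ψb ψσ ψσ2) x y t * F Q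
        + xibar RS β ψb ψσ ψσ2 x y t * (deriv F Q * (py ψσ x y t - 2 / 3 * py ψσ2 x y t))
        - (RS ^ 2)⁻¹ * (F Q * (py ψσ x y t - 2 / 3 * py ψσ2 x y t))) y :=
    ((hasDerivAt_py (sm_diffU sξ) x y t).mul ((hFd Q).comp y hqy)).sub
      (HasDerivAt.const_mul ((RS ^ 2)⁻¹) (by have := (hGd Q).comp y hqy; exact this))
  -- slice of A in x, of B in y
  have hAx : HasDerivAt (fun x' => AA RS β F ψb ψσ ψσ2 x' y t)
      ((px (xibar RS β ψb ψσ ψσ2) x y t * F Q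
        + xibar RS β ψb ψσ ψσ2 x y t * (deriv F Q * (px ψσ x y t - 2 / 3 * px ψσ2 x y t))
        - (RS ^ 2)⁻¹ * (F Q * (px ψσ x y t - 2 / 3 * px ψσ2 x y t))) * py ψb x y t
        + HH RS β F ψb ψσ ψσ2 x y t * px (py ψb) x y t) x :=
    hHx.mul (hasDerivAt_px (sm_diffU (sm_py sψb)) x y t)
  have hBy : HasDerivAt (fun y' => BB RS β F ψb ψσ ψσ2 x y' t)
      ((py (xibar RS β ψb ψσ ψσ2) x y t * F Q
        + xibar RS β ψb ψσ ψσ2 x y t * (deriv F Q * (py ψσ x y t - 2 / 3 * py ψσ2 x y t))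
        - (RS ^ 2)⁻¹ * (F Q * (py ψσ x y t - 2 / 3 * py ψσ2 x y t))) * px ψb x y t
        + HH RS β F ψb ψσ ψσ2 x y t * py (px ψb) x y t) y :=
    hHy.mul (hasDerivAt_py (sm_diffU (sm_px sψb)) x y t)
  have epxA : px (AA RS β F ψb ψσ ψσ2) x y t
      = (px (xibar RS β ψb ψσ ψσ2) x y t * F Q
        + xibar RS β ψb ψσ ψσ2 x y t * (deriv F Q * (px ψσ x y t - 2 / 3 * px ψσ2 x y t))
        - (RS ^ 2)⁻¹ * (F Q * (px ψσ x y t - 2 / 3 * px ψσ2 x y t))) * py ψb x y t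
        + HH RS β F ψb ψσ ψσ2 x y t * px (py ψb) x y t := hAx.deriv
  have epyB : py (BB RS β F ψb ψσ ψσ2) x y t
      = (py (xibar RS β ψb ψσ ψσ2) x y t * F Q
        + xibar RS β ψb ψσ ψσ2 x y t * (deriv F Q * (py ψσ x y t - 2 / 3 * py ψσ2 x y t))
        - (RS ^ 2)⁻¹ * (F Q * (py ψσ x y t - 2 / 3 * py ψσ2 x y t))) * px ψb x y t
        + HH RS β F ψb ψσ ψσ2 x y t * py (px ψb) x y t := hBy.deriv
  -- slice of the integrand in t
  have hΦt : HasDerivAt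
      (fun t' => xibar RS β ψb ψσ ψσ2 x y t' * F (ψσ x y t' - 2 / 3 * ψσ2 x y t'))
      (pt (xibar RS β ψb ψσ ψσ2) x y t * F Q
        + xibar RS β ψb ψσ ψσ2 x y t * (deriv F Q * (pt ψσ x y t - 2 / 3 * pt ψσ2 x y t))) t :=
    (hasDerivAt_pt (sm_diffU sξ) x y t).mul ((hFd Q).comp t hqt)
  -- rewrite the equations
  have hξ'x : HasDerivAt (fun x' => xibar RS β ψb ψσ ψσ2 x' y t
        - (RS ^ 2)⁻¹ * (ψσ x' y t - 2 / 3 * ψσ2 x' y t))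
      (px (xibar RS β ψb ψσ ψσ2) x y t
        - (RS ^ 2)⁻¹ * (px ψσ x y t - 2 / 3 * px ψσ2 x y t)) x :=
    (hasDerivAt_px (sm_diffU sξ) x y t).sub (HasDerivAt.const_mul ((RS ^ 2)⁻¹) hqx)
  have hξ'y : HasDerivAt (fun y' => xibar RS β ψb ψσ ψσ2 x y' t
        - (RS ^ 2)⁻¹ * (ψσ x y' t - 2 / 3 * ψσ2 x y' t))
      (py (xibar RS β ψb ψσ ψσ2) x y t
        - (RS ^ 2)⁻¹ * (py ψσ x y t - 2 / 3 * py ψσ2 x y t)) y :=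
    (hasDerivAt_py (sm_diffU sξ) x y t).sub (HasDerivAt.const_mul ((RS ^ 2)⁻¹) hqy)
  have e1x : px (fun x' y' t' => xibar RS β ψb ψσ ψσ2 x' y' t'
        - (RS ^ 2)⁻¹ * (ψσ x' y' t' - 2 / 3 * ψσ2 x' y' t')) x y t
      = px (xibar RS β ψb ψσ ψσ2) x y t
        - (RS ^ 2)⁻¹ * (px ψσ x y t - 2 / 3 * px ψσ2 x y t) := hξ'x.deriv
  have e1y : py (fun x' y' t' => xibar RS β ψb ψσ ψσ2 x' y' t'
        - (RS ^ 2)⁻¹ * (ψσ x' y' t' - 2 / 3 * ψσ2 x' y' t')) x y t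
      = py (xibar RS β ψb ψσ ψσ2) x y t
        - (RS ^ 2)⁻¹ * (py ψσ x y t - 2 / 3 * py ψσ2 x y t) := hξ'y.deriv
  have hcl : px (py ψb) x y t = py (px ψb) x y t := clairaut sψb x y t
  simp only [jac] at h1 h2 h3
  rw [e1x, e1y] at h1
  have goalEq : pt (xibar RS β ψb ψσ ψσ2) x y t * F Q
        + xibar RS β ψb ψσ ψσ2 x y t * (deriv F Q * (pt ψσ x y t - 2 / 3 * pt ψσ2 x y t))
      = px (AA RS β F ψb ψσ ψσ2) x y t - py (BB RS β F ψb ψσ ψσ2) x y t := by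
    rw [epxA, epyB]
    linear_combination (F Q) * h1
      + (xibar RS β ψb ψσ ψσ2 x y t * deriv F Q) * h2
      + (-2 / 3 * (xibar RS β ψb ψσ ψσ2 x y t * deriv F Q)) * h3
      + (-(HH RS β F ψb ψσ ψσ2 x y t)) * hcl
  exact goalEq ▸ hΦt

/-! ### Fubini for continuous functions on rectangles -/

lemma swap_le {f : ℝ → ℝ → ℝ} (hf : Continuous (Function.uncurry f))
    {a b c d : ℝ} (hab : a ≤ b) (hcd : c ≤ d) :
    (∫ x in a..b, ∫ y in c..d, f x y) = ∫ y in c..d, ∫ x in a..b, f x y := by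
  have hint : Integrable (Function.uncurry f)
      ((volume.restrict (Set.Ioc a b)).prod (volume.restrict (Set.Ioc c d))) := by
    rw [Measure.prod_restrict, ← Measure.volume_eq_prod]
    exact ((hf.continuousOn).integrableOn_compact
      (isCompact_Icc.prod isCompact_Icc)).mono_set
      (Set.prod_mono Set.Ioc_subset_Icc_self Set.Ioc_subset_Icc_self)
  rw [intervalIntegral.integral_of_le hab, intervalIntegral.integral_of_le hcd]
  simp_rw [intervalIntegral.integral_of_le hcd, intervalIntegral.integral_of_le hab]
  exact MeasureTheory.integral_integral_swap hint

lemma swap_all {f : ℝ → ℝ → ℝ} (hf : Continuous (Function.uncurry f))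
    (a b c d : ℝ) :
    (∫ x in a..b, ∫ y in c..d, f x y) = ∫ y in c..d, ∫ x in a..b, f x y := by
  rcases le_total a b with hab | hab <;> rcases le_total c d with hcd | hcd
  · exact swap_le hf hab hcd
  · have e : ∀ x : ℝ, (∫ y in c..d, f x y) = -∫ y in d..c, f x y :=
      fun x => intervalIntegral.integral_symm d c
    calc (∫ x in a..b, ∫ y in c..d, f x y)
        = ∫ x in a..b, -∫ y in d..c, f x y := by simp only [e]
      _ = -∫ x in a..b, ∫ y in d..c, f x y := intervalIntegral.integral_neg
      _ = -∫ y in d..c, ∫ x in a..b, f x y := by rw [swap_le hf hab hcd]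
      _ = ∫ y in c..d, ∫ x in a..b, f x y := (intervalIntegral.integral_symm d c).symm
  · have e : ∀ y : ℝ, (∫ x in a..b, f x y) = -∫ x in b..a, f x y :=
      fun y => intervalIntegral.integral_symm b a
    calc (∫ x in a..b, ∫ y in c..d, f x y)
        = -∫ x in b..a, ∫ y in c..d, f x y := intervalIntegral.integral_symm b a
      _ = -∫ y in c..d, ∫ x in b..a, f x y := by rw [swap_le hf hab hcd]
      _ = ∫ y in c..d, -∫ x in b..a, f x y := intervalIntegral.integral_neg.symm
      _ = ∫ y in c..d, ∫ x in a..b, f x y := by simp only [e]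
  · have e : ∀ x : ℝ, (∫ y in c..d, f x y) = -∫ y in d..c, f x y :=
      fun x => intervalIntegral.integral_symm d c
    have e' : ∀ y : ℝ, (∫ x in a..b, f x y) = -∫ x in b..a, f x y :=
      fun y => intervalIntegral.integral_symm b a
    calc (∫ x in a..b, ∫ y in c..d, f x y)
        = ∫ x in a..b, -∫ y in d..c, f x y := by simp only [e]
      _ = -∫ x in a..b, ∫ y in d..c, f x y := intervalIntegral.integral_neg
      _ = -(-∫ x in b..a, ∫ y in d..c, f x y) := by
            rw [← intervalIntegral.integral_symm b a]
      _ = -(-∫ y in d..c, ∫ x in b..a, f x y) := by rw [swap_le hf hab hcd]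
      _ = ∫ y in d..c, ∫ x in b..a, f x y := neg_neg _
      _ = -∫ y in c..d, ∫ x in b..a, f x y := intervalIntegral.integral_symm c d
      _ = ∫ y in c..d, -∫ x in b..a, f x y := intervalIntegral.integral_neg.symm
      _ = ∫ y in c..d, ∫ x in a..b, f x y := by simp only [e']

lemma contSliceX {g : ℝ → ℝ → ℝ → ℝ} (h : Continuous (U g)) (y t : ℝ) :
    Continuous fun x => g x y t :=
  h.comp (continuous_id.prodMk (continuous_const.prodMk continuous_const))

lemma contSliceY {g : ℝ → ℝ → ℝ → ℝ} (h : Continuous (U g)) (x t : ℝ) :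
    Continuous fun y => g x y t :=
  h.comp (continuous_const.prodMk (continuous_id.prodMk continuous_const))

lemma contSliceT {g : ℝ → ℝ → ℝ → ℝ} (h : Continuous (U g)) (x y : ℝ) :
    Continuous fun t => g x y t :=
  h.comp (continuous_const.prodMk (continuous_const.prodMk continuous_id))

end NC

set_option maxHeartbeats 1000000 in
open NC in
/-- Lemma 1 of the paper: the non-Casimir integrals of motion
`∫∫ ξ̄ F(ψσ − (2/3)ψσ²)` are conserved, for every `C¹` function `F : ℝ → ℝ`,
along smooth `x`-periodic solutions of the IL⁽⁰'¹⁾QG equations satisfying the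
no-normal-flow boundary condition. -/
theorem nonCasimir_integral_conserved
    (L W β RS : ℝ) (hL : 0 < L) (hW : 0 < W) (hRS : 0 < RS)
    (ψb ψσ ψσ2 : ℝ → ℝ → ℝ → ℝ)
    (hψb : Smooth3 ψb) (hψσ : Smooth3 ψσ) (hψσ2 : Smooth3 ψσ2)
    (hperb : PeriodicX L ψb) (hperσ : PeriodicX L ψσ) (hperσ2 : PeriodicX L ψσ2)
    (heqs : IL01QG RS β W ψb ψσ ψσ2)
    (hbc : NoNormalFlow W ψb)
    (F : ℝ → ℝ) (hF : ContDiff ℝ 1 F) :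
    ∀ t₁ t₂ : ℝ,
      (∫ y in (0:ℝ)..W, ∫ x in (0:ℝ)..L,
        xibar RS β ψb ψσ ψσ2 x y t₁ * F (ψσ x y t₁ - 2 / 3 * ψσ2 x y t₁))
      = ∫ y in (0:ℝ)..W, ∫ x in (0:ℝ)..L,
        xibar RS β ψb ψσ ψσ2 x y t₂ * F (ψσ x y t₂ - 2 / 3 * ψσ2 x y t₂) := by
  intro t₁ t₂
  have sξ : Smooth3 (xibar RS β ψb ψσ ψσ2) := smooth3_xibar RS β ψb ψσ ψσ2 hψb hψσ hψσ2
  set Φ : ℝ → ℝ → ℝ → ℝ :=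
    fun x y t => xibar RS β ψb ψσ ψσ2 x y t * F (ψσ x y t - 2 / 3 * ψσ2 x y t) with hΦdef
  set Ax : ℝ → ℝ → ℝ → ℝ := AA RS β F ψb ψσ ψσ2 with hAdef
  set Bx : ℝ → ℝ → ℝ → ℝ := BB RS β F ψb ψσ ψσ2 with hBdef
  show (∫ y in (0:ℝ)..W, ∫ x in (0:ℝ)..L, Φ x y t₁)
      = ∫ y in (0:ℝ)..W, ∫ x in (0:ℝ)..L, Φ x y t₂
  -- continuity facts
  have hq1 := contDiff1_q ψσ ψσ2 hψσ hψσ2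
  have hcΦ : Continuous (U Φ) := (sm_contU sξ).mul (hF.continuous.comp hq1.continuous)
  have hA1 : ContDiff ℝ 1 (U Ax) := contDiff1_AA RS β F ψb ψσ ψσ2 hF hψb hψσ hψσ2
  have hB1 : ContDiff ℝ 1 (U Bx) := contDiff1_BB RS β F ψb ψσ ψσ2 hF hψb hψσ hψσ2
  have hcpxA : Continuous (U (px Ax)) := cont_px_of_C1 hA1
  have hcpyB : Continuous (U (py Bx)) := cont_py_of_C1 hB1
  have hcD : Continuous (U (fun x y t => px Ax x y t - py Bx x y t)) := hcpxA.sub hcpyB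
  -- FTC in x : the `A`-term integrates to zero by periodicity
  have hftcx : ∀ y t : ℝ, (∫ x in (0:ℝ)..L, px Ax x y t) = 0 := by
    intro y t
    have hper : PeriodicX L Ax := periodicX_AA RS β F hperb hperσ hperσ2
    rw [intervalIntegral.integral_eq_sub_of_hasDerivAt
      (fun x _ => hasDerivAt_px (hA1.differentiable one_ne_zero) x y t)
      ((contSliceX hcpxA y t).intervalIntegrable 0 L)]
    have h0 := hper 0 y t
    rw [zero_add] at h0
    rw [h0, sub_self]
  -- FTC in y : the `B`-term integrates to zero by the boundary condition
  have hftcy : ∀ x t : ℝ, (∫ y in (0:ℝ)..W, py Bx x y t) = 0 := by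
    intro x t
    rw [intervalIntegral.integral_eq_sub_of_hasDerivAt
      (fun y _ => hasDerivAt_py (hB1.differentiable one_ne_zero) x y t)
      ((contSliceY hcpyB x t).intervalIntegrable 0 W)]
    have eW : Bx x W t = 0 := by
      show HH RS β F ψb ψσ ψσ2 x W t * px ψb x W t = 0
      rw [(hbc x t).2, mul_zero]
    have e0 : Bx x 0 t = 0 := by
      show HH RS β F ψb ψσ ψσ2 x 0 t * px ψb x 0 t = 0
      rw [(hbc x t).1, mul_zero]
    rw [eW, e0, sub_zero]
  clear_value Φ Ax Bx
  -- parametric continuity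
  have hcInt1 : ∀ t : ℝ, Continuous (fun y => ∫ x in (0:ℝ)..L, Φ x y t) := by
    intro t
    exact intervalIntegral.continuous_parametric_intervalIntegral_of_continuous'
      (f := fun (y : ℝ) (x : ℝ) => Φ x y t)
      (hcΦ.comp (continuous_snd.prodMk (continuous_fst.prodMk continuous_const))) 0 L
  have hcK : Continuous (fun p : ℝ × ℝ => ∫ x in (0:ℝ)..L, py Bx x p.1 p.2) :=
    intervalIntegral.continuous_parametric_intervalIntegral_of_continuous'
      (f := fun (p : ℝ × ℝ) (x : ℝ) => py Bx x p.1 p.2)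
      (hcpyB.comp (continuous_snd.prodMk
        ((continuous_fst.fst).prodMk (continuous_fst.snd)))) 0 L
  -- inner computation for fixed y in the channel
  have step_inner : ∀ y ∈ Set.uIcc (0:ℝ) W,
      (∫ x in (0:ℝ)..L, Φ x y t₂) - (∫ x in (0:ℝ)..L, Φ x y t₁)
        = ∫ t in t₁..t₂, -∫ x in (0:ℝ)..L, py Bx x y t := by
    intro y hy
    have hy' : y ∈ Set.Icc (0:ℝ) W := by rwa [Set.uIcc_of_le hW.le] at hy
    have hFTCt : ∀ x : ℝ,
        Φ x y t₂ - Φ x y t₁ = ∫ t in t₁..t₂, (px Ax x y t - py Bx x y t) := by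
      intro x
      have hkey : ∀ t' : ℝ, HasDerivAt (fun t'' => Φ x y t'')
          (px Ax x y t' - py Bx x y t') t' := by
        intro t'
        have hk := key_hasDerivAt RS β F hF ψb ψσ ψσ2 hψb hψσ hψσ2 x y t'
          (heqs x t' y hy').1 (heqs x t' y hy').2.1 (heqs x t' y hy').2.2
        rw [← hAdef, ← hBdef] at hk
        rw [show (fun t'' => xibar RS β ψb ψσ ψσ2 x y t''
              * F (ψσ x y t'' - 2 / 3 * ψσ2 x y t'')) = fun t'' => Φ x y t'' by
            funext u; rw [hΦdef]] at hk
        exact hk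
      rw [intervalIntegral.integral_eq_sub_of_hasDerivAt
        (fun t _ => hkey t)
        ((contSliceT hcD x y).intervalIntegrable t₁ t₂)]
    calc (∫ x in (0:ℝ)..L, Φ x y t₂) - ∫ x in (0:ℝ)..L, Φ x y t₁
        = ∫ x in (0:ℝ)..L, (Φ x y t₂ - Φ x y t₁) :=
          (intervalIntegral.integral_sub
            ((contSliceX hcΦ y t₂).intervalIntegrable 0 L)
            ((contSliceX hcΦ y t₁).intervalIntegrable 0 L)).symm
      _ = ∫ x in (0:ℝ)..L, ∫ t in t₁..t₂, (px Ax x y t - py Bx x y t) :=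
          intervalIntegral.integral_congr (fun x _ => hFTCt x)
      _ = ∫ t in t₁..t₂, ∫ x in (0:ℝ)..L, (px Ax x y t - py Bx x y t) :=
          swap_all (f := fun x t => px Ax x y t - py Bx x y t)
            (hcD.comp (continuous_fst.prodMk
              (continuous_const.prodMk continuous_snd))) 0 L t₁ t₂
      _ = ∫ t in t₁..t₂, -∫ x in (0:ℝ)..L, py Bx x y t := by
          apply intervalIntegral.integral_congr
          intro t _
          show (∫ x in (0:ℝ)..L, (px Ax x y t - py Bx x y t))
              = -∫ x in (0:ℝ)..L, py Bx x y t
          rw [intervalIntegral.integral_sub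
            ((contSliceX hcpxA y t).intervalIntegrable 0 L)
            ((contSliceX hcpyB y t).intervalIntegrable 0 L),
            hftcx y t, zero_sub]
  -- assemble
  have big : (∫ y in (0:ℝ)..W, ∫ x in (0:ℝ)..L, Φ x y t₂)
      - (∫ y in (0:ℝ)..W, ∫ x in (0:ℝ)..L, Φ x y t₁) = 0 := by
    rw [← intervalIntegral.integral_sub
      ((hcInt1 t₂).intervalIntegrable 0 W) ((hcInt1 t₁).intervalIntegrable 0 W)]
    rw [intervalIntegral.integral_congr step_inner]
    rw [swap_all (f := fun y t => -∫ x in (0:ℝ)..L, py Bx x y t)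
      (hcK.neg) 0 W t₁ t₂]
    have hzero : ∀ t : ℝ, (∫ y in (0:ℝ)..W, -∫ x in (0:ℝ)..L, py Bx x y t) = 0 := by
      intro t
      rw [intervalIntegral.integral_neg]
      rw [swap_all (f := fun y x => py Bx x y t)
        (hcpyB.comp (continuous_snd.prodMk
          (continuous_fst.prodMk continuous_const))) 0 W 0 L]
      simp only [hftcy, intervalIntegral.integral_zero, neg_zero]
    rw [intervalIntegral.integral_congr (fun t (_ : t ∈ Set.uIcc t₁ t₂) => hzero t)]
    simp
  linarith [big]
end

section
/- Suppose (ψ̄, ψσ, ψσ²) is a smooth solution of the IL^(0,1)QG equations on ℝ × [0,W] × ℝ, with all three fields L-periodic in x and the no-normal-flow boundary condition satisfied. Then the zonal momentum M(t) := ∫₀ᵂ ∫₀ᴸ y ξ̄(x,y,t) dx dy is constant in time. -/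
section ZonalMomentumAux

variable {f g : ℝ → ℝ → ℝ → ℝ} {x y t : ℝ}


noncomputable def unc (f : ℝ → ℝ → ℝ → ℝ) : ℝ × ℝ × ℝ → ℝ := fun z => f z.1 z.2.1 z.2.2

noncomputable def Pd (v : ℝ × ℝ × ℝ) (f : ℝ → ℝ → ℝ → ℝ) : ℝ → ℝ → ℝ → ℝ :=
  fun x y t => fderiv ℝ (unc f) (x, y, t) v

lemma Smooth3.unc' (hf : Smooth3 f) : ContDiff ℝ (⊤ : ℕ∞) (unc f) := hf

lemma one_le_top' : (1 : WithTop ℕ∞) ≤ ((⊤ : ℕ∞) : WithTop ℕ∞) := by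
  exact_mod_cast le_top

lemma top_add_one_le : ((⊤ : ℕ∞) : WithTop ℕ∞) + 1 ≤ ((⊤ : ℕ∞) : WithTop ℕ∞) := by
  simp

lemma hasDerivAt_sx (hf : Smooth3 f) : HasDerivAt (fun x' => f x' y t) (Pd (1,0,0) f x y t) x := by
  have h := (hf.unc'.differentiable (by simp) (x, y, t)).hasFDerivAt
  have hl : HasDerivAt (fun x' : ℝ => ((x', y, t) : ℝ × ℝ × ℝ)) (1, 0, 0) x :=
    (hasDerivAt_id x).prodMk (hasDerivAt_const x (y, t))
  exact h.comp_hasDerivAt x hl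

lemma hasDerivAt_sy (hf : Smooth3 f) : HasDerivAt (fun y' => f x y' t) (Pd (0,1,0) f x y t) y := by
  have h := (hf.unc'.differentiable (by simp) (x, y, t)).hasFDerivAt
  have hl : HasDerivAt (fun y' : ℝ => ((x, y', t) : ℝ × ℝ × ℝ)) (0, 1, 0) y :=
    (hasDerivAt_const y x).prodMk ((hasDerivAt_id y).prodMk (hasDerivAt_const y t))
  exact h.comp_hasDerivAt y hl

lemma hasDerivAt_st (hf : Smooth3 f) : HasDerivAt (fun t' => f x y t') (Pd (0,0,1) f x y t) t := by
  have h := (hf.unc'.differentiable (by simp) (x, y, t)).hasFDerivAt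
  have hl : HasDerivAt (fun t' : ℝ => ((x, y, t') : ℝ × ℝ × ℝ)) (0, 0, 1) t :=
    (hasDerivAt_const t x).prodMk ((hasDerivAt_const t y).prodMk (hasDerivAt_id t))
  exact h.comp_hasDerivAt t hl

lemma px_eq (hf : Smooth3 f) : px f = Pd (1,0,0) f :=
  funext fun x => funext fun y => funext fun t => (hasDerivAt_sx hf).deriv

lemma py_eq (hf : Smooth3 f) : py f = Pd (0,1,0) f :=
  funext fun x => funext fun y => funext fun t => (hasDerivAt_sy hf).deriv

lemma pt_eq (hf : Smooth3 f) : pt f = Pd (0,0,1) f :=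
  funext fun x => funext fun y => funext fun t => (hasDerivAt_st hf).deriv

lemma Smooth3.pd (hf : Smooth3 f) (v : ℝ × ℝ × ℝ) : Smooth3 (Pd v f) :=
  (hf.unc'.fderiv_right top_add_one_le).clm_apply contDiff_const

lemma Smooth3.px (hf : Smooth3 f) : Smooth3 (px f) := (px_eq hf) ▸ hf.pd _
lemma Smooth3.py (hf : Smooth3 f) : Smooth3 (py f) := (py_eq hf) ▸ hf.pd _
lemma Smooth3.pt (hf : Smooth3 f) : Smooth3 (pt f) := (pt_eq hf) ▸ hf.pd _

lemma pd_comm (hf : Smooth3 f) (v w : ℝ × ℝ × ℝ) : Pd v (Pd w f) = Pd w (Pd v f) := by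
  funext x y t
  have hd : ∀ u, HasFDerivAt (unc f) (fderiv ℝ (unc f) u) u := fun u =>
    (hf.unc'.differentiable (by simp) u).hasFDerivAt
  have hA : HasFDerivAt (fderiv ℝ (unc f)) (fderiv ℝ (fderiv ℝ (unc f)) (x,y,t)) (x,y,t) :=
    (((hf.unc'.fderiv_right top_add_one_le).differentiable (by simp)) (x,y,t)).hasFDerivAt
  have hsymm := second_derivative_symmetric hd hA v w
  have h1 : ∀ w v : ℝ × ℝ × ℝ, fderiv ℝ (fun u => fderiv ℝ (unc f) u w) (x,y,t) v
      = fderiv ℝ (fderiv ℝ (unc f)) (x,y,t) v w := by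
    intro w v
    have h2 : HasFDerivAt (fun u => fderiv ℝ (unc f) u w)
        ((ContinuousLinearMap.apply ℝ ℝ w).comp (fderiv ℝ (fderiv ℝ (unc f)) (x,y,t))) (x,y,t) :=
      ((ContinuousLinearMap.apply ℝ ℝ w).hasFDerivAt).comp (x,y,t) hA
    rw [h2.fderiv]; rfl
  show fderiv ℝ (unc (Pd w f)) (x,y,t) v = fderiv ℝ (unc (Pd v f)) (x,y,t) w
  calc fderiv ℝ (unc (Pd w f)) (x,y,t) v
      = fderiv ℝ (fun u => fderiv ℝ (unc f) u w) (x,y,t) v := rfl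
    _ = fderiv ℝ (fderiv ℝ (unc f)) (x,y,t) v w := h1 w v
    _ = fderiv ℝ (fderiv ℝ (unc f)) (x,y,t) w v := hsymm
    _ = fderiv ℝ (fun u => fderiv ℝ (unc f) u v) (x,y,t) w := (h1 v w).symm
    _ = fderiv ℝ (unc (Pd v f)) (x,y,t) w := rfl

lemma pxy_comm (hf : Smooth3 f) : px (py f) = py (px f) := by
  rw [py_eq hf, px_eq (hf.pd _), px_eq hf, py_eq (hf.pd _), pd_comm hf]


lemma Smooth3.hdx (hf : Smooth3 f) : HasDerivAt (fun x' => f x' y t) (_root_.px f x y t) x := by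
  rw [px_eq hf]; exact hasDerivAt_sx hf

lemma Smooth3.hdy (hf : Smooth3 f) : HasDerivAt (fun y' => f x y' t) (_root_.py f x y t) y := by
  rw [py_eq hf]; exact hasDerivAt_sy hf

lemma Smooth3.hdt (hf : Smooth3 f) : HasDerivAt (fun t' => f x y t') (_root_.pt f x y t) t := by
  rw [pt_eq hf]; exact hasDerivAt_st hf

lemma Smooth3.cont (hf : Smooth3 f) : Continuous (fun z : ℝ × ℝ × ℝ => f z.1 z.2.1 z.2.2) :=
  hf.unc'.continuous

lemma Smooth3.contx (hf : Smooth3 f) : Continuous (fun x' => f x' y t) :=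
  hf.cont.comp (continuous_id.prodMk (continuous_const.prodMk continuous_const))

lemma Smooth3.conty (hf : Smooth3 f) : Continuous (fun y' => f x y' t) :=
  hf.cont.comp (continuous_const.prodMk (continuous_id.prodMk continuous_const))


lemma pxx_eq' (f : ℝ → ℝ → ℝ → ℝ) : pxx f = px (px f) := rfl
lemma pyy_eq' (f : ℝ → ℝ → ℝ → ℝ) : pyy f = py (py f) := rfl

variable {L : ℝ}

lemma PeriodicX.px (h : PeriodicX L f) : PeriodicX L (_root_.px f) := by
  intro x y t
  show deriv (fun x' => f x' y t) (x + L) = deriv (fun x' => f x' y t) x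
  have h2 : (fun x' => f (x' + L) y t) = fun x' => f x' y t := funext fun x' => h x' y t
  calc deriv (fun x' => f x' y t) (x + L)
      = deriv (fun x' => f (x' + L) y t) x := (deriv_comp_add_const _ _ _).symm
    _ = deriv (fun x' => f x' y t) x := by rw [h2]

lemma PeriodicX.py (h : PeriodicX L f) : PeriodicX L (_root_.py f) := by
  intro x y t
  show deriv (fun y' => f (x + L) y' t) y = deriv (fun y' => f x y' t) y
  congr 1
  exact funext fun y' => h x y' t

lemma PeriodicX.pt (h : PeriodicX L f) : PeriodicX L (_root_.pt f) := by
  intro x y t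
  show deriv (fun t' => f (x + L) y t') t = deriv (fun t' => f x y t') t
  congr 1
  exact funext fun t' => h x y t'

/-- The reduced potential vorticity `q = ∇²u − r u + βy`. -/
noncomputable def qZ (r β : ℝ) (u : ℝ → ℝ → ℝ → ℝ) : ℝ → ℝ → ℝ → ℝ :=
  fun x y t => px (px u) x y t + py (py u) x y t - r * u x y t + β * y

/-- Zonal flux component of the divergence form. -/
noncomputable def FZ (r β : ℝ) (u : ℝ → ℝ → ℝ → ℝ) : ℝ → ℝ → ℝ → ℝ :=
  fun x y t => y * u x y t * py (qZ r β u) x y t + u x y t * px (px u) x y t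
    - px u x y t * px u x y t / 2 - r * (u x y t * u x y t) / 2
    - py u x y t * py u x y t / 2

/-- Meridional flux component of the divergence form. -/
noncomputable def GZ (r β : ℝ) (u : ℝ → ℝ → ℝ → ℝ) : ℝ → ℝ → ℝ → ℝ :=
  fun x y t => -(y * u x y t * px (qZ r β u) x y t) + u x y t * px (py u) x y t

variable {u : ℝ → ℝ → ℝ → ℝ} {r β : ℝ}

lemma smooth3_y : Smooth3 (fun _ y _ : ℝ => y) := contDiff_snd.fst

lemma smooth_qZ (hu : Smooth3 u) : Smooth3 (qZ r β u) := by
  exact ((hu.px.px.add hu.py.py).sub (contDiff_const.mul hu)).add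
    (contDiff_const.mul smooth3_y)

lemma smooth_FZ (hu : Smooth3 u) : Smooth3 (FZ r β u) := by
  have hq : Smooth3 (qZ r β u) := smooth_qZ hu
  exact (((((smooth3_y.mul hu).mul hq.py).add (hu.mul hu.px.px)).sub
      ((hu.px.mul hu.px).div_const 2)).sub
      ((contDiff_const.mul (hu.mul hu)).div_const 2)).sub
      ((hu.py.mul hu.py).div_const 2)

lemma smooth_GZ (hu : Smooth3 u) : Smooth3 (GZ r β u) := by
  have hq : Smooth3 (qZ r β u) := smooth_qZ hu
  exact (((smooth3_y.mul hu).mul hq.px).neg).add (hu.mul hu.py.px)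

lemma per_qZ (hu : PeriodicX L u) : PeriodicX L (qZ r β u) := by
  intro x y t
  simp only [qZ]
  rw [hu.px.px, hu.py.py, hu]

lemma per_FZ (hup : PeriodicX L u) : PeriodicX L (FZ r β u) := by
  intro x y t
  have hq : PeriodicX L (qZ r β u) := per_qZ hup
  simp only [FZ]
  rw [hup, hq.py, hup.px.px, hup.px, hup.py]

lemma per_GZ (hup : PeriodicX L u) : PeriodicX L (GZ r β u) := by
  intro x y t
  have hq : PeriodicX L (qZ r β u) := per_qZ hup
  simp only [GZ]
  rw [hup, hq.px, hup.py.px]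


lemma px_qZ (hu : Smooth3 u) :
    px (qZ r β u) x y t
      = px (px (px u)) x y t + px (py (py u)) x y t - r * px u x y t := by
  have h : HasDerivAt (fun x' => qZ r β u x' y t)
      (px (px (px u)) x y t + px (py (py u)) x y t - r * px u x y t) x := by
    have h1 : HasDerivAt (fun x' => px (px u) x' y t + py (py u) x' y t - r * u x' y t + β * y)
        (px (px (px u)) x y t + px (py (py u)) x y t - r * px u x y t) x :=
      ((hu.px.px.hdx.add hu.py.py.hdx).sub (hu.hdx.const_mul r)).add_const (β * y)
    exact h1
  exact h.deriv

lemma div_identity (hu : Smooth3 u) (r β x y t : ℝ) :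
    px (FZ r β u) x y t + py (GZ r β u) x y t = y * jac u (qZ r β u) x y t := by
  have hq : Smooth3 (qZ r β u) := smooth_qZ hu
  have eF : px (FZ r β u) x y t
      = (y * px u x y t * py (qZ r β u) x y t + y * u x y t * px (py (qZ r β u)) x y t)
        + (px u x y t * px (px u) x y t + u x y t * px (px (px u)) x y t)
        - (px (px u) x y t * px u x y t + px u x y t * px (px u) x y t) / 2
        - r * (px u x y t * u x y t + u x y t * px u x y t) / 2
        - (px (py u) x y t * py u x y t + py u x y t * px (py u) x y t) / 2 := by
    have h : HasDerivAt (fun x' => FZ r β u x' y t)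
        ((y * px u x y t * py (qZ r β u) x y t + y * u x y t * px (py (qZ r β u)) x y t)
          + (px u x y t * px (px u) x y t + u x y t * px (px (px u)) x y t)
          - (px (px u) x y t * px u x y t + px u x y t * px (px u) x y t) / 2
          - r * (px u x y t * u x y t + u x y t * px u x y t) / 2
          - (px (py u) x y t * py u x y t + py u x y t * px (py u) x y t) / 2) x := by
      have h1 : HasDerivAt
          (fun x' => y * u x' y t * py (qZ r β u) x' y t + u x' y t * px (px u) x' y t
            - px u x' y t * px u x' y t / 2 - r * (u x' y t * u x' y t) / 2
            - py u x' y t * py u x' y t / 2)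
          ((y * px u x y t * py (qZ r β u) x y t + y * u x y t * px (py (qZ r β u)) x y t)
            + (px u x y t * px (px u) x y t + u x y t * px (px (px u)) x y t)
            - (px (px u) x y t * px u x y t + px u x y t * px (px u) x y t) / 2
            - r * (px u x y t * u x y t + u x y t * px u x y t) / 2
            - (px (py u) x y t * py u x y t + py u x y t * px (py u) x y t) / 2) x :=
        (((((hu.hdx.const_mul y).mul hq.py.hdx).add (hu.hdx.mul hu.px.px.hdx)).sub
            ((hu.px.hdx.mul hu.px.hdx).div_const 2)).sub
            (((hu.hdx.mul hu.hdx).const_mul r).div_const 2)).sub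
            ((hu.py.hdx.mul hu.py.hdx).div_const 2)
      exact h1
    exact h.deriv
  have eG : py (GZ r β u) x y t
      = -((1 * u x y t + y * py u x y t) * px (qZ r β u) x y t
            + y * u x y t * py (px (qZ r β u)) x y t)
        + (py u x y t * px (py u) x y t + u x y t * py (px (py u)) x y t) := by
    have h : HasDerivAt (fun y' => GZ r β u x y' t)
        (-((1 * u x y t + y * py u x y t) * px (qZ r β u) x y t
            + y * u x y t * py (px (qZ r β u)) x y t)
          + (py u x y t * px (py u) x y t + u x y t * py (px (py u)) x y t)) y := by
      have h1 : HasDerivAt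
          (fun y' => -(y' * u x y' t * px (qZ r β u) x y' t) + u x y' t * px (py u) x y' t)
          (-((1 * u x y t + y * py u x y t) * px (qZ r β u) x y t
              + y * u x y t * py (px (qZ r β u)) x y t)
            + (py u x y t * px (py u) x y t + u x y t * py (px (py u)) x y t)) y :=
        ((((hasDerivAt_id y).mul hu.hdy).mul hq.px.hdy).neg).add (hu.hdy.mul hu.py.px.hdy)
      exact h1
    exact h.deriv
  rw [eF, eG, jac]
  rw [pxy_comm hq, ← pxy_comm hu.py, px_qZ hu]
  ring

open MeasureTheory in
/-- Differentiation under the interval integral sign, for globally continuous data. -/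
lemma hasDerivAt_param (F F' : ℝ → ℝ → ℝ) (a b s₀ : ℝ)
    (hF : Continuous fun p : ℝ × ℝ => F p.1 p.2)
    (hF' : Continuous fun p : ℝ × ℝ => F' p.1 p.2)
    (hd : ∀ s x, HasDerivAt (fun s' => F s' x) (F' s x) s) :
    HasDerivAt (fun s => ∫ x in a..b, F s x) (∫ x in a..b, F' s₀ x) s₀ := by
  obtain ⟨C, hC⟩ :=
    ((isCompact_closedBall s₀ 1).prod isCompact_uIcc).exists_bound_of_continuousOn
      (hF'.continuousOn (s := Metric.closedBall s₀ 1 ×ˢ Set.uIcc a b))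
  refine (intervalIntegral.hasDerivAt_integral_of_dominated_loc_of_deriv_le
      (F := F) (F' := F') (bound := fun _ => C) (s := Metric.ball s₀ 1) (Metric.ball_mem_nhds s₀ one_pos) ?_ ?_ ?_ ?_ ?_ ?_).2
  · exact Filter.Eventually.of_forall fun s =>
      ((hF.comp (continuous_const.prodMk continuous_id)).aestronglyMeasurable)
  · exact (hF.comp (continuous_const.prodMk continuous_id)).intervalIntegrable a b
  · exact (hF'.comp (continuous_const.prodMk continuous_id)).aestronglyMeasurable
  · refine Filter.Eventually.of_forall fun x hx s hs => ?_
    exact hC (s, x) ⟨Metric.ball_subset_closedBall hs, Set.uIoc_subset_uIcc hx⟩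
  · exact intervalIntegrable_const
  · exact Filter.Eventually.of_forall fun x _ s _ => hd s x

lemma integral_px (hf : Smooth3 f) (a b y t : ℝ) :
    ∫ x in a..b, px f x y t = f b y t - f a y t := by
  apply intervalIntegral.integral_eq_sub_of_hasDerivAt
  · exact fun x _ => hf.hdx
  · exact (hf.px.contx).intervalIntegrable a b

lemma integral_px_periodic (hf : Smooth3 f) (hper : PeriodicX L f) (y t : ℝ) :
    ∫ x in (0:ℝ)..L, px f x y t = 0 := by
  rw [integral_px hf]
  have := hper 0 y t
  rw [zero_add] at this
  rw [this, sub_self]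

/-- The boundary integrand `-(c₁ ∂ₓ q) + c₂ ∂ₓ∂_y u` integrates to zero over a period. -/
lemma boundary_integral_zero (hu : Smooth3 u) (hup : PeriodicX L u) (c₁ c₂ w s : ℝ) :
    ∫ x in (0:ℝ)..L, (-(c₁ * px (qZ r β u) x w s) + c₂ * px (py u) x w s) = 0 := by
  have hq : Smooth3 (qZ r β u) := smooth_qZ hu
  have hK : Smooth3 (fun x y t => -(c₁ * qZ r β u x y t) + c₂ * py u x y t) :=
    ((contDiff_const.mul hq).neg).add (contDiff_const.mul hu.py)
  have hKper : PeriodicX L (fun x y t => -(c₁ * qZ r β u x y t) + c₂ * py u x y t) := by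
    intro x y t
    have h1 := per_qZ (r := r) (β := β) hup x y t
    have h2 := hup.py x y t
    simp only [h1, h2]
  have key : ∀ x : ℝ,
      px (fun x y t => -(c₁ * qZ r β u x y t) + c₂ * py u x y t) x w s
        = -(c₁ * px (qZ r β u) x w s) + c₂ * px (py u) x w s := by
    intro x
    have h : HasDerivAt (fun x' => -(c₁ * qZ r β u x' w s) + c₂ * py u x' w s)
        (-(c₁ * px (qZ r β u) x w s) + c₂ * px (py u) x w s) x :=
      ((hq.hdx.const_mul c₁).neg).add (hu.py.hdx.const_mul c₂)
    exact h.deriv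
  calc ∫ x in (0:ℝ)..L, (-(c₁ * px (qZ r β u) x w s) + c₂ * px (py u) x w s)
      = ∫ x in (0:ℝ)..L, px (fun x y t => -(c₁ * qZ r β u x y t) + c₂ * py u x y t) x w s := by
        refine intervalIntegral.integral_congr fun x _ => ?_
        exact (key x).symm
    _ = 0 := integral_px_periodic hK hKper w s

end ZonalMomentumAux

/-- Conservation of the zonal momentum `M = ∫∫ y ξ̄` along smooth `x`-periodic
solutions of the IL⁽⁰'¹⁾QG equations with the no-normal-flow boundary condition. -/
theorem zonal_momentum_conserved
    (L W β RS : ℝ) (hL : 0 < L) (hW : 0 < W) (hRS : 0 < RS)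
    (ψb ψσ ψσ2 : ℝ → ℝ → ℝ → ℝ)
    (hψb : Smooth3 ψb) (hψσ : Smooth3 ψσ) (hψσ2 : Smooth3 ψσ2)
    (hperb : PeriodicX L ψb) (hperσ : PeriodicX L ψσ) (hperσ2 : PeriodicX L ψσ2)
    (heqs : IL01QG RS β W ψb ψσ ψσ2)
    (hbc : NoNormalFlow W ψb) :
    ∀ t₁ t₂ : ℝ,
      (∫ y in (0:ℝ)..W, ∫ x in (0:ℝ)..L, y * xibar RS β ψb ψσ ψσ2 x y t₁)
        = ∫ y in (0:ℝ)..W, ∫ x in (0:ℝ)..L, y * xibar RS β ψb ψσ ψσ2 x y t₂ := by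
  intro t₁ t₂
  have hq : Smooth3 (qZ ((RS:ℝ)^2)⁻¹ β ψb) := smooth_qZ hψb
  have hΞ : Smooth3 (xibar RS β ψb ψσ ψσ2) := by
    have h : Smooth3 (fun x y t => px (px ψb) x y t + py (py ψb) x y t
        - (RS ^ 2)⁻¹ * (ψb x y t - ψσ x y t + 2 / 3 * ψσ2 x y t) + β * y) :=
      ((hψb.px.px.add hψb.py.py).sub
        (contDiff_const.mul ((hψb.sub hψσ).add (contDiff_const.mul hψσ2)))).add
        (contDiff_const.mul smooth3_y)
    exact h
  have hF : Smooth3 (FZ ((RS:ℝ)^2)⁻¹ β ψb) := smooth_FZ hψb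
  have hG : Smooth3 (GZ ((RS:ℝ)^2)⁻¹ β ψb) := smooth_GZ hψb
  have hFper : PeriodicX L (FZ ((RS:ℝ)^2)⁻¹ β ψb) := per_FZ hperb
  have hq'Z : (fun x' y' t' => xibar RS β ψb ψσ ψσ2 x' y' t'
      - (RS ^ 2)⁻¹ * (ψσ x' y' t' - 2 / 3 * ψσ2 x' y' t')) = qZ ((RS:ℝ)^2)⁻¹ β ψb := by
    funext x y t
    simp only [xibar, qZ, pxx_eq', pyy_eq']
    ring
  have hpt : ∀ x t : ℝ, ∀ y ∈ Set.Icc (0:ℝ) W,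
      pt (xibar RS β ψb ψσ ψσ2) x y t = -(jac ψb (qZ ((RS:ℝ)^2)⁻¹ β ψb) x y t) := by
    intro x t y hy
    have h := (heqs x t y hy).1
    rw [hq'Z] at h
    linarith
  have hinner : ∀ y t : ℝ,
      HasDerivAt (fun t' => ∫ x in (0:ℝ)..L, y * xibar RS β ψb ψσ ψσ2 x y t')
        (∫ x in (0:ℝ)..L, y * pt (xibar RS β ψb ψσ ψσ2) x y t) t := by
    intro y t
    exact hasDerivAt_param (fun t x => y * xibar RS β ψb ψσ ψσ2 x y t)
      (fun t x => y * pt (xibar RS β ψb ψσ ψσ2) x y t) 0 L t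
      (continuous_const.mul (hΞ.cont.comp
        (continuous_snd.prodMk (continuous_const.prodMk continuous_fst))))
      (continuous_const.mul (hΞ.pt.cont.comp
        (continuous_snd.prodMk (continuous_const.prodMk continuous_fst))))
      (fun s x => (hΞ.hdt).const_mul y)
  have houter : ∀ t : ℝ,
      HasDerivAt (fun t' => ∫ y in (0:ℝ)..W, ∫ x in (0:ℝ)..L, y * xibar RS β ψb ψσ ψσ2 x y t')
        (∫ y in (0:ℝ)..W, ∫ x in (0:ℝ)..L, y * pt (xibar RS β ψb ψσ ψσ2) x y t) t := by
    intro t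
    refine hasDerivAt_param (fun t y => ∫ x in (0:ℝ)..L, y * xibar RS β ψb ψσ ψσ2 x y t)
      (fun t y => ∫ x in (0:ℝ)..L, y * pt (xibar RS β ψb ψσ ψσ2) x y t) 0 W t ?_ ?_
      (fun s y => hinner y s)
    · exact intervalIntegral.continuous_parametric_intervalIntegral_of_continuous'
        (f := fun (p : ℝ × ℝ) (x : ℝ) => p.2 * xibar RS β ψb ψσ ψσ2 x p.2 p.1)
        ((continuous_fst.snd).mul (hΞ.cont.comp
          (continuous_snd.prodMk ((continuous_fst.snd).prodMk continuous_fst.fst)))) 0 L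
    · exact intervalIntegral.continuous_parametric_intervalIntegral_of_continuous'
        (f := fun (p : ℝ × ℝ) (x : ℝ) => p.2 * pt (xibar RS β ψb ψσ ψσ2) x p.2 p.1)
        ((continuous_fst.snd).mul (hΞ.pt.cont.comp
          (continuous_snd.prodMk ((continuous_fst.snd).prodMk continuous_fst.fst)))) 0 L
  have hzero : ∀ t : ℝ,
      (∫ y in (0:ℝ)..W, ∫ x in (0:ℝ)..L, y * pt (xibar RS β ψb ψσ ψσ2) x y t) = 0 := by
    intro t
    have hyeq : ∀ y ∈ Set.uIcc (0:ℝ) W,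
        (∫ x in (0:ℝ)..L, y * pt (xibar RS β ψb ψσ ψσ2) x y t)
          = -∫ x in (0:ℝ)..L, py (GZ ((RS:ℝ)^2)⁻¹ β ψb) x y t := by
      intro y hy
      have hy' : y ∈ Set.Icc (0:ℝ) W := by rwa [Set.uIcc_of_le hW.le] at hy
      have e1 : ∀ x : ℝ, y * pt (xibar RS β ψb ψσ ψσ2) x y t
          = -px (FZ ((RS:ℝ)^2)⁻¹ β ψb) x y t + -py (GZ ((RS:ℝ)^2)⁻¹ β ψb) x y t := by
        intro x
        have h1 := hpt x t y hy'
        have h2 := div_identity hψb ((RS:ℝ)^2)⁻¹ β x y t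
        rw [h1, mul_neg]
        linarith
      have e2 : (∫ x in (0:ℝ)..L, y * pt (xibar RS β ψb ψσ ψσ2) x y t)
          = ∫ x in (0:ℝ)..L, (-px (FZ ((RS:ℝ)^2)⁻¹ β ψb) x y t
              + -py (GZ ((RS:ℝ)^2)⁻¹ β ψb) x y t) :=
        intervalIntegral.integral_congr fun x _ => e1 x
      rw [e2, intervalIntegral.integral_add (f := fun x => -px (FZ ((RS:ℝ)^2)⁻¹ β ψb) x y t)
          (g := fun x => -py (GZ ((RS:ℝ)^2)⁻¹ β ψb) x y t)
          ((hF.px.contx.neg).intervalIntegrable 0 L)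
          ((hG.py.contx.neg).intervalIntegrable 0 L),
        intervalIntegral.integral_neg, intervalIntegral.integral_neg,
        integral_px_periodic hF hFper]
      ring
    have e3 : (∫ y in (0:ℝ)..W, ∫ x in (0:ℝ)..L, y * pt (xibar RS β ψb ψσ ψσ2) x y t)
        = ∫ y in (0:ℝ)..W, -∫ x in (0:ℝ)..L, py (GZ ((RS:ℝ)^2)⁻¹ β ψb) x y t :=
      intervalIntegral.integral_congr hyeq
    rw [e3, intervalIntegral.integral_neg]
    have hsub : (∫ y in (0:ℝ)..W, ∫ x in (0:ℝ)..L, py (GZ ((RS:ℝ)^2)⁻¹ β ψb) x y t)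
        = (∫ x in (0:ℝ)..L, GZ ((RS:ℝ)^2)⁻¹ β ψb x W t)
          - ∫ x in (0:ℝ)..L, GZ ((RS:ℝ)^2)⁻¹ β ψb x 0 t := by
      apply intervalIntegral.integral_eq_sub_of_hasDerivAt
      · intro y hy
        exact hasDerivAt_param (fun y x => GZ ((RS:ℝ)^2)⁻¹ β ψb x y t)
          (fun y x => py (GZ ((RS:ℝ)^2)⁻¹ β ψb) x y t) 0 L y
          (hG.cont.comp (continuous_snd.prodMk (continuous_fst.prodMk continuous_const)))
          (hG.py.cont.comp (continuous_snd.prodMk (continuous_fst.prodMk continuous_const)))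
          (fun s x => hG.hdy)
      · apply Continuous.intervalIntegrable
        exact intervalIntegral.continuous_parametric_intervalIntegral_of_continuous'
          (f := fun (y : ℝ) (x : ℝ) => py (GZ ((RS:ℝ)^2)⁻¹ β ψb) x y t)
          (hG.py.cont.comp (continuous_snd.prodMk (continuous_fst.prodMk continuous_const))) 0 L
    rw [hsub]
    have hcW : ∀ x : ℝ, ψb x W t = ψb 0 W t := by
      intro x
      exact is_const_of_deriv_eq_zero (fun x' => (hψb.hdx).differentiableAt)
        (fun x' => ((hψb.hdx).deriv).trans ((hbc x' t).2)) x 0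
    have hc0 : ∀ x : ℝ, ψb x 0 t = ψb 0 0 t := by
      intro x
      exact is_const_of_deriv_eq_zero (fun x' => (hψb.hdx).differentiableAt)
        (fun x' => ((hψb.hdx).deriv).trans ((hbc x' t).1)) x 0
    have hW0 : (∫ x in (0:ℝ)..L, GZ ((RS:ℝ)^2)⁻¹ β ψb x W t) = 0 := by
      have e4 : ∀ x ∈ Set.uIcc (0:ℝ) L, GZ ((RS:ℝ)^2)⁻¹ β ψb x W t
          = -(W * ψb 0 W t * px (qZ ((RS:ℝ)^2)⁻¹ β ψb) x W t)
            + ψb 0 W t * px (py ψb) x W t := by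
        intro x _
        simp only [GZ]
        rw [hcW x]
      rw [intervalIntegral.integral_congr e4]
      exact boundary_integral_zero hψb hperb (W * ψb 0 W t) (ψb 0 W t) W t
    have h00 : (∫ x in (0:ℝ)..L, GZ ((RS:ℝ)^2)⁻¹ β ψb x 0 t) = 0 := by
      have e5 : ∀ x ∈ Set.uIcc (0:ℝ) L, GZ ((RS:ℝ)^2)⁻¹ β ψb x 0 t
          = -(0 * ψb 0 0 t * px (qZ ((RS:ℝ)^2)⁻¹ β ψb) x 0 t)
            + ψb 0 0 t * px (py ψb) x 0 t := by
        intro x _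
        simp only [GZ]
        rw [hc0 x]
      rw [intervalIntegral.integral_congr e5]
      exact boundary_integral_zero hψb hperb (0 * ψb 0 0 t) (ψb 0 0 t) 0 t
    rw [hW0, h00]
    ring
  have hM : ∀ t : ℝ, HasDerivAt
      (fun t' => ∫ y in (0:ℝ)..W, ∫ x in (0:ℝ)..L, y * xibar RS β ψb ψσ ψσ2 x y t') 0 t := by
    intro t
    have h := houter t
    rwa [hzero t] at h
  exact is_const_of_deriv_eq_zero (fun t => (hM t).differentiableAt)
    (fun t => (hM t).deriv) t₁ t₂
end

section
/- Suppose (ψ̄, ψσ, ψσ²) is a smooth solution of the IL^(0,1)QG equations on ℝ × [0,W] × ℝ, with all three fields L-periodic in x, with ∂ₓψ̄ = ∂ₓψσ = ∂ₓψσ² = 0 on both channel walls y = 0 and y = W, and with constant wall circulations, i.e. t ↦ ∫₀ᴸ ∂_yψ̄(x,0,t) dx and t ↦ ∫₀ᴸ ∂_yψ̄(x,W,t) dx are constant. Then the energy E(t) := (1/2) ∫₀ᵂ ∫₀ᴸ [ |∇ψ̄(x,y,t)|² + R_S⁻² ψ̄(x,y,t)² ] dx dy is constant in time. -/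
namespace Tool
noncomputable def U (f : ℝ → ℝ → ℝ → ℝ) : ℝ × ℝ × ℝ → ℝ := fun z => f z.1 z.2.1 z.2.2

lemma lineX (y t : ℝ) : ∀ x : ℝ, HasDerivAt (fun x' : ℝ => ((x', y, t) : ℝ × ℝ × ℝ)) (1,0,0) x :=
  fun x => (hasDerivAt_id x).prodMk (hasDerivAt_const x (y,t))
lemma lineY (x t : ℝ) : ∀ y : ℝ, HasDerivAt (fun y' : ℝ => ((x, y', t) : ℝ × ℝ × ℝ)) (0,1,0) y :=
  fun y => (hasDerivAt_const y x).prodMk ((hasDerivAt_id y).prodMk (hasDerivAt_const y t))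
lemma lineT (x y : ℝ) : ∀ t : ℝ, HasDerivAt (fun t' : ℝ => ((x, y, t') : ℝ × ℝ × ℝ)) (0,0,1) t :=
  fun t => (hasDerivAt_const t x).prodMk ((hasDerivAt_const t y).prodMk (hasDerivAt_id t))

variable {f : ℝ → ℝ → ℝ → ℝ}

lemma diffU (hf : Smooth3 f) : Differentiable ℝ (U f) :=
  hf.differentiable (by simp)

lemma hasDerivAt_x (hf : Smooth3 f) (x y t : ℝ) :
    HasDerivAt (fun x' => f x' y t) (fderiv ℝ (U f) (x,y,t) (1,0,0)) x :=
  by have h := ((diffU hf) (x,y,t)).hasFDerivAt.comp_hasDerivAt x (lineX y t x); exact h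
lemma hasDerivAt_y (hf : Smooth3 f) (x y t : ℝ) :
    HasDerivAt (fun y' => f x y' t) (fderiv ℝ (U f) (x,y,t) (0,1,0)) y :=
  by have h := ((diffU hf) (x,y,t)).hasFDerivAt.comp_hasDerivAt y (lineY x t y); exact h
lemma hasDerivAt_t (hf : Smooth3 f) (x y t : ℝ) :
    HasDerivAt (fun t' => f x y t') (fderiv ℝ (U f) (x,y,t) (0,0,1)) t :=
  by have h := ((diffU hf) (x,y,t)).hasFDerivAt.comp_hasDerivAt t (lineT x y t); exact h

lemma px_eq (hf : Smooth3 f) (x y t : ℝ) :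
    px f x y t = fderiv ℝ (U f) (x,y,t) (1,0,0) := (hasDerivAt_x hf x y t).deriv
lemma py_eq (hf : Smooth3 f) (x y t : ℝ) :
    py f x y t = fderiv ℝ (U f) (x,y,t) (0,1,0) := (hasDerivAt_y hf x y t).deriv
lemma pt_eq (hf : Smooth3 f) (x y t : ℝ) :
    pt f x y t = fderiv ℝ (U f) (x,y,t) (0,0,1) := (hasDerivAt_t hf x y t).deriv

lemma hasDerivAt_px (hf : Smooth3 f) (x y t : ℝ) :
    HasDerivAt (fun x' => f x' y t) (px f x y t) x := by
  rw [px_eq hf]; exact hasDerivAt_x hf x y t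
lemma hasDerivAt_py (hf : Smooth3 f) (x y t : ℝ) :
    HasDerivAt (fun y' => f x y' t) (py f x y t) y := by
  rw [py_eq hf]; exact hasDerivAt_y hf x y t
lemma hasDerivAt_pt (hf : Smooth3 f) (x y t : ℝ) :
    HasDerivAt (fun t' => f x y t') (pt f x y t) t := by
  rw [pt_eq hf]; exact hasDerivAt_t hf x y t

/-- directional derivative field -/
lemma contDiff_pd {F : ℝ × ℝ × ℝ → ℝ} (hF : ContDiff ℝ (⊤:ℕ∞) F) (v : ℝ × ℝ × ℝ) :
    ContDiff ℝ (⊤:ℕ∞) (fun p => fderiv ℝ F p v) := by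
  have h1 : ContDiff ℝ (⊤:ℕ∞) (fderiv ℝ F) := hF.fderiv_right (mod_cast le_top)
  exact (ContinuousLinearMap.apply ℝ ℝ v).contDiff.comp h1

lemma smooth3_px (hf : Smooth3 f) : Smooth3 (px f) := by
  have : (fun z : ℝ × ℝ × ℝ => px f z.1 z.2.1 z.2.2)
      = fun p => fderiv ℝ (U f) p (1,0,0) := by
    funext z; exact px_eq hf z.1 z.2.1 z.2.2
  rw [Smooth3, this]; exact contDiff_pd hf (1,0,0)
lemma smooth3_py (hf : Smooth3 f) : Smooth3 (py f) := by
  have : (fun z : ℝ × ℝ × ℝ => py f z.1 z.2.1 z.2.2)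
      = fun p => fderiv ℝ (U f) p (0,1,0) := by
    funext z; exact py_eq hf z.1 z.2.1 z.2.2
  rw [Smooth3, this]; exact contDiff_pd hf (0,1,0)
lemma smooth3_pt (hf : Smooth3 f) : Smooth3 (pt f) := by
  have : (fun z : ℝ × ℝ × ℝ => pt f z.1 z.2.1 z.2.2)
      = fun p => fderiv ℝ (U f) p (0,0,1) := by
    funext z; exact pt_eq hf z.1 z.2.1 z.2.2
  rw [Smooth3, this]; exact contDiff_pd hf (0,0,1)

/-- symmetry of mixed directional derivatives -/
lemma pd_comm {F : ℝ × ℝ × ℝ → ℝ} (hF : ContDiff ℝ (⊤:ℕ∞) F) (v w : ℝ × ℝ × ℝ) (p : ℝ × ℝ × ℝ) :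
    fderiv ℝ (fun q => fderiv ℝ F q w) p v = fderiv ℝ (fun q => fderiv ℝ F q v) p w := by
  have h1 : ContDiff ℝ (⊤:ℕ∞) (fderiv ℝ F) := hF.fderiv_right (mod_cast le_top)
  have hd : ∀ q, HasFDerivAt F (fderiv ℝ F q) q :=
    fun q => ((hF.differentiable (by simp)) q).hasFDerivAt
  have hd2 : HasFDerivAt (fderiv ℝ F) (fderiv ℝ (fderiv ℝ F) p) p :=
    ((h1.differentiable (by simp)) p).hasFDerivAt
  have hsymm := second_derivative_symmetric hd hd2 v w
  have key : ∀ u : ℝ × ℝ × ℝ,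
      fderiv ℝ (fun q => fderiv ℝ F q u) p = (fderiv ℝ (fderiv ℝ F) p).flip u := by
    intro u
    have : (fun q => fderiv ℝ F q u) = fun q => (ContinuousLinearMap.apply ℝ ℝ u) (fderiv ℝ F q) := rfl
    rw [this, fderiv_comp' p ((ContinuousLinearMap.apply ℝ ℝ u).hasFDerivAt.differentiableAt)
      ((h1.differentiable (by simp)) p)]
    rw [ContinuousLinearMap.fderiv]
    refine ContinuousLinearMap.ext fun z => ?_
    simp
  rw [key w, key v]
  simpa using hsymm
end Tool

namespace Tool
variable {f g : ℝ → ℝ → ℝ → ℝ} {L : ℝ}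

lemma U_px (hf : Smooth3 f) : U (px f) = fun p => fderiv ℝ (U f) p (1,0,0) :=
  funext fun p => px_eq hf p.1 p.2.1 p.2.2
lemma U_py (hf : Smooth3 f) : U (py f) = fun p => fderiv ℝ (U f) p (0,1,0) :=
  funext fun p => py_eq hf p.1 p.2.1 p.2.2
lemma U_pt (hf : Smooth3 f) : U (pt f) = fun p => fderiv ℝ (U f) p (0,0,1) :=
  funext fun p => pt_eq hf p.1 p.2.1 p.2.2

lemma px_py_comm (hf : Smooth3 f) (x y t : ℝ) : px (py f) x y t = py (px f) x y t := by
  rw [px_eq (smooth3_py hf), py_eq (smooth3_px hf), U_py hf, U_px hf]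
  exact pd_comm hf _ _ _
lemma px_pt_comm (hf : Smooth3 f) (x y t : ℝ) : px (pt f) x y t = pt (px f) x y t := by
  rw [px_eq (smooth3_pt hf), pt_eq (smooth3_px hf), U_pt hf, U_px hf]
  exact pd_comm hf _ _ _
lemma py_pt_comm (hf : Smooth3 f) (x y t : ℝ) : py (pt f) x y t = pt (py f) x y t := by
  rw [py_eq (smooth3_pt hf), pt_eq (smooth3_py hf), U_pt hf, U_py hf]
  exact pd_comm hf _ _ _

lemma Smooth3.add (hf : Smooth3 f) (hg : Smooth3 g) :
    Smooth3 (fun x y t => f x y t + g x y t) := ContDiff.add hf hg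
lemma Smooth3.sub (hf : Smooth3 f) (hg : Smooth3 g) :
    Smooth3 (fun x y t => f x y t - g x y t) := ContDiff.sub hf hg
lemma Smooth3.mul (hf : Smooth3 f) (hg : Smooth3 g) :
    Smooth3 (fun x y t => f x y t * g x y t) := ContDiff.mul hf hg
lemma Smooth3.constmul (c : ℝ) (hf : Smooth3 f) :
    Smooth3 (fun x y t => c * f x y t) := ContDiff.mul contDiff_const hf
lemma smooth3_const (c : ℝ) : Smooth3 (fun _ _ _ => c) := contDiff_const
lemma smooth3_coordy (c : ℝ) : Smooth3 (fun _ y _ => c * y) := by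
  have : ContDiff ℝ (⊤:ℕ∞) (fun z : ℝ × ℝ × ℝ => c * z.2.1) :=
    contDiff_const.mul (contDiff_fst.comp contDiff_snd)
  exact this

lemma contU (hf : Smooth3 f) : Continuous (U f) := hf.continuous
lemma cont_slice_x (hf : Smooth3 f) (y t : ℝ) : Continuous (fun x => f x y t) :=
  (contU hf).comp (Continuous.prodMk continuous_id (continuous_const : Continuous fun _ : ℝ => (y,t)))
lemma cont_slice_y (hf : Smooth3 f) (x t : ℝ) : Continuous (fun y => f x y t) := by
  have : Continuous (fun y : ℝ => ((x, y, t) : ℝ×ℝ×ℝ)) := by fun_prop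
  exact (contU hf).comp this
lemma cont_slice_t (hf : Smooth3 f) (x y : ℝ) : Continuous (fun t => f x y t) := by
  have : Continuous (fun t : ℝ => ((x, y, t) : ℝ×ℝ×ℝ)) := by fun_prop
  exact (contU hf).comp this

lemma PeriodicX.px (hf : PeriodicX L f) : PeriodicX L (px f) := by
  intro x y t
  show deriv (fun x' => f x' y t) (x + L) = deriv (fun x' => f x' y t) x
  rw [← deriv_comp_add_const (fun x' => f x' y t) L]
  congr 1; funext x'; exact hf x' y t
lemma PeriodicX.py (hf : PeriodicX L f) : PeriodicX L (py f) := by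
  intro x y t
  show deriv (fun y' => f (x+L) y' t) y = deriv (fun y' => f x y' t) y
  congr 1; funext y'; exact hf x y' t
lemma PeriodicX.pt (hf : PeriodicX L f) : PeriodicX L (pt f) := by
  intro x y t
  show deriv (fun t' => f (x+L) y t') t = deriv (fun t' => f x y t') t
  congr 1; funext t'; exact hf x y t'
end Tool

namespace Tool
variable {f u σ τ : ℝ → ℝ → ℝ → ℝ} {RS β : ℝ}

lemma pxx_eq : pxx f = px (px f) := rfl
lemma pyy_eq : pyy f = py (py f) := rfl

lemma smooth3_pxx (hf : Smooth3 f) : Smooth3 (pxx f) := smooth3_px (smooth3_px hf)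
lemma smooth3_pyy (hf : Smooth3 f) : Smooth3 (pyy f) := smooth3_py (smooth3_py hf)

lemma cd3 (hf : Smooth3 f) :
    ContDiff ℝ (⊤:ℕ∞) (fun z : ℝ×ℝ×ℝ => f z.1 z.2.1 z.2.2) := hf

lemma smooth3_xibar (hu : Smooth3 u) (hσ : Smooth3 σ) (hτ : Smooth3 τ) :
    Smooth3 (xibar RS β u σ τ) := by
  have h1 := cd3 (smooth3_pxx hu)
  have h2 := cd3 (smooth3_pyy hu)
  have h3 := cd3 hu; have h4 := cd3 hσ; have h5 := cd3 hτ
  unfold Smooth3 xibar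
  fun_prop

lemma px_xibar (hu : Smooth3 u) (hσ : Smooth3 σ) (hτ : Smooth3 τ) (x y t : ℝ) :
    px (xibar RS β u σ τ) x y t
      = px (pxx u) x y t + px (pyy u) x y t
        - (RS ^ 2)⁻¹ * (px u x y t - px σ x y t + 2 / 3 * px τ x y t) := by
  have h : HasDerivAt (fun x' => xibar RS β u σ τ x' y t)
      (px (pxx u) x y t + px (pyy u) x y t
        - (RS ^ 2)⁻¹ * (px u x y t - px σ x y t + 2 / 3 * px τ x y t) + 0) x := by
    exact (((hasDerivAt_px (smooth3_pxx hu) x y t).add (hasDerivAt_px (smooth3_pyy hu) x y t)).sub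
      ((((hasDerivAt_px hu x y t).sub (hasDerivAt_px hσ x y t)).add
        ((hasDerivAt_px hτ x y t).const_mul (2/3))).const_mul ((RS ^ 2)⁻¹))).add
      (hasDerivAt_const x (β * y))
  have h' := h.deriv; rw [add_zero] at h'; exact h'

lemma py_xibar (hu : Smooth3 u) (hσ : Smooth3 σ) (hτ : Smooth3 τ) (x y t : ℝ) :
    py (xibar RS β u σ τ) x y t
      = py (pxx u) x y t + py (pyy u) x y t
        - (RS ^ 2)⁻¹ * (py u x y t - py σ x y t + 2 / 3 * py τ x y t) + β := by
  have h : HasDerivAt (fun y' => xibar RS β u σ τ x y' t)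
      (py (pxx u) x y t + py (pyy u) x y t
        - (RS ^ 2)⁻¹ * (py u x y t - py σ x y t + 2 / 3 * py τ x y t) + β) y := by
    have hlin : HasDerivAt (fun y' : ℝ => β * y') β y := by
      simpa using (hasDerivAt_id y).const_mul β
    exact (((hasDerivAt_py (smooth3_pxx hu) x y t).add (hasDerivAt_py (smooth3_pyy hu) x y t)).sub
      ((((hasDerivAt_py hu x y t).sub (hasDerivAt_py hσ x y t)).add
        ((hasDerivAt_py hτ x y t).const_mul (2/3))).const_mul ((RS ^ 2)⁻¹))).add hlin
  exact h.deriv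

lemma pt_xibar (hu : Smooth3 u) (hσ : Smooth3 σ) (hτ : Smooth3 τ) (x y t : ℝ) :
    pt (xibar RS β u σ τ) x y t
      = pt (pxx u) x y t + pt (pyy u) x y t
        - (RS ^ 2)⁻¹ * (pt u x y t - pt σ x y t + 2 / 3 * pt τ x y t) := by
  have h : HasDerivAt (fun t' => xibar RS β u σ τ x y t')
      (pt (pxx u) x y t + pt (pyy u) x y t
        - (RS ^ 2)⁻¹ * (pt u x y t - pt σ x y t + 2 / 3 * pt τ x y t) + 0) t := by
    exact (((hasDerivAt_pt (smooth3_pxx hu) x y t).add (hasDerivAt_pt (smooth3_pyy hu) x y t)).sub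
      ((((hasDerivAt_pt hu x y t).sub (hasDerivAt_pt hσ x y t)).add
        ((hasDerivAt_pt hτ x y t).const_mul (2/3))).const_mul ((RS ^ 2)⁻¹))).add
      (hasDerivAt_const t (β * y))
  have h' := h.deriv; rw [add_zero] at h'; exact h'

lemma px_G (hu : Smooth3 u) (hσ : Smooth3 σ) (hτ : Smooth3 τ) (x y t : ℝ) :
    px (fun x' y' t' => xibar RS β u σ τ x' y' t'
        - (RS ^ 2)⁻¹ * (σ x' y' t' - 2 / 3 * τ x' y' t')) x y t
      = px (xibar RS β u σ τ) x y t
        - (RS ^ 2)⁻¹ * (px σ x y t - 2 / 3 * px τ x y t) := by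
  have h := (hasDerivAt_px (smooth3_xibar (RS:=RS) (β:=β) hu hσ hτ) x y t).sub
    (((hasDerivAt_px hσ x y t).sub ((hasDerivAt_px hτ x y t).const_mul (2/3))).const_mul
      ((RS ^ 2)⁻¹))
  exact h.deriv

lemma py_G (hu : Smooth3 u) (hσ : Smooth3 σ) (hτ : Smooth3 τ) (x y t : ℝ) :
    py (fun x' y' t' => xibar RS β u σ τ x' y' t'
        - (RS ^ 2)⁻¹ * (σ x' y' t' - 2 / 3 * τ x' y' t')) x y t
      = py (xibar RS β u σ τ) x y t
        - (RS ^ 2)⁻¹ * (py σ x y t - 2 / 3 * py τ x y t) := by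
  have h := (hasDerivAt_py (smooth3_xibar (RS:=RS) (β:=β) hu hσ hτ) x y t).sub
    (((hasDerivAt_py hσ x y t).sub ((hasDerivAt_py hτ x y t).const_mul (2/3))).const_mul
      ((RS ^ 2)⁻¹))
  exact h.deriv
end Tool

namespace Tool
/-- energy density -/
noncomputable def Jf (RS : ℝ) (u : ℝ → ℝ → ℝ → ℝ) : ℝ → ℝ → ℝ → ℝ :=
  fun x y t => (px u x y t) ^ 2 + (py u x y t) ^ 2 + (RS ^ 2)⁻¹ * (u x y t) ^ 2

noncomputable def Af (RS β : ℝ) (u σ τ : ℝ → ℝ → ℝ → ℝ) : ℝ → ℝ → ℝ → ℝ := fun x y t =>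
  2 * (u x y t * pt (px u) x y t)
  - 2 * (xibar RS β u σ τ x y t * (u x y t * py u x y t))
  + 4 * (RS ^ 2)⁻¹ * ((σ x y t - 2/3 * τ x y t) * (u x y t * py u x y t))

noncomputable def Bf (RS β : ℝ) (u σ τ : ℝ → ℝ → ℝ → ℝ) : ℝ → ℝ → ℝ → ℝ := fun x y t =>
  2 * (u x y t * pt (py u) x y t)
  + 2 * (xibar RS β u σ τ x y t * (u x y t * px u x y t))
  - 4 * (RS ^ 2)⁻¹ * ((σ x y t - 2/3 * τ x y t) * (u x y t * px u x y t))

noncomputable def DAf (RS β : ℝ) (u σ τ : ℝ → ℝ → ℝ → ℝ) : ℝ → ℝ → ℝ → ℝ := fun x y t =>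
  2 * (px u x y t * pt (px u) x y t + u x y t * pt (pxx u) x y t)
  - 2 * (px (xibar RS β u σ τ) x y t * (u x y t * py u x y t)
      + xibar RS β u σ τ x y t * (px u x y t * py u x y t + u x y t * px (py u) x y t))
  + 4 * (RS ^ 2)⁻¹ * ((px σ x y t - 2/3 * px τ x y t) * (u x y t * py u x y t)
      + (σ x y t - 2/3 * τ x y t) * (px u x y t * py u x y t + u x y t * px (py u) x y t))

noncomputable def DBf (RS β : ℝ) (u σ τ : ℝ → ℝ → ℝ → ℝ) : ℝ → ℝ → ℝ → ℝ := fun x y t =>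
  2 * (py u x y t * pt (py u) x y t + u x y t * pt (pyy u) x y t)
  + 2 * (py (xibar RS β u σ τ) x y t * (u x y t * px u x y t)
      + xibar RS β u σ τ x y t * (py u x y t * px u x y t + u x y t * px (py u) x y t))
  - 4 * (RS ^ 2)⁻¹ * ((py σ x y t - 2/3 * py τ x y t) * (u x y t * px u x y t)
      + (σ x y t - 2/3 * τ x y t) * (py u x y t * px u x y t + u x y t * px (py u) x y t))

variable {u σ τ : ℝ → ℝ → ℝ → ℝ} {RS β : ℝ}

lemma smooth3_Jf (hu : Smooth3 u) : Smooth3 (Jf RS u) := by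
  have h1 := cd3 (smooth3_px hu); have h2 := cd3 (smooth3_py hu); have h3 := cd3 hu
  unfold Smooth3 Jf; fun_prop

lemma smooth3_ptJf (hu : Smooth3 u) : Smooth3 (pt (Jf RS u)) := smooth3_pt (smooth3_Jf hu)

lemma smooth3_DAf (hu : Smooth3 u) (hσ : Smooth3 σ) (hτ : Smooth3 τ) :
    Smooth3 (DAf RS β u σ τ) := by
  have l1 := cd3 hu; have l2 := cd3 (smooth3_px hu); have l3 := cd3 (smooth3_py hu)
  have l4 := cd3 (smooth3_pt (smooth3_px hu)); have l5 := cd3 (smooth3_pt (smooth3_pxx hu))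
  have l6 := cd3 (smooth3_px (smooth3_xibar (RS:=RS) (β:=β) hu hσ hτ))
  have l7 := cd3 (smooth3_xibar (RS:=RS) (β:=β) hu hσ hτ)
  have l8 := cd3 (smooth3_px (smooth3_py hu))
  have l9 := cd3 (smooth3_px hσ); have l10 := cd3 (smooth3_px hτ)
  have l11 := cd3 hσ; have l12 := cd3 hτ
  unfold Smooth3 DAf; fun_prop

lemma smooth3_DBf (hu : Smooth3 u) (hσ : Smooth3 σ) (hτ : Smooth3 τ) :
    Smooth3 (DBf RS β u σ τ) := by
  have l1 := cd3 hu; have l2 := cd3 (smooth3_px hu); have l3 := cd3 (smooth3_py hu)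
  have l4 := cd3 (smooth3_pt (smooth3_py hu)); have l5 := cd3 (smooth3_pt (smooth3_pyy hu))
  have l6 := cd3 (smooth3_py (smooth3_xibar (RS:=RS) (β:=β) hu hσ hτ))
  have l7 := cd3 (smooth3_xibar (RS:=RS) (β:=β) hu hσ hτ)
  have l8 := cd3 (smooth3_px (smooth3_py hu))
  have l9 := cd3 (smooth3_py hσ); have l10 := cd3 (smooth3_py hτ)
  have l11 := cd3 hσ; have l12 := cd3 hτ
  unfold Smooth3 DBf; fun_prop

lemma smooth3_Bf (hu : Smooth3 u) (hσ : Smooth3 σ) (hτ : Smooth3 τ) :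
    Smooth3 (Bf RS β u σ τ) := by
  have l1 := cd3 hu; have l2 := cd3 (smooth3_px hu); have l3 := cd3 (smooth3_py hu)
  have l4 := cd3 (smooth3_pt (smooth3_py hu))
  have l7 := cd3 (smooth3_xibar (RS:=RS) (β:=β) hu hσ hτ)
  have l11 := cd3 hσ; have l12 := cd3 hτ
  unfold Smooth3 Bf; fun_prop

lemma hasDerivAt_Af_x (hu : Smooth3 u) (hσ : Smooth3 σ) (hτ : Smooth3 τ) (x y t : ℝ) :
    HasDerivAt (fun x' => Af RS β u σ τ x' y t) (DAf RS β u σ τ x y t) x := by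
  have hξ := smooth3_xibar (RS:=RS) (β:=β) hu hσ hτ
  have h1 := ((hasDerivAt_px hu x y t).mul
    (hasDerivAt_px (smooth3_pt (smooth3_px hu)) x y t)).const_mul (2:ℝ)
  have h2 := ((hasDerivAt_px hξ x y t).mul
    ((hasDerivAt_px hu x y t).mul (hasDerivAt_px (smooth3_py hu) x y t))).const_mul (2:ℝ)
  have h3 := (((hasDerivAt_px hσ x y t).sub ((hasDerivAt_px hτ x y t).const_mul (2/3))).mul
    ((hasDerivAt_px hu x y t).mul (hasDerivAt_px (smooth3_py hu) x y t))).const_mul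
    (4 * (RS ^ 2)⁻¹)
  have h := (h1.sub h2).add h3
  refine HasDerivAt.congr_deriv h ?_
  unfold DAf
  rw [pxx_eq, px_pt_comm (smooth3_px hu) x y t]; rfl

lemma hasDerivAt_Bf_y (hu : Smooth3 u) (hσ : Smooth3 σ) (hτ : Smooth3 τ) (x y t : ℝ) :
    HasDerivAt (fun y' => Bf RS β u σ τ x y' t) (DBf RS β u σ τ x y t) y := by
  have hξ := smooth3_xibar (RS:=RS) (β:=β) hu hσ hτ
  have h1 := ((hasDerivAt_py hu x y t).mul
    (hasDerivAt_py (smooth3_pt (smooth3_py hu)) x y t)).const_mul (2:ℝ)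
  have h2 := ((hasDerivAt_py hξ x y t).mul
    ((hasDerivAt_py hu x y t).mul (hasDerivAt_py (smooth3_px hu) x y t))).const_mul (2:ℝ)
  have h3 := (((hasDerivAt_py hσ x y t).sub ((hasDerivAt_py hτ x y t).const_mul (2/3))).mul
    ((hasDerivAt_py hu x y t).mul (hasDerivAt_py (smooth3_px hu) x y t))).const_mul
    (4 * (RS ^ 2)⁻¹)
  have h := (h1.add h2).sub h3
  refine HasDerivAt.congr_deriv h ?_
  unfold DBf
  rw [pyy_eq, py_pt_comm (smooth3_py hu) x y t, px_py_comm hu x y t]; rfl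

lemma pt_Jf_eq (hu : Smooth3 u) (x y t : ℝ) :
    pt (Jf RS u) x y t
      = 2 * px u x y t * pt (px u) x y t + 2 * py u x y t * pt (py u) x y t
        + (RS ^ 2)⁻¹ * (2 * u x y t * pt u x y t) := by
  have h := (((hasDerivAt_pt (smooth3_px hu) x y t).pow 2).add
    ((hasDerivAt_pt (smooth3_py hu) x y t).pow 2)).add
    (((hasDerivAt_pt hu x y t).pow 2).const_mul ((RS ^ 2)⁻¹))
  have h2 := h.deriv
  show deriv (fun t' => Jf RS u x y t') t = _
  unfold Jf
  rw [show deriv (fun t' => px u x y t' ^ 2 + py u x y t' ^ 2 + (RS ^ 2)⁻¹ * u x y t' ^ 2) t = _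
    from h2]; norm_num
end Tool

namespace Tool
variable {u σ τ : ℝ → ℝ → ℝ → ℝ} {RS β : ℝ}

lemma key_identity (hu : Smooth3 u) (hσ : Smooth3 σ) (hτ : Smooth3 τ) (x y t : ℝ)
    (h1 : pt (xibar RS β u σ τ) x y t
      + jac u (fun x' y' t' => xibar RS β u σ τ x' y' t'
          - (RS ^ 2)⁻¹ * (σ x' y' t' - 2 / 3 * τ x' y' t')) x y t = 0)
    (h2 : pt σ x y t + jac u σ x y t = 0)
    (h3 : pt τ x y t + jac u τ x y t = 0) :
    pt (Jf RS u) x y t = DAf RS β u σ τ x y t + DBf RS β u σ τ x y t := by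
  unfold jac at h1 h2 h3
  rw [px_G hu hσ hτ, py_G hu hσ hτ, pt_xibar hu hσ hτ] at h1
  rw [pt_Jf_eq hu]
  unfold DAf DBf
  linear_combination (-2 * u x y t) * h1 + (2 * (RS ^ 2)⁻¹ * u x y t) * h2
    + (-(4:ℝ)/3 * (RS ^ 2)⁻¹ * u x y t) * h3
end Tool

namespace Tool
open MeasureTheory intervalIntegral Metric
variable {f : ℝ → ℝ → ℝ → ℝ}

lemma bound_on_compact (hf : Smooth3 f) (K : Set (ℝ×ℝ×ℝ)) (hK : IsCompact K) :
    ∃ C : ℝ, ∀ p ∈ K, |f p.1 p.2.1 p.2.2| ≤ C := by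
  obtain ⟨C, hC⟩ := hK.exists_bound_of_continuousOn (contU hf).continuousOn
  exact ⟨C, fun p hp => by simpa [U] using hC p hp⟩

lemma ball_subset_Icc (t₀ : ℝ) : Metric.ball t₀ 1 ⊆ Set.Icc (t₀ - 1) (t₀ + 1) := by
  rw [Real.ball_eq_Ioo]; exact Set.Ioo_subset_Icc_self

/-- differentiation under a single interval integral -/
lemma hasDerivAt_intx (hf : Smooth3 f) (y a b t₀ : ℝ) :
    HasDerivAt (fun t => ∫ x in a..b, f x y t) (∫ x in a..b, pt f x y t₀) t₀ := by
  obtain ⟨C, hC⟩ := bound_on_compact (smooth3_pt hf)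
    ((Set.uIcc a b) ×ˢ (({y} : Set ℝ) ×ˢ Set.Icc (t₀-1) (t₀+1)))
    (isCompact_uIcc.prod (isCompact_singleton.prod isCompact_Icc))
  refine (intervalIntegral.hasDerivAt_integral_of_dominated_loc_of_deriv_le
    (μ := volume) (F := fun t x => f x y t) (F' := fun t x => pt f x y t)
    (bound := fun _ => C) (a := a) (b := b) (x₀ := t₀)
    (s := Metric.ball t₀ 1) (Metric.ball_mem_nhds t₀ one_pos) ?_ ?_ ?_ ?_ ?_ ?_).2
  · exact Filter.Eventually.of_forall fun t => (cont_slice_x hf y t).aestronglyMeasurable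
  · exact (cont_slice_x hf y t₀).intervalIntegrable a b
  · exact (cont_slice_x (smooth3_pt hf) y t₀).aestronglyMeasurable
  · refine Filter.Eventually.of_forall fun x hx => fun s hs => ?_
    exact hC (x, y, s) ⟨Set.uIoc_subset_uIcc hx, rfl, ball_subset_Icc t₀ hs⟩
  · exact intervalIntegrable_const
  · exact Filter.Eventually.of_forall fun x _ => fun s _ => hasDerivAt_pt hf x y s

lemma cont_param_int (hf : Smooth3 f) (a b t : ℝ) :
    Continuous (fun y => ∫ x in a..b, f x y t) := by
  have hmap : Continuous (fun p : ℝ × ℝ => ((p.2, p.1, t) : ℝ×ℝ×ℝ)) := by fun_prop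
  have hcont : Continuous (Function.uncurry fun (y x : ℝ) => f x y t) := (contU hf).comp hmap
  exact continuous_parametric_intervalIntegral_of_continuous' hcont a b

/-- differentiation under a double interval integral -/
lemma hasDerivAt_intxy (hf : Smooth3 f) (a b c d t₀ : ℝ) :
    HasDerivAt (fun t => ∫ y in c..d, ∫ x in a..b, f x y t)
      (∫ y in c..d, ∫ x in a..b, pt f x y t₀) t₀ := by
  obtain ⟨C, hC⟩ := bound_on_compact (smooth3_pt hf)
    ((Set.uIcc a b) ×ˢ ((Set.uIcc c d) ×ˢ Set.Icc (t₀-1) (t₀+1)))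
    (isCompact_uIcc.prod (isCompact_uIcc.prod isCompact_Icc))
  refine (intervalIntegral.hasDerivAt_integral_of_dominated_loc_of_deriv_le
    (μ := volume) (F := fun t y => ∫ x in a..b, f x y t)
    (F' := fun s y => ∫ x in a..b, pt f x y s)
    (bound := fun _ => C * |b - a|) (a := c) (b := d) (x₀ := t₀)
    (s := Metric.ball t₀ 1) (Metric.ball_mem_nhds t₀ one_pos) ?_ ?_ ?_ ?_ ?_ ?_).2
  · exact Filter.Eventually.of_forall fun t => (cont_param_int hf a b t).aestronglyMeasurable
  · exact (cont_param_int hf a b t₀).intervalIntegrable c d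
  · exact (cont_param_int (smooth3_pt hf) a b t₀).aestronglyMeasurable
  · refine Filter.Eventually.of_forall fun y hy => fun s hs => ?_
    refine intervalIntegral.norm_integral_le_of_norm_le_const fun x hx => ?_
    exact hC (x, y, s) ⟨Set.uIoc_subset_uIcc hx, Set.uIoc_subset_uIcc hy, ball_subset_Icc t₀ hs⟩
  · exact intervalIntegrable_const
  · exact Filter.Eventually.of_forall fun y _ => fun s _ => hasDerivAt_intx hf y a b s

/-- Fubini for continuous fields on a rectangle -/
lemma integral_swap_cont {g : ℝ → ℝ → ℝ → ℝ} (hg : Smooth3 g) (t W L : ℝ)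
    (hW : 0 ≤ W) (hL : 0 ≤ L) :
    ∫ y in (0:ℝ)..W, ∫ x in (0:ℝ)..L, g x y t = ∫ x in (0:ℝ)..L, ∫ y in (0:ℝ)..W, g x y t := by
  rw [intervalIntegral.integral_of_le hW, intervalIntegral.integral_of_le hL]
  simp_rw [intervalIntegral.integral_of_le hL, intervalIntegral.integral_of_le hW]
  refine MeasureTheory.integral_integral_swap ?_
  rw [Measure.prod_restrict]
  have hmap : Continuous (fun p : ℝ × ℝ => ((p.2, p.1, t) : ℝ×ℝ×ℝ)) := by fun_prop
  have hcont : Continuous (fun p : ℝ × ℝ => g p.2 p.1 t) := (contU hg).comp hmap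
  have : IntegrableOn (fun p : ℝ × ℝ => g p.2 p.1 t)
      ((Set.Icc (0:ℝ) W) ×ˢ (Set.Icc (0:ℝ) L)) (volume.prod volume) :=
    hcont.continuousOn.integrableOn_compact (isCompact_Icc.prod isCompact_Icc)
  exact this.mono_set (Set.prod_mono Set.Ioc_subset_Icc_self Set.Ioc_subset_Icc_self)
end Tool

open Tool

/-- Conservation of the energy `E = (1/2)∫∫ (|∇ψ̄|² + R_S⁻² ψ̄²)` along smooth
`x`-periodic solutions of the IL⁽⁰'¹⁾QG equations with `∂ₓψ̄ = ∂ₓψσ = ∂ₓψσ² = 0`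
on both channel walls and constant wall circulations. -/
theorem energy_conserved
    (L W β RS : ℝ) (hL : 0 < L) (hW : 0 < W) (hRS : 0 < RS)
    (ψb ψσ ψσ2 : ℝ → ℝ → ℝ → ℝ)
    (hψb : Smooth3 ψb) (hψσ : Smooth3 ψσ) (hψσ2 : Smooth3 ψσ2)
    (hperb : PeriodicX L ψb) (hperσ : PeriodicX L ψσ) (hperσ2 : PeriodicX L ψσ2)
    (heqs : IL01QG RS β W ψb ψσ ψσ2)
    (hwalls : ∀ x t : ℝ, ∀ yw ∈ ({0, W} : Set ℝ),
      px ψb x yw t = 0 ∧ px ψσ x yw t = 0 ∧ px ψσ2 x yw t = 0)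
    (hcirc0 : ∀ t₁ t₂ : ℝ,
      (∫ x in (0:ℝ)..L, py ψb x 0 t₁) = ∫ x in (0:ℝ)..L, py ψb x 0 t₂)
    (hcircW : ∀ t₁ t₂ : ℝ,
      (∫ x in (0:ℝ)..L, py ψb x W t₁) = ∫ x in (0:ℝ)..L, py ψb x W t₂) :
    ∀ t₁ t₂ : ℝ,
      (1 / 2 * ∫ y in (0:ℝ)..W, ∫ x in (0:ℝ)..L,
        ((px ψb x y t₁) ^ 2 + (py ψb x y t₁) ^ 2 + (RS ^ 2)⁻¹ * (ψb x y t₁) ^ 2))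
      = 1 / 2 * ∫ y in (0:ℝ)..W, ∫ x in (0:ℝ)..L,
        ((px ψb x y t₂) ^ 2 + (py ψb x y t₂) ^ 2 + (RS ^ 2)⁻¹ * (ψb x y t₂) ^ 2) := by
  intro t₁ t₂
  have h0mem : (0:ℝ) ∈ ({0, W} : Set ℝ) := by simp
  have hWmem : (W:ℝ) ∈ ({0, W} : Set ℝ) := by simp
  -- periodicity of xibar and Af
  have hperξ : PeriodicX L (xibar RS β ψb ψσ ψσ2) := by
    intro a b c
    unfold xibar
    rw [pxx_eq, pyy_eq, PeriodicX.px (PeriodicX.px hperb) a b c,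
      PeriodicX.py (PeriodicX.py hperb) a b c, hperb a b c, hperσ a b c, hperσ2 a b c]
  have hperA : PeriodicX L (Af RS β ψb ψσ ψσ2) := by
    intro a b c
    unfold Af
    rw [hperb a b c, PeriodicX.pt (PeriodicX.px hperb) a b c, hperξ a b c,
      PeriodicX.py hperb a b c, hperσ a b c, hperσ2 a b c]
  -- x-constancy of ψb on the walls
  have hconstw : ∀ yw ∈ ({0, W} : Set ℝ), ∀ t x : ℝ, ψb x yw t = ψb 0 yw t := by
    intro yw hyw t x
    have hd : ∀ z : ℝ, HasDerivAt (fun x' => ψb x' yw t) 0 z := by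
      intro z
      have h := hasDerivAt_px hψb z yw t
      rwa [(hwalls z t yw hyw).1] at h
    exact is_const_of_deriv_eq_zero (fun z => (hd z).differentiableAt)
      (fun z => (hd z).deriv) x 0
  -- vanishing of circulation time-derivatives
  have hcW : ∀ t : ℝ, (∫ x in (0:ℝ)..L, pt (py ψb) x W t) = 0 := by
    intro t
    have hd := hasDerivAt_intx (smooth3_py hψb) W 0 L t
    have hconst : (fun s => ∫ x in (0:ℝ)..L, py ψb x W s)
        = fun _ => ∫ x in (0:ℝ)..L, py ψb x W t := funext fun s => hcircW s t
    rw [hconst] at hd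
    exact ((hasDerivAt_const t _).unique hd).symm
  have hc0 : ∀ t : ℝ, (∫ x in (0:ℝ)..L, pt (py ψb) x 0 t) = 0 := by
    intro t
    have hd := hasDerivAt_intx (smooth3_py hψb) 0 0 L t
    have hconst : (fun s => ∫ x in (0:ℝ)..L, py ψb x 0 s)
        = fun _ => ∫ x in (0:ℝ)..L, py ψb x 0 t := funext fun s => hcirc0 s t
    rw [hconst] at hd
    exact ((hasDerivAt_const t _).unique hd).symm
  -- the double integral of pt J vanishes
  have hz : ∀ t : ℝ,
      (∫ y in (0:ℝ)..W, ∫ x in (0:ℝ)..L, pt (Jf RS ψb) x y t) = 0 := by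
    intro t
    -- inner integral reduces to the DB part
    have hinner : ∀ y ∈ Set.uIcc (0:ℝ) W,
        (fun y => ∫ x in (0:ℝ)..L, pt (Jf RS ψb) x y t) y
          = (fun y => ∫ x in (0:ℝ)..L, DBf RS β ψb ψσ ψσ2 x y t) y := by
      intro y hy
      rw [Set.uIcc_of_le hW.le] at hy
      have hDA : IntervalIntegrable (fun x => DAf RS β ψb ψσ ψσ2 x y t) MeasureTheory.volume 0 L :=
        (cont_slice_x (smooth3_DAf hψb hψσ hψσ2) y t).intervalIntegrable 0 L
      have hDB : IntervalIntegrable (fun x => DBf RS β ψb ψσ ψσ2 x y t) MeasureTheory.volume 0 L :=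
        (cont_slice_x (smooth3_DBf hψb hψσ hψσ2) y t).intervalIntegrable 0 L
      have hcongr : (∫ x in (0:ℝ)..L, pt (Jf RS ψb) x y t)
          = ∫ x in (0:ℝ)..L, (DAf RS β ψb ψσ ψσ2 x y t + DBf RS β ψb ψσ ψσ2 x y t) := by
        refine intervalIntegral.integral_congr fun x _ => ?_
        exact key_identity hψb hψσ hψσ2 x y t (heqs x t y hy).1 (heqs x t y hy).2.1
          (heqs x t y hy).2.2
      have hDAzero : (∫ x in (0:ℝ)..L, DAf RS β ψb ψσ ψσ2 x y t) = 0 := by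
        rw [intervalIntegral.integral_eq_sub_of_hasDerivAt
          (fun x _ => hasDerivAt_Af_x hψb hψσ hψσ2 x y t) hDA]
        have := hperA 0 y t
        rw [zero_add] at this
        rw [this, sub_self]
      simp only []
      rw [hcongr, intervalIntegral.integral_add hDA hDB, hDAzero, zero_add]
    have swap := integral_swap_cont (smooth3_DBf hψb hψσ hψσ2 (RS := RS) (β := β)) t W L
      hW.le hL.le
    have hBint : ∀ x : ℝ, (∫ y in (0:ℝ)..W, DBf RS β ψb ψσ ψσ2 x y t)
        = Bf RS β ψb ψσ ψσ2 x W t - Bf RS β ψb ψσ ψσ2 x 0 t := fun x =>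
      intervalIntegral.integral_eq_sub_of_hasDerivAt
        (fun y _ => hasDerivAt_Bf_y hψb hψσ hψσ2 x y t)
        ((cont_slice_y (smooth3_DBf hψb hψσ hψσ2) x t).intervalIntegrable 0 W)
    -- wall values of Bf
    have hBW : ∀ x : ℝ, Bf RS β ψb ψσ ψσ2 x W t = 2 * ψb 0 W t * pt (py ψb) x W t := by
      intro x
      have hpx := (hwalls x t W hWmem).1
      have hcx := hconstw W hWmem t x
      unfold Bf
      rw [hpx, hcx]; ring
    have hB0 : ∀ x : ℝ, Bf RS β ψb ψσ ψσ2 x 0 t = 2 * ψb 0 0 t * pt (py ψb) x 0 t := by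
      intro x
      have hpx := (hwalls x t 0 h0mem).1
      have hcx := hconstw 0 h0mem t x
      unfold Bf
      rw [hpx, hcx]; ring
    calc (∫ y in (0:ℝ)..W, ∫ x in (0:ℝ)..L, pt (Jf RS ψb) x y t)
        = ∫ y in (0:ℝ)..W, ∫ x in (0:ℝ)..L, DBf RS β ψb ψσ ψσ2 x y t :=
          intervalIntegral.integral_congr hinner
      _ = ∫ x in (0:ℝ)..L, ∫ y in (0:ℝ)..W, DBf RS β ψb ψσ ψσ2 x y t := swap
      _ = ∫ x in (0:ℝ)..L,
            (Bf RS β ψb ψσ ψσ2 x W t - Bf RS β ψb ψσ ψσ2 x 0 t) := by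
          refine intervalIntegral.integral_congr fun x _ => hBint x
      _ = (∫ x in (0:ℝ)..L, Bf RS β ψb ψσ ψσ2 x W t)
            - ∫ x in (0:ℝ)..L, Bf RS β ψb ψσ ψσ2 x 0 t := by
          refine intervalIntegral.integral_sub ?_ ?_
          · exact (cont_slice_x (smooth3_Bf hψb hψσ hψσ2) W t).intervalIntegrable 0 L
          · exact (cont_slice_x (smooth3_Bf hψb hψσ hψσ2) 0 t).intervalIntegrable 0 L
      _ = (∫ x in (0:ℝ)..L, 2 * ψb 0 W t * pt (py ψb) x W t)
            - ∫ x in (0:ℝ)..L, 2 * ψb 0 0 t * pt (py ψb) x 0 t := by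
          rw [intervalIntegral.integral_congr (fun x _ => hBW x),
            intervalIntegral.integral_congr (fun x _ => hB0 x)]
      _ = 2 * ψb 0 W t * (∫ x in (0:ℝ)..L, pt (py ψb) x W t)
            - 2 * ψb 0 0 t * ∫ x in (0:ℝ)..L, pt (py ψb) x 0 t := by
          rw [intervalIntegral.integral_const_mul, intervalIntegral.integral_const_mul]
      _ = 0 := by rw [hcW t, hc0 t]; ring
  -- the energy is constant
  have hdiff : ∀ t : ℝ,
      HasDerivAt (fun s => ∫ y in (0:ℝ)..W, ∫ x in (0:ℝ)..L, Jf RS ψb x y s) 0 t := by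
    intro t
    have h := hasDerivAt_intxy (smooth3_Jf hψb (RS := RS)) 0 L 0 W t
    rwa [hz t] at h
  have hconst := is_const_of_deriv_eq_zero (𝕜 := ℝ)
    (f := fun s => ∫ y in (0:ℝ)..W, ∫ x in (0:ℝ)..L, Jf RS ψb x y s)
    (fun s => (hdiff s).differentiableAt) (fun s => (hdiff s).deriv) t₁ t₂
  show 1 / 2 * (∫ y in (0:ℝ)..W, ∫ x in (0:ℝ)..L, Jf RS ψb x y t₁)
      = 1 / 2 * ∫ y in (0:ℝ)..W, ∫ x in (0:ℝ)..L, Jf RS ψb x y t₂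
  rw [hconst]
end
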